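/- arXiv:1612.06767 — 5 statements merged into one kernel-verified Lean document; each statement's English description precedes it below -/
import Mathlib

section
/- If S = conv{p^1,…,p^{n+1}} is an n-simplex that is diametrically complete with respect to a convex body C in R^n, then S is equilateral with respect to C, i.e., D([p^i,p^j],C) = D(S,C) for all 1 ≤ i < j ≤ n+1. -/
open Pointwise

/-- A convex body: compact, convex, with nonempty interior. -/
def IsBody {n : ℕ} (K : Set (Fin n → ℝ)) : Prop :=
  Convex ℝ K ∧ IsCompact K ∧ (interior K).Nonempty

/-- Circumradius of `K` w.r.t. `C`: smallest `ρ > 0` with `K` contained in a translate of `ρ • C`. -/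
noncomputable def circR {n : ℕ} (K C : Set (Fin n → ℝ)) : ℝ :=
  sInf {ρ : ℝ | 0 < ρ ∧ ∃ t : Fin n → ℝ, K ⊆ t +ᵥ ρ • C}

/-- Inradius of `K` w.r.t. `C`: largest `ρ ≥ 0` with a translate of `ρ • C` inside `K`. -/
noncomputable def inrad {n : ℕ} (K C : Set (Fin n → ℝ)) : ℝ :=
  sSup {ρ : ℝ | 0 ≤ ρ ∧ ∃ t : Fin n → ℝ, t +ᵥ ρ • C ⊆ K}

/-- Minkowski asymmetry `s(K) = R(-K, K)`. -/
noncomputable def asym {n : ℕ} (K : Set (Fin n → ℝ)) : ℝ := circR (-K) K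

/-- Diameter of `K` w.r.t. `C`: twice the maximal circumradius of a segment with endpoints in `K`. -/
noncomputable def diamC {n : ℕ} (K C : Set (Fin n → ℝ)) : ℝ :=
  sSup {d : ℝ | ∃ x ∈ K, ∃ y ∈ K, d = 2 * circR (segment ℝ x y) C}

/-- `K` is (diametrically) complete w.r.t. `C`. -/
def IsDiamComplete {n : ℕ} (K C : Set (Fin n → ℝ)) : Prop :=
  ∀ K' : Set (Fin n → ℝ), IsBody K' → K ⊂ K' → diamC K C < diamC K' C

/-- `S` is an `n`-simplex: convex hull of `n+1` affinely independent points. -/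
def IsSimplexBody {n : ℕ} (S : Set (Fin n → ℝ)) : Prop :=
  ∃ p : Fin (n + 1) → (Fin n → ℝ), AffineIndependent ℝ p ∧ S = convexHull ℝ (Set.range p)

/-- Support function of `C`. -/
noncomputable def supp {n : ℕ} (C : Set (Fin n → ℝ)) (a : Fin n → ℝ) : ℝ :=
  sSup {r : ℝ | ∃ x ∈ C, r = dotProduct a x}

/-- `A ⊆ₜ B`: `A` is contained in some translate of `B`. -/
def SubsetT {n : ℕ} (A B : Set (Fin n → ℝ)) : Prop := ∃ t : Fin n → ℝ, A ⊆ t +ᵥ B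

lemma seg_cover_iff {n : ℕ} {C : Set (Fin n → ℝ)} (hC : Convex ℝ C) (x y : Fin n → ℝ) (ρ : ℝ) :
    (∃ t : Fin n → ℝ, segment ℝ x y ⊆ t +ᵥ ρ • C) ↔ y - x ∈ ρ • (C - C) := by
  constructor
  · rintro ⟨t, ht⟩
    obtain ⟨cy, hcy, hy⟩ := Set.mem_vadd_set.1 (ht (right_mem_segment ℝ x y))
    obtain ⟨cx, hcx, hx⟩ := Set.mem_vadd_set.1 (ht (left_mem_segment ℝ x y))
    obtain ⟨c1, hc1, rfl⟩ := hcy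
    obtain ⟨c2, hc2, rfl⟩ := hcx
    have h : y - x = ρ • (c1 - c2) := by
      rw [← hy, ← hx]; show t + ρ • c1 - (t + ρ • c2) = _
      rw [smul_sub]; abel
    rw [h]
    exact Set.smul_mem_smul_set (Set.sub_mem_sub hc1 hc2)
  · rintro ⟨z, hz, hzeq⟩
    obtain ⟨c1, hc1, c2, hc2, rfl⟩ := Set.mem_sub.1 hz
    refine ⟨x - ρ • c2, ((hC.smul ρ).vadd _).segment_subset ?_ ?_⟩
    · exact Set.mem_vadd_set.2 ⟨ρ • c2, Set.smul_mem_smul_set hc2, by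
        show x - ρ • c2 + ρ • c2 = x; abel⟩
    · refine Set.mem_vadd_set.2 ⟨ρ • c1, Set.smul_mem_smul_set hc1, ?_⟩
      show x - ρ • c2 + ρ • c1 = y
      have h : ρ • c1 - ρ • c2 = y - x := by rw [← smul_sub]; exact hzeq
      have h2 : x + (ρ • c1 - ρ • c2) = y := by rw [h]; abel
      rw [← h2]; abel

lemma circR_segment {n : ℕ} {C : Set (Fin n → ℝ)} (hC : Convex ℝ C) (x y : Fin n → ℝ) :
    circR (segment ℝ x y) C = gauge (C - C) (y - x) := by
  unfold circR gauge
  congr 1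
  ext ρ
  simp only [Set.mem_setOf_eq]
  exact and_congr_right fun _ => seg_cover_iff hC x y ρ

set_option maxHeartbeats 1600000 in
theorem stmt13 {n : ℕ} (p : Fin (n + 1) → (Fin n → ℝ)) (hind : AffineIndependent ℝ p)
    (S C : Set (Fin n → ℝ)) (hS : S = convexHull ℝ (Set.range p)) (hC : IsBody C)
    (hcomp : IsDiamComplete S C) :
    ∀ i j : Fin (n + 1), i ≠ j → diamC (segment ℝ (p i) (p j)) C = diamC S C := by
  classical
  intro i j hij
  obtain ⟨hCconv, hCcomp, hCint⟩ := hC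
  obtain ⟨x0, hx0⟩ := hCint
  -- `C - C` is a neighborhood of 0
  have hmem : C - C ∈ nhds (0 : Fin n → ℝ) := by
    have hsub : (fun y => y + (-x0)) '' interior C ⊆ C - C := by
      rintro _ ⟨y, hy, rfl⟩
      show y + -x0 ∈ C - C
      have h : y + -x0 = y - x0 := by abel
      rw [h]
      exact Set.sub_mem_sub (interior_subset hy) (interior_subset hx0)
    have hopen : IsOpen ((fun y => y + (-x0)) '' interior C) :=
      (isOpenMap_add_right (-x0)) _ isOpen_interior
    exact Filter.mem_of_superset (hopen.mem_nhds ⟨x0, hx0, by abel⟩) hsub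
  have habs : Absorbent ℝ (C - C) := absorbent_nhds_zero hmem
  have hconvCC : Convex ℝ (C - C) := hCconv.sub hCconv
  have hsymm : ∀ z ∈ C - C, -z ∈ C - C := by
    rintro _ ⟨a, ha, b, hb, rfl⟩
    exact ⟨b, hb, a, ha, by rw [neg_sub]⟩
  have hgneg : ∀ z, gauge (C - C) (-z) = gauge (C - C) z := fun z => gauge_neg hsymm z
  have hgflip : ∀ a b : Fin n → ℝ, gauge (C - C) (a - b) = gauge (C - C) (b - a) := by
    intro a b; rw [← neg_sub b a, hgneg]
  have hgadd : ∀ a b, gauge (C - C) (a + b) ≤ gauge (C - C) a + gauge (C - C) b :=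
    fun a b => gauge_add_le hconvCC habs a b
  have hgsmul : ∀ (r : ℝ), 0 ≤ r → ∀ z, gauge (C - C) (r • z) = r * gauge (C - C) z :=
    fun r hr z => by simpa [smul_eq_mul] using gauge_smul_of_nonneg hr z
  have hgnn : ∀ z, 0 ≤ gauge (C - C) z := fun z => gauge_nonneg z
  have habs_smul : ∀ (c : ℝ) z, gauge (C - C) (c • z) = |c| * gauge (C - C) z := by
    intro c z
    rcases le_or_gt 0 c with h | h
    · rw [hgsmul c h, abs_of_nonneg h]
    · rw [← hgneg, ← neg_smul, hgsmul (-c) (by linarith), abs_of_neg h]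
  have hgsum : ∀ (s : Finset (Fin (n+1))) (f : Fin (n+1) → (Fin n → ℝ)),
      gauge (C - C) (∑ k ∈ s, f k) ≤ ∑ k ∈ s, gauge (C - C) (f k) := by
    intro s f
    induction s using Finset.cons_induction with
    | empty => simp
    | cons a s ha ih =>
      rw [Finset.sum_cons, Finset.sum_cons]
      exact (hgadd _ _).trans (by linarith)
  -- lower bound on the gauge
  obtain ⟨R0, hR0⟩ := hCcomp.isBounded.subset_closedBall 0
  have hR0nn : 0 ≤ R0 := by
    have : ‖x0‖ ≤ R0 := by simpa using hR0 (interior_subset hx0)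
    linarith [norm_nonneg x0]
  have hRpos : (0:ℝ) < 2 * R0 + 1 := by linarith
  have hRsub : C - C ⊆ Metric.ball 0 (2 * R0 + 1) := by
    rintro _ ⟨a, ha, b, hb, rfl⟩
    have h1 : ‖a‖ ≤ R0 := by simpa using hR0 ha
    have h2 : ‖b‖ ≤ R0 := by simpa using hR0 hb
    have h3 : ‖a - b‖ ≤ 2 * R0 := (norm_sub_le a b).trans (by linarith)
    simp only [Metric.mem_ball, dist_zero_right]
    linarith
  have hglb : ∀ z, ‖z‖ / (2 * R0 + 1) ≤ gauge (C - C) z := fun z => by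
    rw [← gauge_ball hRpos.le]
    exact gauge_mono habs hRsub z
  have hgpos : ∀ z : Fin n → ℝ, z ≠ 0 → 0 < gauge (C - C) z := fun z hz =>
    lt_of_lt_of_le (div_pos (norm_pos_iff.2 hz) hRpos) (hglb z)
  -- upper bound on the gauge
  obtain ⟨r, hrpos, hrsub⟩ := Metric.mem_nhds_iff.1 hmem
  have hgub : ∀ z, gauge (C - C) z ≤ ‖z‖ / r := fun z => by
    rw [← gauge_ball hrpos.le]
    exact gauge_mono (absorbent_ball_zero hrpos) hrsub z
  -- rewriting the diameter
  have hdiam : ∀ K : Set (Fin n → ℝ),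
      diamC K C = sSup {d : ℝ | ∃ x ∈ K, ∃ y ∈ K, d = 2 * gauge (C - C) (y - x)} := by
    intro K
    unfold diamC
    congr 1
    ext d
    constructor
    · rintro ⟨x, hx, y, hy, rfl⟩
      exact ⟨x, hx, y, hy, by rw [circR_segment hCconv]⟩
    · rintro ⟨x, hx, y, hy, rfl⟩
      exact ⟨x, hx, y, hy, by rw [circR_segment hCconv]⟩
  -- basic facts about S
  have hSsub : Set.range p ⊆ S := hS ▸ subset_convexHull ℝ _
  have hScomp : IsCompact S := hS ▸ (Set.finite_range p).isCompact_convexHull (𝕜 := ℝ)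
  obtain ⟨M, hM⟩ := hScomp.isBounded.subset_closedBall 0
  have hSbdd : BddAbove {d : ℝ | ∃ x ∈ S, ∃ y ∈ S, d = 2 * gauge (C - C) (y - x)} := by
    refine ⟨2 * ((2 * M) / r), ?_⟩
    rintro d ⟨x, hx, y, hy, rfl⟩
    have hx' : ‖x‖ ≤ M := by simpa using hM hx
    have hy' : ‖y‖ ≤ M := by simpa using hM hy
    have h1 : ‖y - x‖ ≤ 2 * M := (norm_sub_le y x).trans (by linarith)
    have h2 : gauge (C - C) (y - x) ≤ (2 * M) / r := (hgub _).trans (by gcongr)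
    linarith
  set D := diamC S C with hD
  have hDub : ∀ x ∈ S, ∀ y ∈ S, 2 * gauge (C - C) (y - x) ≤ D := fun x hx y hy => by
    rw [hD, hdiam S]
    exact le_csSup hSbdd ⟨x, hx, y, hy, rfl⟩
  have hpij : p i ≠ p j := fun h => hij (hind.injective h)
  have hD0 : 0 < D := by
    have h1 := hgpos (p j - p i) (sub_ne_zero.2 (Ne.symm hpij))
    have h2 := hDub (p i) (hSsub ⟨i, rfl⟩) (p j) (hSsub ⟨j, rfl⟩)
    linarith
  -- convexity of the distance functions
  have hconvOn : ∀ w : Fin n → ℝ, ConvexOn ℝ Set.univ (fun v => gauge (C - C) (v - w)) := by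
    intro w
    refine ⟨convex_univ, fun x _ y _ a b ha hb hab => ?_⟩
    have hxy : a • x + b • y - w = a • (x - w) + b • (y - w) := by
      calc a • x + b • y - w = a • x + b • y - (a • w + b • w) := by
            rw [← add_smul, hab, one_smul]
        _ = a • (x - w) + b • (y - w) := by rw [smul_sub, smul_sub]; abel
    simp only [smul_eq_mul]
    calc gauge (C - C) (a • x + b • y - w) = gauge (C - C) (a • (x - w) + b • (y - w)) := by
          rw [hxy]
      _ ≤ gauge (C - C) (a • (x - w)) + gauge (C - C) (b • (y - w)) := hgadd _ _
      _ = a * gauge (C - C) (x - w) + b * gauge (C - C) (y - w) := by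
          rw [hgsmul a ha, hgsmul b hb]
  have hconvOn' : ∀ w : Fin n → ℝ, ConvexOn ℝ Set.univ (fun v => gauge (C - C) (w - v)) := by
    intro w
    refine ⟨convex_univ, fun x _ y _ a b ha hb hab => ?_⟩
    have hxy : w - (a • x + b • y) = a • (w - x) + b • (w - y) := by
      calc w - (a • x + b • y) = (a • w + b • w) - (a • x + b • y) := by
            rw [← add_smul, hab, one_smul]
        _ = a • (w - x) + b • (w - y) := by rw [smul_sub, smul_sub]; abel
    simp only [smul_eq_mul]
    calc gauge (C - C) (w - (a • x + b • y)) = gauge (C - C) (a • (w - x) + b • (w - y)) := by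
          rw [hxy]
      _ ≤ gauge (C - C) (a • (w - x)) + gauge (C - C) (b • (w - y)) := hgadd _ _
      _ = a * gauge (C - C) (w - x) + b * gauge (C - C) (w - y) := by
          rw [hgsmul a ha, hgsmul b hb]
  have hhull : ∀ (F : Set (Fin n → ℝ)) (B : ℝ), (∀ a ∈ F, ∀ b ∈ F, gauge (C - C) (b - a) ≤ B) →
      ∀ u ∈ convexHull ℝ F, ∀ v ∈ convexHull ℝ F, gauge (C - C) (v - u) ≤ B := by
    intro F B hF u hu v hv
    obtain ⟨b, hbF, hb⟩ := (hconvOn u).exists_ge_of_mem_convexHull (Set.subset_univ F) hv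
    obtain ⟨a, haF, ha⟩ := (hconvOn' b).exists_ge_of_mem_convexHull (Set.subset_univ F) hu
    exact hb.trans (ha.trans (hF a haF b hbF))
  -- affine span is everything
  have htop : affineSpan ℝ (Set.range p) = ⊤ := by
    rw [hind.affineSpan_eq_top_iff_card_eq_finrank_add_one]
    simp [Module.finrank_fin_fun]
  -- key consequence of completeness
  have hkey : ∀ q : Fin n → ℝ, q ∉ S → (∀ k, 2 * gauge (C - C) (q - p k) ≤ D) → False := by
    intro q hqS hq
    set F : Set (Fin n → ℝ) := Set.range p ∪ {q} with hF
    set K' := convexHull ℝ F with hK'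
    have hSK : S ⊆ K' := hS ▸ convexHull_mono Set.subset_union_left
    have hqK : q ∈ K' := subset_convexHull ℝ F (Set.mem_union_right _ rfl)
    have hFbound : ∀ a ∈ F, ∀ b ∈ F, gauge (C - C) (b - a) ≤ D / 2 := by
      rintro a (ha | ha) b (hb | hb)
      · have := hDub a (hSsub ha) b (hSsub hb); linarith
      · rw [Set.mem_singleton_iff] at hb
        obtain ⟨k, rfl⟩ := ha
        rw [hb]
        have := hq k; linarith
      · rw [Set.mem_singleton_iff] at ha
        obtain ⟨k, rfl⟩ := hb
        rw [ha, hgflip (p k) q]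
        have h2 := hq k
        linarith
      · rw [Set.mem_singleton_iff] at ha hb
        rw [ha, hb]
        simp only [sub_self, gauge_zero]
        linarith
    have hbody : IsBody K' := by
      refine ⟨convex_convexHull ℝ F, ?_, ?_⟩
      · exact ((Set.finite_range p).union (Set.finite_singleton q)).isCompact_convexHull (𝕜 := ℝ)
      · have hSint : (interior S).Nonempty := by
          rw [hS, (convex_convexHull ℝ _).interior_nonempty_iff_affineSpan_eq_top,
            affineSpan_convexHull]
          exact htop
        exact hSint.mono (interior_mono hSK)
    have hss : S ⊂ K' := (Set.ssubset_iff_of_subset hSK).2 ⟨q, hqK, hqS⟩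
    have hlt := hcomp K' hbody hss
    rw [← hD] at hlt
    have hle : diamC K' C ≤ D := by
      rw [hdiam K']
      refine csSup_le ⟨0, q, hqK, q, hqK, by simp⟩ ?_
      rintro d ⟨x, hx, y, hy, rfl⟩
      have := hhull F (D / 2) hFbound x hx y hy
      linarith
    linarith
  -- the quantity for the edge
  set E0 := 2 * gauge (C - C) (p j - p i) with hE0
  have hn : 1 ≤ n := by
    rcases Nat.eq_zero_or_pos n with h | h
    · subst h
      have h1 := i.isLt
      have h2 := j.isLt
      exact absurd (Fin.ext (by omega)) hij
    · exact h
  have hnR : (1:ℝ) ≤ (n:ℝ) := by exact_mod_cast hn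
  have hE0D : E0 = D := by
    have hle2 : E0 ≤ D := by
      rw [hE0]
      exact hDub (p i) (hSsub ⟨i, rfl⟩) (p j) (hSsub ⟨j, rfl⟩)
    refine le_antisymm hle2 ?_
    by_contra hcon
    have hlt : E0 < D := not_le.1 hcon
    -- facet opposite j and its centroid
    set Fj : Finset (Fin (n + 1)) := Finset.univ.erase j with hFj
    have hiFj : i ∈ Fj := Finset.mem_erase.2 ⟨hij, Finset.mem_univ i⟩
    have hFjne : Fj.Nonempty := ⟨i, hiFj⟩
    have hcardnat : Fj.card = n := by
      rw [hFj, Finset.card_erase_of_mem (Finset.mem_univ j), Finset.card_univ, Fintype.card_fin]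
      omega
    have hcard : (Fj.card : ℝ) = n := by rw [hcardnat]
    set x := Fj.centroid ℝ p with hx
    have hxS : x ∈ S := by
      rw [hS, hx, Finset.centroid_eq_centerMass _ hFjne]
      refine Finset.centerMass_mem_convexHull _ (fun k _ => ?_) ?_ (fun k _ => ⟨k, rfl⟩)
      · simp [Finset.centroidWeights_apply]
      · rw [Fj.sum_centroidWeights_eq_one_of_nonempty ℝ hFjne]; norm_num
    -- barycentric coordinates
    set bA : AffineBasis (Fin (n + 1)) ℝ (Fin n → ℝ) := ⟨p, hind, htop⟩ with hbA
    have hcoordS : ∀ y ∈ S, 0 ≤ bA.coord j y := by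
      intro y hy
      rw [hS] at hy
      have hconvset : Convex ℝ {z : Fin n → ℝ | 0 ≤ bA.coord j z} :=
        (convex_Ici (0:ℝ)).affine_preimage (bA.coord j)
      refine convexHull_min ?_ hconvset hy
      rintro _ ⟨m, rfl⟩
      show 0 ≤ bA.coord j (p m)
      rw [show p m = bA m from rfl, bA.coord_apply]
      split <;> norm_num
    set b0 := (Finset.univ : Finset (Fin (n + 1))).centroid ℝ p with hb0
    have hcoordb0 : bA.coord j b0 = ((n : ℝ) + 1)⁻¹ := by
      rw [hb0, show p = ⇑bA from rfl, bA.coord_apply_centroid (Finset.mem_univ j)]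
      simp
    have hcoordx : bA.coord j x = 0 := by
      rw [hx, Finset.centroid_def, show p = ⇑bA from rfl]
      exact bA.coord_apply_combination_of_notMem (Finset.notMem_erase j _)
        (Fj.sum_centroidWeights_eq_one_of_nonempty ℝ hFjne)
    -- Step A: some vertex is at distance ≥ D from x
    have hstepA : ∃ k0, D ≤ 2 * gauge (C - C) (p k0 - x) := by
      by_contra hA
      push_neg at hA
      set D' := Finset.univ.sup' Finset.univ_nonempty
        (fun k => 2 * gauge (C - C) (p k - x)) with hD'
      have hD'lt : D' < D := (Finset.sup'_lt_iff _).2 fun k _ => hA k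
      have hD'ge : ∀ k, 2 * gauge (C - C) (p k - x) ≤ D' := fun k =>
        Finset.le_sup' (fun k => 2 * gauge (C - C) (p k - x)) (Finset.mem_univ k)
      set c := 2 * gauge (C - C) (x - b0) with hc
      have hc0 : 0 ≤ c := by
        have := hgnn (x - b0); rw [hc]; linarith
      set t := (D - D') / (c + 1) with ht
      have ht0 : 0 < t := div_pos (by linarith) (by linarith)
      set q := x + t • (x - b0) with hq
      have hqcoord : bA.coord j q = -(t * ((n : ℝ) + 1)⁻¹) := by
        have hline : q = AffineMap.lineMap b0 x (1 + t) := by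
          rw [hq, AffineMap.lineMap_apply_module]
          module
        rw [hline, AffineMap.apply_lineMap, hcoordb0, hcoordx,
          AffineMap.lineMap_apply_module]
        simp only [smul_eq_mul]
        ring
      have hqnS : q ∉ S := fun h => by
        have h0 := hcoordS q h
        rw [hqcoord] at h0
        have h1 : 0 < t * ((n : ℝ) + 1)⁻¹ := by positivity
        linarith
      refine hkey q hqnS fun k => ?_
      have hsplit : gauge (C - C) (q - p k) ≤
          gauge (C - C) (x - p k) + gauge (C - C) (t • (x - b0)) := by
        have h : q - p k = (x - p k) + t • (x - b0) := by rw [hq]; abel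
        rw [h]; exact hgadd _ _
      have h2 : gauge (C - C) (t • (x - b0)) = t * gauge (C - C) (x - b0) := hgsmul t ht0.le _
      have h3 : t * c ≤ D - D' := by
        have h4 : t * (c + 1) = D - D' := by
          rw [ht]
          exact div_mul_cancel₀ _ (by linarith)
        nlinarith [ht0, hc0, h4]
      have h5 := hD'ge k
      rw [hgflip x (p k)] at hsplit
      rw [h2] at hsplit
      have h6 : 2 * (t * gauge (C - C) (x - b0)) = t * c := by rw [hc]; ring
      linarith [hsplit, h5, h3, h6]
    obtain ⟨k0, hk0⟩ := hstepA
    rw [hgflip (p k0) x] at hk0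
    -- representation of x - p k0
    have hx_lin : x = ∑ k ∈ Fj, ((Fj.card : ℝ))⁻¹ • p k := by
      rw [hx, Finset.centroid_def,
        Finset.affineCombination_eq_linear_combination _ _ _
          (Fj.sum_centroidWeights_eq_one_of_nonempty ℝ hFjne)]
      simp [Finset.centroidWeights_apply]
    have hrep : x - p k0 = ((Fj.card : ℝ))⁻¹ • ∑ k ∈ Fj, (p k - p k0) := by
      rw [Finset.smul_sum]
      simp only [smul_sub]
      rw [Finset.sum_sub_distrib, ← hx_lin, Finset.sum_const]
      congr 1
      rw [← Nat.cast_smul_eq_nsmul ℝ, smul_smul, mul_inv_cancel₀ (by rw [hcard]; positivity),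
        one_smul]
    have hmain : 2 * gauge (C - C) (x - p k0) ≤
        ((n : ℝ))⁻¹ * ∑ k ∈ Fj, 2 * gauge (C - C) (p k - p k0) := by
      have hnn : (0:ℝ) ≤ ((n : ℝ))⁻¹ := by positivity
      have h2 : gauge (C - C) (∑ k ∈ Fj, (p k - p k0)) ≤
          ∑ k ∈ Fj, gauge (C - C) (p k - p k0) := hgsum Fj (fun k => p k - p k0)
      have h1 : gauge (C - C) (x - p k0)
          = ((n : ℝ))⁻¹ * gauge (C - C) (∑ k ∈ Fj, (p k - p k0)) := by
        rw [hrep, hcard, hgsmul _ (by positivity)]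
      have h3 : ((n : ℝ))⁻¹ * ∑ k ∈ Fj, 2 * gauge (C - C) (p k - p k0)
          = 2 * (((n : ℝ))⁻¹ * ∑ k ∈ Fj, gauge (C - C) (p k - p k0)) := by
        rw [← Finset.mul_sum]
        ring
      rw [h1, h3]
      have h4 := mul_le_mul_of_nonneg_left h2 hnn
      linarith
    by_cases hk0j : k0 = j
    · -- all edge terms ≤ D, the i-term equals E0 < D
      subst hk0j
      have hterms : ∀ k ∈ Fj.erase i, 2 * gauge (C - C) (p k - p k0) ≤ D := fun k _ =>
        hDub (p k0) (hSsub ⟨k0, rfl⟩) (p k) (hSsub ⟨k, rfl⟩)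
      have hsum_erase : ∑ k ∈ Fj.erase i, 2 * gauge (C - C) (p k - p k0) ≤
          ((Fj.erase i).card : ℝ) * D := by
        have := Finset.sum_le_card_nsmul (Fj.erase i)
          (fun k => 2 * gauge (C - C) (p k - p k0)) D hterms
        rwa [nsmul_eq_mul] at this
      have hcarde : ((Fj.erase i).card : ℝ) = (n : ℝ) - 1 := by
        rw [Finset.card_erase_of_mem hiFj, hcardnat, Nat.cast_sub hn, Nat.cast_one]
      have hiterm : 2 * gauge (C - C) (p i - p k0) = E0 := by
        rw [hE0, hgflip (p i) (p k0)]
      have hsum_all : ∑ k ∈ Fj, 2 * gauge (C - C) (p k - p k0) ≤ E0 + ((n:ℝ) - 1) * D := by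
        rw [← Finset.sum_erase_add Fj _ hiFj, hiterm]
        rw [hcarde] at hsum_erase
        linarith
      have hfin : D ≤ ((n:ℝ))⁻¹ * (E0 + ((n:ℝ) - 1) * D) := by
        refine hk0.trans (hmain.trans ?_)
        have hnn : (0:ℝ) ≤ ((n : ℝ))⁻¹ := by positivity
        nlinarith
      have hnpos : (0:ℝ) < (n:ℝ) := by linarith
      have : (n:ℝ) * D ≤ E0 + ((n:ℝ) - 1) * D := by
        have h7 : (n:ℝ) * (((n:ℝ))⁻¹ * (E0 + ((n:ℝ) - 1) * D)) = E0 + ((n:ℝ) - 1) * D := by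
          field_simp
        nlinarith
      linarith
    · -- k0 ∈ Fj : the k0-term vanishes, so D < D
      have hk0Fj : k0 ∈ Fj := Finset.mem_erase.2 ⟨hk0j, Finset.mem_univ _⟩
      have hterms : ∀ k ∈ Fj.erase k0, 2 * gauge (C - C) (p k - p k0) ≤ D := fun k _ =>
        hDub (p k0) (hSsub ⟨k0, rfl⟩) (p k) (hSsub ⟨k, rfl⟩)
      have hsum_erase : ∑ k ∈ Fj.erase k0, 2 * gauge (C - C) (p k - p k0) ≤
          ((Fj.erase k0).card : ℝ) * D := by
        have := Finset.sum_le_card_nsmul (Fj.erase k0)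
          (fun k => 2 * gauge (C - C) (p k - p k0)) D hterms
        rwa [nsmul_eq_mul] at this
      have hcarde : ((Fj.erase k0).card : ℝ) = (n : ℝ) - 1 := by
        rw [Finset.card_erase_of_mem hk0Fj, hcardnat, Nat.cast_sub hn, Nat.cast_one]
      have hsum_all : ∑ k ∈ Fj, 2 * gauge (C - C) (p k - p k0) ≤ ((n:ℝ) - 1) * D := by
        rw [← Finset.sum_erase_add Fj _ hk0Fj]
        rw [hcarde] at hsum_erase
        simp only [sub_self, gauge_zero]
        linarith
      have hfin : D ≤ ((n:ℝ))⁻¹ * (((n:ℝ) - 1) * D) := by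
        refine hk0.trans (hmain.trans ?_)
        have hnn : (0:ℝ) ≤ ((n : ℝ))⁻¹ := by positivity
        nlinarith
      have hnpos : (0:ℝ) < (n:ℝ) := by linarith
      have h7 : (n:ℝ) * (((n:ℝ))⁻¹ * (((n:ℝ) - 1) * D)) = ((n:ℝ) - 1) * D := by
        field_simp
      nlinarith
  -- the diameter of the edge equals E0
  have hubseg : ∀ d ∈ {d : ℝ | ∃ x ∈ segment ℝ (p i) (p j), ∃ y ∈ segment ℝ (p i) (p j),
      d = 2 * gauge (C - C) (y - x)}, d ≤ E0 := by
    rintro d ⟨u, hu, v, hv, rfl⟩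
    obtain ⟨a, b, ha, hb, hab, rfl⟩ := hu
    obtain ⟨a', b', ha', hb', hab', rfl⟩ := hv
    have hb1 : b = 1 - a := by linarith
    have hb1' : b' = 1 - a' := by linarith
    subst hb1; subst hb1'
    have hdiff : (a' • p i + (1 - a') • p j) - (a • p i + (1 - a) • p j)
        = (a' - a) • (p i - p j) := by
      simp only [sub_smul, smul_sub, one_smul]
      abel
    rw [hdiff, habs_smul]
    have habs1 : |a' - a| ≤ 1 := by
      rw [abs_le]; constructor <;> linarith
    have hji : gauge (C - C) (p i - p j) = gauge (C - C) (p j - p i) := hgflip _ _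
    rw [hji, hE0]
    have := hgnn (p j - p i)
    nlinarith
  have hmemseg : E0 ∈ {d : ℝ | ∃ x ∈ segment ℝ (p i) (p j), ∃ y ∈ segment ℝ (p i) (p j),
      d = 2 * gauge (C - C) (y - x)} :=
    ⟨p i, left_mem_segment ℝ _ _, p j, right_mem_segment ℝ _ _, hE0⟩
  have hseg : diamC (segment ℝ (p i) (p j)) C = E0 := by
    rw [hdiam]
    exact le_antisymm (csSup_le ⟨E0, hmemseg⟩ hubseg) (le_csSup ⟨E0, hubseg⟩ hmemseg)
  rw [hseg, hE0D]
end

section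
/- Let S be a Minkowski centered triangle in R^2 and C a convex body in R^2 with S−S = C−C. Then C is a translate of λS + (1−λ)(−S) for some λ ∈ [0,1]. -/
open Pointwise

def S0 : Set (Fin 2 → ℝ) := {x | 0 ≤ x 0 ∧ 0 ≤ x 1 ∧ x 0 + x 1 ≤ 1}

lemma comb3 {K : Set (Fin 2 → ℝ)} (hK : Convex ℝ K) {p1 p2 p3 : Fin 2 → ℝ}
    (h1 : p1 ∈ K) (h2 : p2 ∈ K) (h3 : p3 ∈ K) {a b c : ℝ}
    (ha : 0 ≤ a) (hb : 0 ≤ b) (hc : 0 ≤ c) (habc : a + b + c = 1) :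
    a • p1 + b • p2 + c • p3 ∈ K := by
  have := hK.sum_mem (t := (Finset.univ : Finset (Fin 3))) (w := ![a,b,c]) (z := ![p1,p2,p3])
    (by intro i _; fin_cases i <;> simpa) (by simp [Fin.sum_univ_three, habc])
    (by intro i _; fin_cases i <;> simpa)
  simpa [Fin.sum_univ_three] using this

lemma exists_extrema {C : Set (Fin 2 → ℝ)} (hcomp : IsCompact C) (hne : C.Nonempty) (u v : ℝ) :
    ∃ p ∈ C, ∃ q ∈ C, (∀ x ∈ C, u * x 0 + v * x 1 ≤ u * p 0 + v * p 1) ∧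
      (∀ x ∈ C, u * q 0 + v * q 1 ≤ u * x 0 + v * x 1) := by
  have hcont : Continuous (fun x : Fin 2 → ℝ => u * x 0 + v * x 1) := by continuity
  obtain ⟨p, hp, hpmax⟩ := hcomp.exists_isMaxOn hne hcont.continuousOn
  obtain ⟨q, hq, hqmin⟩ := hcomp.exists_isMinOn hne hcont.continuousOn
  exact ⟨p, hp, q, hq, fun x hx => hpmax hx, fun x hx => hqmin hx⟩

lemma widthKey {C : Set (Fin 2 → ℝ)} (hdiff : S0 - S0 = C - C)
    (u v hi lo : ℝ) (w : Fin 2 → ℝ) (hwS : w ∈ S0 - S0)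
    (hhi : ∀ a ∈ S0, u * a 0 + v * a 1 ≤ hi)
    (hlo : ∀ a ∈ S0, lo ≤ u * a 0 + v * a 1)
    (hwval : u * w 0 + v * w 1 = hi - lo)
    {p q : Fin 2 → ℝ} (hp : p ∈ C) (hq : q ∈ C)
    (hpmax : ∀ x ∈ C, u * x 0 + v * x 1 ≤ u * p 0 + v * p 1)
    (hqmin : ∀ x ∈ C, u * q 0 + v * q 1 ≤ u * x 0 + v * x 1) :
    u * p 0 + v * p 1 - (u * q 0 + v * q 1) = hi - lo := by
  have hwC : w ∈ C - C := hdiff ▸ hwS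
  obtain ⟨c, hc, c', hc', hcc⟩ := Set.mem_sub.mp hwC
  have h0 : c 0 - c' 0 = w 0 := by simpa using congrFun hcc 0
  have h1 : c 1 - c' 1 = w 1 := by simpa using congrFun hcc 1
  have hcw : u * c 0 + v * c 1 - (u * c' 0 + v * c' 1) = hi - lo := by
    linear_combination u * h0 + v * h1 + hwval
  have hge : hi - lo ≤ u * p 0 + v * p 1 - (u * q 0 + v * q 1) := by
    have := hpmax c hc; have := hqmin c' hc'; linarith
  have hpq : p - q ∈ S0 - S0 := by rw [hdiff]; exact Set.sub_mem_sub hp hq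
  obtain ⟨a, ha, b, hb, hab⟩ := Set.mem_sub.mp hpq
  have ha0 : a 0 - b 0 = p 0 - q 0 := by simpa using congrFun hab 0
  have ha1 : a 1 - b 1 = p 1 - q 1 := by simpa using congrFun hab 1
  have hcomb : u * a 0 + v * a 1 - (u * b 0 + v * b 1)
      = u * p 0 + v * p 1 - (u * q 0 + v * q 1) := by
    linear_combination u * ha0 + v * ha1
  have := hhi a ha; have := hlo b hb
  linarith

lemma vertexKey {C : Set (Fin 2 → ℝ)} (hdiff : S0 - S0 = C - C)
    (u v hi lo : ℝ) (w : Fin 2 → ℝ) (hwS : w ∈ S0 - S0)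
    (hhi : ∀ a ∈ S0, u * a 0 + v * a 1 ≤ hi)
    (hlo : ∀ a ∈ S0, lo ≤ u * a 0 + v * a 1)
    (hwval : u * w 0 + v * w 1 = hi - lo)
    (huniq : ∀ a ∈ S0, ∀ b ∈ S0, u * a 0 + v * a 1 = hi → u * b 0 + v * b 1 = lo → a - b = w)
    {p q : Fin 2 → ℝ} (hp : p ∈ C) (hq : q ∈ C)
    (hpmax : ∀ x ∈ C, u * x 0 + v * x 1 ≤ u * p 0 + v * p 1)
    (hqmin : ∀ x ∈ C, u * q 0 + v * q 1 ≤ u * x 0 + v * x 1) :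
    p - q = w := by
  have hw := widthKey hdiff u v hi lo w hwS hhi hlo hwval hp hq hpmax hqmin
  have hpq : p - q ∈ S0 - S0 := by rw [hdiff]; exact Set.sub_mem_sub hp hq
  obtain ⟨a, ha, b, hb, hab⟩ := Set.mem_sub.mp hpq
  have ha0 : a 0 - b 0 = p 0 - q 0 := by simpa using congrFun hab 0
  have ha1 : a 1 - b 1 = p 1 - q 1 := by simpa using congrFun hab 1
  have hcomb : u * a 0 + v * a 1 - (u * b 0 + v * b 1)
      = u * p 0 + v * p 1 - (u * q 0 + v * q 1) := by
    linear_combination u * ha0 + v * ha1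
  have h2 := hhi a ha; have h3 := hlo b hb
  have hfa : u * a 0 + v * a 1 = hi := by linarith
  have hfb : u * b 0 + v * b 1 = lo := by linarith
  rw [← hab]; exact huniq a ha b hb hfa hfb

lemma mem0S0 : (0 : Fin 2 → ℝ) ∈ S0 := by simp [S0]
lemma memE1S0 : (![1,0] : Fin 2 → ℝ) ∈ S0 := by norm_num [S0]
lemma memE2S0 : (![0,1] : Fin 2 → ℝ) ∈ S0 := by norm_num [S0]

lemma we1 : (![1,0] : Fin 2 → ℝ) ∈ S0 - S0 := ⟨![1,0], memE1S0, 0, mem0S0, by simp⟩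
lemma we2 : (![0,1] : Fin 2 → ℝ) ∈ S0 - S0 := ⟨![0,1], memE2S0, 0, mem0S0, by simp⟩
lemma we3 : (![1,-1] : Fin 2 → ℝ) ∈ S0 - S0 :=
  ⟨![1,0], memE1S0, ![0,1], memE2S0, by funext i; fin_cases i <;> norm_num⟩

set_option maxHeartbeats 1000000 in
lemma hexEq {C : Set (Fin 2 → ℝ)} (hconv : Convex ℝ C) {m1 m2 μ : ℝ}
    (hμ0 : 0 ≤ μ) (hμ1 : μ ≤ 1)
    (bnd1lo : ∀ x ∈ C, m1 ≤ x 0) (bnd1hi : ∀ x ∈ C, x 0 ≤ m1 + 1)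
    (bnd2lo : ∀ x ∈ C, m2 ≤ x 1) (bnd2hi : ∀ x ∈ C, x 1 ≤ m2 + 1)
    (bnd3lo : ∀ x ∈ C, m1 + m2 + μ ≤ x 0 + x 1)
    (bnd3hi : ∀ x ∈ C, x 0 + x 1 ≤ m1 + m2 + μ + 1)
    {pA pB pC pD pE pF : Fin 2 → ℝ}
    (hpA : pA ∈ C) (hpB : pB ∈ C) (hpC : pC ∈ C)
    (hpD : pD ∈ C) (hpE : pE ∈ C) (hpF : pF ∈ C)
    (hpA0 : pA 0 = m1 + 1) (hpA1 : pA 1 = m2 + μ)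
    (hpB0 : pB 0 = m1) (hpB1 : pB 1 = m2 + μ)
    (hpC0 : pC 0 = m1 + μ) (hpC1 : pC 1 = m2 + 1)
    (hpD0 : pD 0 = m1 + μ) (hpD1 : pD 1 = m2)
    (hpE0 : pE 0 = m1 + 1) (hpE1 : pE 1 = m2)
    (hpF0 : pF 0 = m1) (hpF1 : pF 1 = m2 + 1) :
    C = ![m1 + μ, m2 + μ] +ᵥ ((1 - μ) • S0 + μ • (-S0)) := by
  have hG : ((1-μ) • pD + μ • pC) ∈ C := hconv hpD hpC (by linarith) (by linarith) (by ring)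
  set G := (1-μ) • pD + μ • pC with hGdef
  have hG0 : G 0 = m1 + μ := by
    rw [hGdef]; simp only [Pi.add_apply, Pi.smul_apply, smul_eq_mul, hpD0, hpC0]; ring
  have hG1 : G 1 = m2 + μ := by
    rw [hGdef]; simp only [Pi.add_apply, Pi.smul_apply, smul_eq_mul, hpD1, hpC1]; ring
  ext x
  constructor
  · -- C ⊆ translate
    intro hx
    have hb1 := bnd1lo x hx; have hb2 := bnd1hi x hx
    have hb3 := bnd2lo x hx; have hb4 := bnd2hi x hx
    have hb5 := bnd3lo x hx; have hb6 := bnd3hi x hx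
    set y0 := x 0 - (m1 + μ) with hy0
    set y1 := x 1 - (m2 + μ) with hy1
    have hy0lo : -μ ≤ y0 := by rw [hy0]; linarith
    have hy0hi : y0 ≤ 1 - μ := by rw [hy0]; linarith
    have hy1lo : -μ ≤ y1 := by rw [hy1]; linarith
    have hy1hi : y1 ≤ 1 - μ := by rw [hy1]; linarith
    have hyslo : -μ ≤ y0 + y1 := by rw [hy0, hy1]; linarith
    have hyshi : y0 + y1 ≤ 1 - μ := by rw [hy0, hy1]; linarith
    refine Set.mem_vadd_set.mpr ⟨![max y0 0, max y1 0] + ![min y0 0, min y1 0],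
      Set.add_mem_add ?_ ?_, ?_⟩
    · rcases eq_or_lt_of_le hμ1 with hμone | hμlt
      · have hz : (![max y0 0, max y1 0] : Fin 2 → ℝ) = 0 := by
          funext i; fin_cases i
          · show max y0 0 = (0 : Fin 2 → ℝ) 0
            simp only [Pi.zero_apply]; exact max_eq_right (by linarith)
          · show max y1 0 = (0 : Fin 2 → ℝ) 1
            simp only [Pi.zero_apply]; exact max_eq_right (by linarith)
        rw [hz]
        have h10 : ((1:ℝ) - μ) = 0 := by linarith
        rw [h10, Set.zero_smul_set ⟨0, mem0S0⟩]
        exact Set.zero_mem_zero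
      · have h1μ : (0:ℝ) < 1 - μ := by linarith
        refine Set.mem_smul_set.mpr ⟨(1-μ)⁻¹ • ![max y0 0, max y1 0], ⟨?_, ?_, ?_⟩, ?_⟩
        · show 0 ≤ ((1-μ)⁻¹ • (![max y0 0, max y1 0] : Fin 2 → ℝ)) 0
          simp only [Pi.smul_apply, Matrix.cons_val_zero, smul_eq_mul]
          exact mul_nonneg (by positivity) (le_max_right _ _)
        · show 0 ≤ ((1-μ)⁻¹ • (![max y0 0, max y1 0] : Fin 2 → ℝ)) 1
          simp only [Pi.smul_apply, Matrix.cons_val_one, Matrix.head_cons, smul_eq_mul]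
          exact mul_nonneg (by positivity) (le_max_right _ _)
        · show ((1-μ)⁻¹ • (![max y0 0, max y1 0] : Fin 2 → ℝ)) 0
            + ((1-μ)⁻¹ • (![max y0 0, max y1 0] : Fin 2 → ℝ)) 1 ≤ 1
          simp only [Pi.smul_apply, Matrix.cons_val_zero, Matrix.cons_val_one,
            Matrix.head_cons, smul_eq_mul]
          have key : max y0 0 + max y1 0 ≤ 1 - μ := by
            rcases le_total y0 0 with h | h <;> rcases le_total y1 0 with h' | h' <;>
              simp only [max_eq_right, max_eq_left, h, h'] <;> linarith
          calc (1-μ)⁻¹ * max y0 0 + (1-μ)⁻¹ * max y1 0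
              = (1-μ)⁻¹ * (max y0 0 + max y1 0) := by ring
            _ ≤ (1-μ)⁻¹ * (1-μ) := mul_le_mul_of_nonneg_left key (le_of_lt (inv_pos.mpr h1μ))
            _ = 1 := inv_mul_cancel₀ (ne_of_gt h1μ)
        · rw [smul_smul, mul_inv_cancel₀ (ne_of_gt h1μ), one_smul]
    · rcases eq_or_lt_of_le hμ0 with hμz | hμpos
      · have hz : (![min y0 0, min y1 0] : Fin 2 → ℝ) = 0 := by
          funext i; fin_cases i
          · show min y0 0 = (0 : Fin 2 → ℝ) 0
            simp only [Pi.zero_apply]; exact min_eq_right (by linarith)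
          · show min y1 0 = (0 : Fin 2 → ℝ) 1
            simp only [Pi.zero_apply]; exact min_eq_right (by linarith)
        rw [hz, ← hμz, Set.zero_smul_set ⟨0, by rw [Set.mem_neg]; simpa using mem0S0⟩]
        exact Set.zero_mem_zero
      · refine Set.mem_smul_set.mpr ⟨μ⁻¹ • ![min y0 0, min y1 0], ?_, ?_⟩
        · rw [Set.mem_neg]
          refine ⟨?_, ?_, ?_⟩
          · show 0 ≤ (-(μ⁻¹ • (![min y0 0, min y1 0] : Fin 2 → ℝ))) 0
            simp only [Pi.neg_apply, Pi.smul_apply, Matrix.cons_val_zero, smul_eq_mul]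
            have : min y0 0 ≤ 0 := min_le_right _ _
            nlinarith [inv_pos.mpr hμpos]
          · show 0 ≤ (-(μ⁻¹ • (![min y0 0, min y1 0] : Fin 2 → ℝ))) 1
            simp only [Pi.neg_apply, Pi.smul_apply, Matrix.cons_val_one, Matrix.head_cons,
              smul_eq_mul, Matrix.cons_val_zero]
            have : min y1 0 ≤ 0 := min_le_right _ _
            nlinarith [inv_pos.mpr hμpos]
          · show (-(μ⁻¹ • (![min y0 0, min y1 0] : Fin 2 → ℝ))) 0
              + (-(μ⁻¹ • (![min y0 0, min y1 0] : Fin 2 → ℝ))) 1 ≤ 1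
            simp only [Pi.neg_apply, Pi.smul_apply, Matrix.cons_val_zero, Matrix.cons_val_one,
              Matrix.head_cons, smul_eq_mul]
            have key : -μ ≤ min y0 0 + min y1 0 := by
              rcases le_total y0 0 with h | h <;> rcases le_total y1 0 with h' | h' <;>
                simp only [min_eq_left, min_eq_right, h, h'] <;> linarith
            have h2 : -(min y0 0 + min y1 0) ≤ μ := by linarith
            calc -(μ⁻¹ * min y0 0) + -(μ⁻¹ * min y1 0)
                = μ⁻¹ * (-(min y0 0 + min y1 0)) := by ring
              _ ≤ μ⁻¹ * μ := mul_le_mul_of_nonneg_left h2 (le_of_lt (inv_pos.mpr hμpos))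
              _ = 1 := inv_mul_cancel₀ (ne_of_gt hμpos)
        · rw [smul_smul, mul_inv_cancel₀ (ne_of_gt hμpos), one_smul]
    · show (![m1 + μ, m2 + μ] : Fin 2 → ℝ)
        +ᵥ (![max y0 0, max y1 0] + ![min y0 0, min y1 0]) = x
      funext i; fin_cases i
      · show (m1 + μ) + (max y0 0 + min y0 0) = x 0
        have := max_add_min y0 0
        rw [hy0] at *; linarith
      · show (m2 + μ) + (max y1 0 + min y1 0) = x 1
        have := max_add_min y1 0
        rw [hy1] at *; linarith
  · -- translate ⊆ C
    intro hx
    obtain ⟨y, hy, hty⟩ := Set.mem_vadd_set.mp hx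
    obtain ⟨a, ha, b, hb, rfl⟩ := Set.mem_add.mp hy
    obtain ⟨s, hs, rfl⟩ := Set.mem_smul_set.mp ha
    obtain ⟨n, hn, rfl⟩ := Set.mem_smul_set.mp hb
    rw [Set.mem_neg] at hn
    obtain ⟨hsa, hsb, hsc⟩ := hs
    obtain ⟨hna, hnb, hnc⟩ := hn
    simp only [Pi.neg_apply] at hna hnb hnc
    have hx0 : x 0 = (m1 + μ) + (1-μ) * s 0 + μ * n 0 := by
      rw [← hty]; show (![m1 + μ, m2 + μ] : Fin 2 → ℝ) 0 + ((1-μ) • s + μ • n) 0 = _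
      simp only [Matrix.cons_val_zero, Pi.add_apply, Pi.smul_apply, smul_eq_mul]; ring
    have hx1 : x 1 = (m2 + μ) + (1-μ) * s 1 + μ * n 1 := by
      rw [← hty]; show (![m1 + μ, m2 + μ] : Fin 2 → ℝ) 1 + ((1-μ) • s + μ • n) 1 = _
      simp only [Matrix.cons_val_one, Matrix.head_cons, Pi.add_apply, Pi.smul_apply,
        smul_eq_mul, Matrix.cons_val_zero]; ring
    have h1μnn : (0:ℝ) ≤ 1 - μ := by linarith
    have hs0le : s 0 ≤ 1 := by linarith
    have hs1le : s 1 ≤ 1 := by linarith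
    have c1 : m1 ≤ x 0 := by
      nlinarith [mul_nonneg h1μnn hsa, mul_nonneg hμ0 (by linarith : (0:ℝ) ≤ 1 + n 0)]
    have c2 : x 0 ≤ m1 + 1 := by
      nlinarith [mul_nonneg h1μnn (by linarith : (0:ℝ) ≤ 1 - s 0), mul_nonneg hμ0 hna]
    have c3 : m2 ≤ x 1 := by
      nlinarith [mul_nonneg h1μnn hsb, mul_nonneg hμ0 (by linarith : (0:ℝ) ≤ 1 + n 1)]
    have c4 : x 1 ≤ m2 + 1 := by
      nlinarith [mul_nonneg h1μnn (by linarith : (0:ℝ) ≤ 1 - s 1), mul_nonneg hμ0 hnb]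
    have c5 : m1 + m2 + μ ≤ x 0 + x 1 := by
      nlinarith [mul_nonneg h1μnn (by linarith : (0:ℝ) ≤ s 0 + s 1),
        mul_nonneg hμ0 (by linarith : (0:ℝ) ≤ 1 + n 0 + n 1)]
    have c6 : x 0 + x 1 ≤ m1 + m2 + μ + 1 := by
      nlinarith [mul_nonneg h1μnn (by linarith : (0:ℝ) ≤ 1 - s 0 - s 1),
        mul_nonneg hμ0 (by linarith : (0:ℝ) ≤ -(n 0) - n 1)]
    clear hx0 hx1 hty hx hsa hsb hsc hna hnb hnc hs0le hs1le
    rcases le_total (x 0) (m1 + μ) with hc1 | hc1 <;>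
      rcases le_total (x 1) (m2 + μ) with hc2 | hc2
    · -- x0 ≤ m1+μ, x1 ≤ m2+μ : triangle pB, pD, G
      rcases eq_or_lt_of_le hμ0 with hμz | hμpos
      · have hxB : x = pB := by
          funext i; fin_cases i
          · show x 0 = pB 0; rw [hpB0]; linarith
          · show x 1 = pB 1; rw [hpB1]; linarith
        rw [hxB]; exact hpB
      · have hμne : μ ≠ 0 := ne_of_gt hμpos
        have hcomb : x = ((x 0 + x 1 - m1 - m2 - μ)/μ) • G + ((m1 + μ - x 0)/μ) • pB
            + ((m2 + μ - x 1)/μ) • pD := by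
          funext i; fin_cases i
          · show x 0 = (((x 0 + x 1 - m1 - m2 - μ)/μ) • G + ((m1 + μ - x 0)/μ) • pB
              + ((m2 + μ - x 1)/μ) • pD) 0
            simp only [Pi.add_apply, Pi.smul_apply, smul_eq_mul, hG0, hpB0, hpD0]
            field_simp
            ring
          · show x 1 = (((x 0 + x 1 - m1 - m2 - μ)/μ) • G + ((m1 + μ - x 0)/μ) • pB
              + ((m2 + μ - x 1)/μ) • pD) 1
            simp only [Pi.add_apply, Pi.smul_apply, smul_eq_mul, hG1, hpB1, hpD1]
            field_simp
            ring
        rw [hcomb]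
        refine comb3 hconv hG hpB hpD ?_ ?_ ?_ ?_
        · exact div_nonneg (by linarith) (le_of_lt hμpos)
        · exact div_nonneg (by linarith) (le_of_lt hμpos)
        · exact div_nonneg (by linarith) (le_of_lt hμpos)
        · field_simp
          ring
    · -- x0 ≤ m1+μ, x1 ≥ m2+μ : quadrilateral pB, G, pF, pC
      rcases eq_or_lt_of_le hμ0 with hμz | hμpos
      · have hcomb : x = (1 - (x 1 - m2)) • pB + (x 1 - m2) • pF := by
          funext i; fin_cases i
          · show x 0 = ((1 - (x 1 - m2)) • pB + (x 1 - m2) • pF) 0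
            simp only [Pi.add_apply, Pi.smul_apply, smul_eq_mul, hpB0, hpF0]
            have hx0e : x 0 = m1 := by linarith
            rw [hx0e]; ring
          · show x 1 = ((1 - (x 1 - m2)) • pB + (x 1 - m2) • pF) 1
            simp only [Pi.add_apply, Pi.smul_apply, smul_eq_mul, hpB1, hpF1, ← hμz]
            ring
        rw [hcomb]; exact hconv hpB hpF (by linarith) (by linarith) (by ring)
      · rcases eq_or_lt_of_le hμ1 with hμone | hμlt
        · have hcomb : x = (1 - (x 0 - m1)) • pF + (x 0 - m1) • pC := by
            funext i; fin_cases i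
            · show x 0 = ((1 - (x 0 - m1)) • pF + (x 0 - m1) • pC) 0
              simp only [Pi.add_apply, Pi.smul_apply, smul_eq_mul, hpF0, hpC0, hμone]
              ring
            · show x 1 = ((1 - (x 0 - m1)) • pF + (x 0 - m1) • pC) 1
              simp only [Pi.add_apply, Pi.smul_apply, smul_eq_mul, hpF1, hpC1]
              have hx1e : x 1 = m2 + 1 := by linarith
              rw [hx1e]; ring
          rw [hcomb]
          exact hconv hpF hpC (by linarith) (by linarith) (by ring)
        · have hμne : μ ≠ 0 := ne_of_gt hμpos
          have h1μne : (1:ℝ) - μ ≠ 0 := ne_of_gt (by linarith)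
          have hβ0 : 0 ≤ (x 0 - m1)/μ := div_nonneg (by linarith) (le_of_lt hμpos)
          have hβ1 : (x 0 - m1)/μ ≤ 1 := by rw [div_le_one hμpos]; linarith
          have hL : ((1 - (x 0 - m1)/μ) • pB + ((x 0 - m1)/μ) • G) ∈ C :=
            hconv hpB hG (by linarith) hβ0 (by ring)
          have hU : ((1 - (x 0 - m1)/μ) • pF + ((x 0 - m1)/μ) • pC) ∈ C :=
            hconv hpF hpC (by linarith) hβ0 (by ring)
          have hγ0 : 0 ≤ (x 1 - m2 - μ)/(1-μ) := div_nonneg (by linarith) (by linarith)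
          have hγ1 : (x 1 - m2 - μ)/(1-μ) ≤ 1 := by
            rw [div_le_one (by linarith)]; linarith
          have hcomb : x = (1 - (x 1 - m2 - μ)/(1-μ)) • ((1 - (x 0 - m1)/μ) • pB
              + ((x 0 - m1)/μ) • G) + ((x 1 - m2 - μ)/(1-μ)) • ((1 - (x 0 - m1)/μ) • pF
              + ((x 0 - m1)/μ) • pC) := by
            funext i; fin_cases i
            · show x 0 = ((1 - (x 1 - m2 - μ)/(1-μ)) • ((1 - (x 0 - m1)/μ) • pB
                + ((x 0 - m1)/μ) • G) + ((x 1 - m2 - μ)/(1-μ)) • ((1 - (x 0 - m1)/μ) • pF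
                + ((x 0 - m1)/μ) • pC)) 0
              simp only [Pi.add_apply, Pi.smul_apply, smul_eq_mul, hpB0, hG0, hpF0, hpC0]
              field_simp
              ring
            · show x 1 = ((1 - (x 1 - m2 - μ)/(1-μ)) • ((1 - (x 0 - m1)/μ) • pB
                + ((x 0 - m1)/μ) • G) + ((x 1 - m2 - μ)/(1-μ)) • ((1 - (x 0 - m1)/μ) • pF
                + ((x 0 - m1)/μ) • pC)) 1
              simp only [Pi.add_apply, Pi.smul_apply, smul_eq_mul, hpB1, hG1, hpF1, hpC1]
              field_simp
              ring
          rw [hcomb]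
          exact hconv hL hU (by linarith) hγ0 (by ring)
    · -- x0 ≥ m1+μ, x1 ≤ m2+μ : quadrilateral pD, pE, G, pA
      rcases eq_or_lt_of_le hμ0 with hμz | hμpos
      · have hcomb : x = (1 - (x 0 - m1)) • pD + (x 0 - m1) • pE := by
          funext i; fin_cases i
          · show x 0 = ((1 - (x 0 - m1)) • pD + (x 0 - m1) • pE) 0
            simp only [Pi.add_apply, Pi.smul_apply, smul_eq_mul, hpD0, hpE0, ← hμz]
            ring
          · show x 1 = ((1 - (x 0 - m1)) • pD + (x 0 - m1) • pE) 1
            simp only [Pi.add_apply, Pi.smul_apply, smul_eq_mul, hpD1, hpE1]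
            have hx1e : x 1 = m2 := by linarith
            rw [hx1e]; ring
        rw [hcomb]; exact hconv hpD hpE (by linarith) (by linarith) (by ring)
      · rcases eq_or_lt_of_le hμ1 with hμone | hμlt
        · have hcomb : x = (1 - (x 1 - m2)) • pE + (x 1 - m2) • pA := by
            funext i; fin_cases i
            · show x 0 = ((1 - (x 1 - m2)) • pE + (x 1 - m2) • pA) 0
              simp only [Pi.add_apply, Pi.smul_apply, smul_eq_mul, hpE0, hpA0]
              have hx0e : x 0 = m1 + 1 := by linarith
              rw [hx0e]; ring
            · show x 1 = ((1 - (x 1 - m2)) • pE + (x 1 - m2) • pA) 1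
              simp only [Pi.add_apply, Pi.smul_apply, smul_eq_mul, hpE1, hpA1, hμone]
              ring
          rw [hcomb]
          exact hconv hpE hpA (by linarith) (by linarith) (by ring)
        · have hμne : μ ≠ 0 := ne_of_gt hμpos
          have h1μne : (1:ℝ) - μ ≠ 0 := ne_of_gt (by linarith)
          have hα0 : 0 ≤ (x 0 - m1 - μ)/(1-μ) := div_nonneg (by linarith) (by linarith)
          have hα1 : (x 0 - m1 - μ)/(1-μ) ≤ 1 := by
            rw [div_le_one (by linarith)]; linarith
          have hL : ((1 - (x 0 - m1 - μ)/(1-μ)) • pD + ((x 0 - m1 - μ)/(1-μ)) • pE) ∈ C :=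
            hconv hpD hpE (by linarith) hα0 (by ring)
          have hU : ((1 - (x 0 - m1 - μ)/(1-μ)) • G + ((x 0 - m1 - μ)/(1-μ)) • pA) ∈ C :=
            hconv hG hpA (by linarith) hα0 (by ring)
          have hβ0 : 0 ≤ (x 1 - m2)/μ := div_nonneg (by linarith) (le_of_lt hμpos)
          have hβ1 : (x 1 - m2)/μ ≤ 1 := by rw [div_le_one hμpos]; linarith
          have hcomb : x = (1 - (x 1 - m2)/μ) • ((1 - (x 0 - m1 - μ)/(1-μ)) • pD
              + ((x 0 - m1 - μ)/(1-μ)) • pE) + ((x 1 - m2)/μ) • ((1 - (x 0 - m1 - μ)/(1-μ)) • G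
              + ((x 0 - m1 - μ)/(1-μ)) • pA) := by
            funext i; fin_cases i
            · show x 0 = ((1 - (x 1 - m2)/μ) • ((1 - (x 0 - m1 - μ)/(1-μ)) • pD
                + ((x 0 - m1 - μ)/(1-μ)) • pE) + ((x 1 - m2)/μ) • ((1 - (x 0 - m1 - μ)/(1-μ)) • G
                + ((x 0 - m1 - μ)/(1-μ)) • pA)) 0
              simp only [Pi.add_apply, Pi.smul_apply, smul_eq_mul, hpD0, hpE0, hG0, hpA0]
              field_simp
              ring
            · show x 1 = ((1 - (x 1 - m2)/μ) • ((1 - (x 0 - m1 - μ)/(1-μ)) • pD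
                + ((x 0 - m1 - μ)/(1-μ)) • pE) + ((x 1 - m2)/μ) • ((1 - (x 0 - m1 - μ)/(1-μ)) • G
                + ((x 0 - m1 - μ)/(1-μ)) • pA)) 1
              simp only [Pi.add_apply, Pi.smul_apply, smul_eq_mul, hpD1, hpE1, hG1, hpA1]
              field_simp
              ring
          rw [hcomb]
          exact hconv hL hU (by linarith) hβ0 (by ring)
    · -- x0 ≥ m1+μ, x1 ≥ m2+μ : triangle G, pA, pC
      rcases eq_or_lt_of_le hμ1 with hμone | hμlt
      · have hxG : x = G := by
          funext i; fin_cases i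
          · show x 0 = G 0; rw [hG0]; linarith
          · show x 1 = G 1; rw [hG1]; linarith
        rw [hxG]; exact hG
      · have h1μne : (1:ℝ) - μ ≠ 0 := ne_of_gt (by linarith)
        have hcomb : x = ((m1 + m2 + 1 + μ - x 0 - x 1)/(1-μ)) • G
            + ((x 0 - m1 - μ)/(1-μ)) • pA + ((x 1 - m2 - μ)/(1-μ)) • pC := by
          funext i; fin_cases i
          · show x 0 = (((m1 + m2 + 1 + μ - x 0 - x 1)/(1-μ)) • G
              + ((x 0 - m1 - μ)/(1-μ)) • pA + ((x 1 - m2 - μ)/(1-μ)) • pC) 0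
            simp only [Pi.add_apply, Pi.smul_apply, smul_eq_mul, hG0, hpA0, hpC0]
            field_simp
            ring
          · show x 1 = (((m1 + m2 + 1 + μ - x 0 - x 1)/(1-μ)) • G
              + ((x 0 - m1 - μ)/(1-μ)) • pA + ((x 1 - m2 - μ)/(1-μ)) • pC) 1
            simp only [Pi.add_apply, Pi.smul_apply, smul_eq_mul, hG1, hpA1, hpC1]
            field_simp
            ring
        rw [hcomb]
        refine comb3 hconv hG hpA hpC ?_ ?_ ?_ ?_
        · exact div_nonneg (by linarith) (by linarith)
        · exact div_nonneg (by linarith) (by linarith)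
        · exact div_nonneg (by linarith) (by linarith)
        · field_simp
          ring
set_option maxHeartbeats 1000000 in
lemma mainStd {C : Set (Fin 2 → ℝ)} (hconv : Convex ℝ C) (hcomp : IsCompact C)
    (hne : C.Nonempty) (hdiff : S0 - S0 = C - C) :
    ∃ lam ∈ Set.Icc (0:ℝ) 1, ∃ t : Fin 2 → ℝ, C = t +ᵥ (lam • S0 + (1 - lam) • (-S0)) := by
  obtain ⟨r1, hr1, q1, hq1, hr1max, hq1min⟩ := exists_extrema hcomp hne 1 0
  obtain ⟨r2, hr2, q2, hq2, hr2max, hq2min⟩ := exists_extrema hcomp hne 0 1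
  obtain ⟨r3, hr3, q3, hq3, hr3max, hq3min⟩ := exists_extrema hcomp hne 1 1
  obtain ⟨pA, hpA, pB, hpB, hpAmax, hpBmin⟩ := exists_extrema hcomp hne 2 1
  obtain ⟨pC, hpC, pD, hpD, hpCmax, hpDmin⟩ := exists_extrema hcomp hne 1 2
  obtain ⟨pE, hpE, pF, hpF, hpEmax, hpFmin⟩ := exists_extrema hcomp hne 1 (-1)
  -- widths
  have wd1 := widthKey hdiff 1 0 1 0 ![1,0] we1 (fun a ha => by obtain ⟨h1,h2,h3⟩ := ha; linarith)
    (fun a ha => by obtain ⟨h1,h2,h3⟩ := ha; linarith) (by norm_num) hr1 hq1 hr1max hq1min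
  have wd2 := widthKey hdiff 0 1 1 0 ![0,1] we2 (fun a ha => by obtain ⟨h1,h2,h3⟩ := ha; linarith)
    (fun a ha => by obtain ⟨h1,h2,h3⟩ := ha; linarith) (by norm_num) hr2 hq2 hr2max hq2min
  have wd3 := widthKey hdiff 1 1 1 0 ![1,0] we1 (fun a ha => by obtain ⟨h1,h2,h3⟩ := ha; linarith)
    (fun a ha => by obtain ⟨h1,h2,h3⟩ := ha; linarith) (by norm_num) hr3 hq3 hr3max hq3min
  set m1 := q1 0 with hm1
  set m2 := q2 1 with hm2
  have w1 : r1 0 = m1 + 1 := by linarith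
  have w2 : r2 1 = m2 + 1 := by linarith
  set m3 := q3 0 + q3 1 with hm3
  have w3 : r3 0 + r3 1 = m3 + 1 := by linarith
  -- bounds
  have bnd1lo : ∀ x ∈ C, m1 ≤ x 0 := fun x hx => by have := hq1min x hx; linarith
  have bnd1hi : ∀ x ∈ C, x 0 ≤ m1 + 1 := fun x hx => by have := hr1max x hx; linarith
  have bnd2lo : ∀ x ∈ C, m2 ≤ x 1 := fun x hx => by have := hq2min x hx; linarith
  have bnd2hi : ∀ x ∈ C, x 1 ≤ m2 + 1 := fun x hx => by have := hr2max x hx; linarith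
  have bnd3lo : ∀ x ∈ C, m3 ≤ x 0 + x 1 := fun x hx => by have := hq3min x hx; linarith
  have bnd3hi : ∀ x ∈ C, x 0 + x 1 ≤ m3 + 1 := fun x hx => by have := hr3max x hx; linarith
  set μ := m3 - m1 - m2 with hμdef
  have hμ0 : 0 ≤ μ := by
    have h1 := bnd1lo q3 hq3; have h2 := bnd2lo q3 hq3; rw [hμdef]; linarith
  have hμ1 : μ ≤ 1 := by
    have h1 := bnd1hi r3 hr3; have h2 := bnd2hi r3 hr3; rw [hμdef]; linarith
  -- six vertices
  have hAB : pA - pB = ![1,0] := by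
    refine vertexKey hdiff 2 1 2 0 ![1,0] we1 (fun a ha => by obtain ⟨h1,h2,h3⟩ := ha; linarith)
      (fun a ha => by obtain ⟨h1,h2,h3⟩ := ha; linarith) (by norm_num)
      ?_ hpA hpB hpAmax hpBmin
    rintro a ⟨ha1,ha2,ha3⟩ b ⟨hb1,hb2,hb3⟩ hfa hfb
    funext i; fin_cases i <;> simp <;> linarith
  have hCD : pC - pD = ![0,1] := by
    refine vertexKey hdiff 1 2 2 0 ![0,1] we2 (fun a ha => by obtain ⟨h1,h2,h3⟩ := ha; linarith)
      (fun a ha => by obtain ⟨h1,h2,h3⟩ := ha; linarith) (by norm_num)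
      ?_ hpC hpD hpCmax hpDmin
    rintro a ⟨ha1,ha2,ha3⟩ b ⟨hb1,hb2,hb3⟩ hfa hfb
    funext i; fin_cases i <;> simp <;> linarith
  have hEF : pE - pF = ![1,-1] := by
    refine vertexKey hdiff 1 (-1) 1 (-1) ![1,-1] we3 (fun a ha => by obtain ⟨h1,h2,h3⟩ := ha; linarith)
      (fun a ha => by obtain ⟨h1,h2,h3⟩ := ha; linarith) (by norm_num)
      ?_ hpE hpF hpEmax hpFmin
    rintro a ⟨ha1,ha2,ha3⟩ b ⟨hb1,hb2,hb3⟩ hfa hfb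
    funext i; fin_cases i <;> simp <;> linarith
  have hAB0 : pA 0 - pB 0 = 1 := by simpa using congrFun hAB 0
  have hAB1 : pA 1 - pB 1 = 0 := by simpa using congrFun hAB 1
  have hCD0 : pC 0 - pD 0 = 0 := by simpa using congrFun hCD 0
  have hCD1 : pC 1 - pD 1 = 1 := by simpa using congrFun hCD 1
  have hEF0 : pE 0 - pF 0 = 1 := by simpa using congrFun hEF 0
  have hEF1 : pE 1 - pF 1 = -1 := by simpa using congrFun hEF 1
  -- coordinates
  have hpA0 : pA 0 = m1 + 1 := by
    have h1 := bnd1hi pA hpA; have h2 := bnd1lo pB hpB; linarith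
  have hpB0 : pB 0 = m1 := by linarith
  have hsA : pA 0 + pA 1 = m3 + 1 := by
    have h1 := bnd3hi pA hpA; have h2 := bnd3lo pB hpB; linarith
  have hpA1 : pA 1 = m2 + μ := by rw [hμdef]; linarith
  have hpB1 : pB 1 = m2 + μ := by rw [hμdef]; linarith
  have hpC1 : pC 1 = m2 + 1 := by
    have h1 := bnd2hi pC hpC; have h2 := bnd2lo pD hpD; linarith
  have hpD1 : pD 1 = m2 := by linarith
  have hsC : pC 0 + pC 1 = m3 + 1 := by
    have h1 := bnd3hi pC hpC; have h2 := bnd3lo pD hpD; linarith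
  have hpC0 : pC 0 = m1 + μ := by rw [hμdef]; linarith
  have hpD0 : pD 0 = m1 + μ := by rw [hμdef]; linarith
  have hpE0 : pE 0 = m1 + 1 := by
    have h1 := bnd1hi pE hpE; have h2 := bnd1lo pF hpF; linarith
  have hpF0 : pF 0 = m1 := by linarith
  have hpF1 : pF 1 = m2 + 1 := by
    have h1 := bnd2hi pF hpF; have h2 := bnd2lo pE hpE; linarith
  have hpE1 : pE 1 = m2 := by linarith
  -- the midpoint-ish vertex G
  have hG : ((1-μ) • pD + μ • pC) ∈ C := hconv hpD hpC (by linarith) (by linarith) (by ring)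
  set G := (1-μ) • pD + μ • pC with hGdef
  have hG0 : G 0 = m1 + μ := by
    rw [hGdef]; simp only [Pi.add_apply, Pi.smul_apply, smul_eq_mul, hpD0, hpC0]; ring
  have hG1 : G 1 = m2 + μ := by
    rw [hGdef]; simp only [Pi.add_apply, Pi.smul_apply, smul_eq_mul, hpD1, hpC1]; ring
  -- conclude via hexEq
  have hbnd3lo : ∀ x ∈ C, m1 + m2 + μ ≤ x 0 + x 1 := fun x hx => by
    have := bnd3lo x hx; rw [hμdef]; linarith
  have hbnd3hi : ∀ x ∈ C, x 0 + x 1 ≤ m1 + m2 + μ + 1 := fun x hx => by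
    have := bnd3hi x hx; rw [hμdef]; linarith
  refine ⟨1 - μ, Set.mem_Icc.mpr ⟨by linarith, by linarith⟩, ![m1 + μ, m2 + μ], ?_⟩
  have hμrw : (1:ℝ) - (1 - μ) = μ := by ring
  rw [hμrw]
  exact hexEq hconv hμ0 hμ1 bnd1lo bnd1hi bnd2lo bnd2hi hbnd3lo hbnd3hi
    hpA hpB hpC hpD hpE hpF hpA0 hpA1 hpB0 hpB1 hpC0 hpC1 hpD0 hpD1 hpE0 hpE1 hpF0 hpF1
section transport
variable (f : (Fin 2 → ℝ) →ₗ[ℝ] (Fin 2 → ℝ)) (A B : Set (Fin 2 → ℝ)) (v w : Fin 2 → ℝ) (r : ℝ)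

lemma img_add : f '' (A + B) = f '' A + f '' B := by
  ext z; constructor
  · rintro ⟨x, hx, rfl⟩
    obtain ⟨a, ha, b, hb, rfl⟩ := Set.mem_add.mp hx
    exact ⟨f a, ⟨a, ha, rfl⟩, f b, ⟨b, hb, rfl⟩, (map_add f a b).symm⟩
  · rintro ⟨za, ⟨a, ha, rfl⟩, zb, ⟨b, hb, rfl⟩, rfl⟩
    exact ⟨a + b, Set.add_mem_add ha hb, map_add f a b⟩

lemma img_sub : f '' (A - B) = f '' A - f '' B := by
  ext z; constructor
  · rintro ⟨x, hx, rfl⟩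
    obtain ⟨a, ha, b, hb, rfl⟩ := Set.mem_sub.mp hx
    exact ⟨f a, ⟨a, ha, rfl⟩, f b, ⟨b, hb, rfl⟩, (map_sub f a b).symm⟩
  · rintro ⟨za, ⟨a, ha, rfl⟩, zb, ⟨b, hb, rfl⟩, rfl⟩
    exact ⟨a - b, Set.sub_mem_sub ha hb, map_sub f a b⟩

lemma img_neg : f '' (-A) = -(f '' A) := by
  ext z; constructor
  · rintro ⟨x, hx, rfl⟩
    exact Set.mem_neg.mpr ⟨-x, Set.mem_neg.mp hx, map_neg f x⟩
  · intro hz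
    obtain ⟨a, ha, haz⟩ := Set.mem_neg.mp hz
    exact ⟨-a, Set.mem_neg.mpr (by simpa using ha), by rw [map_neg, haz, neg_neg]⟩

lemma img_smul : f '' (r • A) = r • (f '' A) := by
  ext z; constructor
  · rintro ⟨x, hx, rfl⟩
    obtain ⟨a, ha, rfl⟩ := Set.mem_smul_set.mp hx
    exact ⟨f a, ⟨a, ha, rfl⟩, (map_smul f r a).symm⟩
  · rintro ⟨za, ⟨a, ha, rfl⟩, rfl⟩
    exact ⟨r • a, Set.smul_mem_smul_set ha, map_smul f r a⟩

lemma img_vadd : f '' (v +ᵥ A) = f v +ᵥ (f '' A) := by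
  ext z; constructor
  · rintro ⟨x, hx, rfl⟩
    obtain ⟨a, ha, rfl⟩ := Set.mem_vadd_set.mp hx
    exact ⟨f a, ⟨a, ha, rfl⟩, by simp only [vadd_eq_add, map_add]⟩
  · rintro ⟨za, ⟨a, ha, rfl⟩, rfl⟩
    exact ⟨v + a, ⟨a, ha, rfl⟩, by simp only [vadd_eq_add, map_add]⟩

lemma smul_vadd_set : r • (v +ᵥ A) = r • v +ᵥ (r • A) := by
  ext z; constructor
  · rintro ⟨x, hx, rfl⟩
    obtain ⟨a, ha, rfl⟩ := Set.mem_vadd_set.mp hx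
    exact ⟨r • a, Set.smul_mem_smul_set ha, by simp only [vadd_eq_add, smul_add]⟩
  · rintro ⟨za, ⟨a, ha, rfl⟩, rfl⟩
    exact ⟨v + a, ⟨a, ha, rfl⟩, by simp only [vadd_eq_add, smul_add]⟩

lemma add_vadd_set : (v +ᵥ A) + (w +ᵥ B) = (v + w) +ᵥ (A + B) := by
  ext z; constructor
  · rintro ⟨x, hx, y, hy, rfl⟩
    obtain ⟨a, ha, rfl⟩ := Set.mem_vadd_set.mp hx
    obtain ⟨b, hb, rfl⟩ := Set.mem_vadd_set.mp hy
    exact ⟨a + b, Set.add_mem_add ha hb, by simp only [vadd_eq_add]; ring_nf⟩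
  · rintro ⟨x, hx, rfl⟩
    obtain ⟨a, ha, b, hb, rfl⟩ := Set.mem_add.mp hx
    exact ⟨v + a, ⟨a, ha, rfl⟩, w + b, ⟨b, hb, rfl⟩, by simp only [vadd_eq_add]; ring_nf⟩

lemma neg_vadd_set : -(v +ᵥ A) = -v +ᵥ (-A) := by
  ext z; constructor
  · intro hz
    obtain ⟨a, ha, hav⟩ := Set.mem_vadd_set.mp (Set.mem_neg.mp hz)
    rw [vadd_eq_add] at hav
    refine ⟨-a, Set.mem_neg.mpr (by simpa using ha), ?_⟩
    simp only [vadd_eq_add]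
    rw [← neg_add, hav, neg_neg]
  · rintro ⟨x, hx, rfl⟩
    rw [Set.mem_neg] at hx ⊢
    refine Set.mem_vadd_set.mpr ⟨-x, hx, ?_⟩
    simp only [vadd_eq_add]; ring_nf

lemma sub_vadd_vadd : (v +ᵥ A) - (v +ᵥ B) = A - B := by
  ext z; constructor
  · rintro ⟨x, hx, y, hy, rfl⟩
    obtain ⟨a, ha, rfl⟩ := Set.mem_vadd_set.mp hx
    obtain ⟨b, hb, rfl⟩ := Set.mem_vadd_set.mp hy
    refine ⟨a, ha, b, hb, ?_⟩
    simp only [vadd_eq_add]; ring_nf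
  · rintro ⟨a, ha, b, hb, rfl⟩
    refine ⟨v + a, ⟨a, ha, rfl⟩, v + b, ⟨b, hb, rfl⟩, ?_⟩
    simp only [vadd_eq_add]; ring_nf

end transport


lemma convex_S0 : Convex ℝ S0 := by
  intro x hx y hy a b ha hb hab
  obtain ⟨hx1, hx2, hx3⟩ := hx
  obtain ⟨hy1, hy2, hy3⟩ := hy
  refine ⟨?_, ?_, ?_⟩ <;> simp only [Pi.add_apply, Pi.smul_apply, smul_eq_mul]
  · nlinarith [mul_nonneg ha hx1, mul_nonneg hb hy1]
  · nlinarith [mul_nonneg ha hx2, mul_nonneg hb hy2]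
  · nlinarith [mul_le_mul_of_nonneg_left hx3 ha, mul_le_mul_of_nonneg_left hy3 hb]


set_option maxHeartbeats 1000000 in
theorem stmt14 (S C : Set (Fin 2 → ℝ)) (hS : IsSimplexBody S) (hSbody : IsBody S)
    (hcent : -S ⊆ asym S • S) (hC : IsBody C) (hdiff : S - S = C - C) :
    ∃ lam ∈ Set.Icc (0 : ℝ) 1, ∃ t : Fin 2 → ℝ,
      C = t +ᵥ (lam • S + (1 - lam) • (-S)) := by
  classical
  obtain ⟨p, hpind, hphull⟩ := hS
  -- linear independence of edge vectors
  have hli0 := (affineIndependent_iff_linearIndependent_vsub ℝ p 0).mp hpind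
  set v : Fin 2 → (Fin 2 → ℝ) := fun i => p i.succ - p 0 with hvdef
  have hli : LinearIndependent ℝ v := by
    have hinj : Function.Injective
        (fun i : Fin 2 => (⟨i.succ, Fin.succ_ne_zero i⟩ : {x : Fin 3 // x ≠ 0})) := by
      intro a b h
      have := congrArg Subtype.val h
      exact Fin.succ_injective _ this
    exact hli0.comp _ hinj
  have hcard : Fintype.card (Fin 2) = Module.finrank ℝ (Fin 2 → ℝ) := by
    simp [Module.finrank_fintype_fun_eq_card]
  set b : Module.Basis (Fin 2) ℝ (Fin 2 → ℝ) := basisOfLinearIndependentOfCardEqFinrank hli hcard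
    with hbdef
  set φ : (Fin 2 → ℝ) ≃ₗ[ℝ] (Fin 2 → ℝ) := b.equivFun with hφdef
  have hbv : ∀ i, b i = v i := fun i => by
    rw [hbdef]; exact congrFun (coe_basisOfLinearIndependentOfCardEqFinrank hli hcard) i
  have hφv : ∀ i j, φ (v i) j = if i = j then 1 else 0 := by
    intro i j; rw [← hbv i, hφdef]; exact b.equivFun_self i j
  set c : Fin 2 → ℝ := φ (p 0) with hcdef
  -- φ(p i) coordinates
  have hp1 : p 1 = v 0 + p 0 := by rw [hvdef]; show p 1 = p (0:Fin 2).succ - p 0 + p 0; simp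
  have hp2 : p 2 = v 1 + p 0 := by rw [hvdef]; show p 2 = p (1:Fin 2).succ - p 0 + p 0; simp
  have hφp1 : ∀ j, φ (p 1) j = c j + (if (0:Fin 2) = j then 1 else 0) := by
    intro j; rw [hp1, map_add]
    simp only [Pi.add_apply, hφv 0 j]; ring
  have hφp2 : ∀ j, φ (p 2) j = c j + (if (1:Fin 2) = j then 1 else 0) := by
    intro j; rw [hp2, map_add]
    simp only [Pi.add_apply, hφv 1 j]; ring
  -- image of S
  have hSimg : φ '' S = c +ᵥ S0 := by
    rw [hphull]
    have himg : ⇑φ '' (convexHull ℝ (Set.range p))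
        = convexHull ℝ (⇑φ '' Set.range p) := by
      rw [show ⇑φ = ⇑φ.toLinearMap.toAffineMap from rfl, AffineMap.image_convexHull]
    rw [himg]
    apply le_antisymm
    · apply convexHull_min
      · rintro z ⟨x, ⟨i, rfl⟩, rfl⟩
        fin_cases i
        · exact ⟨0, mem0S0, by simp [hcdef]⟩
        · refine ⟨φ (p 1) - c, ⟨?_, ?_, ?_⟩, by simp [vadd_eq_add]⟩
          · simp [hφp1 0]
          · simp [hφp1 1]
          · simp [hφp1 0, hφp1 1]
        · refine ⟨φ (p 2) - c, ⟨?_, ?_, ?_⟩, by simp [vadd_eq_add]⟩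
          · simp [hφp2 0]
          · simp [hφp2 1]
          · simp [hφp2 0, hφp2 1]
      · exact (convex_S0.vadd c)
    · rintro z ⟨y, ⟨hy1, hy2, hy3⟩, rfl⟩
      have h0 : φ (p 0) ∈ convexHull ℝ (⇑φ '' Set.range p) :=
        subset_convexHull ℝ _ ⟨p 0, ⟨0, rfl⟩, rfl⟩
      have h1 : φ (p 1) ∈ convexHull ℝ (⇑φ '' Set.range p) :=
        subset_convexHull ℝ _ ⟨p 1, ⟨1, rfl⟩, rfl⟩
      have h2 : φ (p 2) ∈ convexHull ℝ (⇑φ '' Set.range p) :=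
        subset_convexHull ℝ _ ⟨p 2, ⟨2, rfl⟩, rfl⟩
      have hcomb := comb3 (convex_convexHull ℝ _) h0 h1 h2
        (by linarith : (0:ℝ) ≤ 1 - y 0 - y 1) hy1 hy2 (by ring)
      have : c +ᵥ y = (1 - y 0 - y 1) • φ (p 0) + (y 0) • φ (p 1) + (y 1) • φ (p 2) := by
        funext j
        simp only [vadd_eq_add, Pi.add_apply, Pi.smul_apply, smul_eq_mul, hφp1 j, hφp2 j,
          ← hcdef]
        fin_cases j <;> simp <;> ring
      show c +ᵥ y ∈ (convexHull ℝ) (⇑φ '' Set.range p)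
      rw [this]; exact hcomb
  have himg_add : ∀ A B : Set (Fin 2 → ℝ), ⇑φ '' (A + B) = ⇑φ '' A + ⇑φ '' B :=
    fun A B => img_add φ.toLinearMap A B
  have himg_sub : ∀ A B : Set (Fin 2 → ℝ), ⇑φ '' (A - B) = ⇑φ '' A - ⇑φ '' B :=
    fun A B => img_sub φ.toLinearMap A B
  have himg_neg : ∀ A : Set (Fin 2 → ℝ), ⇑φ '' (-A) = -(⇑φ '' A) :=
    fun A => img_neg φ.toLinearMap A
  have himg_smul : ∀ (r : ℝ) (A : Set (Fin 2 → ℝ)), ⇑φ '' (r • A) = r • (⇑φ '' A) :=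
    fun r A => img_smul φ.toLinearMap A r
  have himg_vadd : ∀ (u : Fin 2 → ℝ) (A : Set (Fin 2 → ℝ)), ⇑φ '' (u +ᵥ A) = φ u +ᵥ (⇑φ '' A) :=
    fun u A => img_vadd φ.toLinearMap A u
  -- apply mainStd to φ '' C
  have hconv' : Convex ℝ (⇑φ '' C) := hC.1.linear_image φ.toLinearMap
  have hcomp' : IsCompact (⇑φ '' C) := hC.2.1.image φ.toLinearMap.continuous_of_finiteDimensional
  have hne' : (⇑φ '' C).Nonempty := by
    obtain ⟨z, hz⟩ := hC.2.2
    exact ⟨φ z, z, interior_subset hz, rfl⟩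
  have hdiff' : S0 - S0 = ⇑φ '' C - ⇑φ '' C := by
    have h1 : S0 - S0 = (c +ᵥ S0) - (c +ᵥ S0) := (sub_vadd_vadd _ _ c).symm
    rw [h1, ← hSimg, ← himg_sub, hdiff, himg_sub]
  obtain ⟨lam, hlam, t', hC'⟩ := mainStd hconv' hcomp' hne' hdiff'
  refine ⟨lam, hlam, φ.symm (t' - lam • c + (1 - lam) • c), ?_⟩
  apply (Set.image_eq_image φ.injective).mp
  rw [hC']
  rw [himg_vadd, himg_add, himg_smul, himg_smul, himg_neg]
  show t' +ᵥ (lam • S0 + (1-lam) • (-S0))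
    = φ (φ.symm (t' - lam • c + (1 - lam) • c)) +ᵥ (lam • (φ '' S) + (1-lam) • (-(φ '' S)))
  rw [LinearEquiv.apply_symm_apply, hSimg, neg_vadd_set, smul_vadd_set, smul_vadd_set,
    add_vadd_set, vadd_vadd]
  congr 1
  funext j
  simp only [Pi.add_apply, Pi.sub_apply, Pi.smul_apply, Pi.neg_apply, smul_eq_mul]
  ring
end

section
/- Let λ ≥ μ ≥ 0 (not both zero), S an origin-centered regular n-simplex in R^n, and C := λS + μ(−S). Then R(S,C) = (λ + μ/n)^{-1}, r(S,C) = (λ + nμ)^{-1}, R(−S,C) = (λ/n + μ)^{-1}, r(−S,C) = (nλ + μ)^{-1}, D(S,C) = 2/(λ+μ), and s(C) = (nλ+μ)/(λ+nμ). -/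
open Pointwise

section Aux

lemma dotRight_sum {n : ℕ} (a : Fin n → ℝ) {ι : Type*} (s : Finset ι) (x : ι → Fin n → ℝ) :
    dotProduct a (∑ j ∈ s, x j) = ∑ j ∈ s, dotProduct a (x j) := by
  simp only [dotProduct, Finset.sum_apply, Finset.mul_sum]
  exact Finset.sum_comm

lemma dotLeft_sum {n : ℕ} (a : Fin n → ℝ) {ι : Type*} (s : Finset ι) (x : ι → Fin n → ℝ) :
    dotProduct (∑ j ∈ s, x j) a = ∑ j ∈ s, dotProduct (x j) a := by
  simp only [dotProduct, Finset.sum_apply, Finset.sum_mul]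
  exact Finset.sum_comm

lemma dot_smul_right' {n : ℕ} (a : Fin n → ℝ) (r : ℝ) (x : Fin n → ℝ) :
    dotProduct a (r • x) = r * dotProduct a x := by
  rw [dotProduct_smul, smul_eq_mul]

lemma dot_self_nonneg' {n : ℕ} (x : Fin n → ℝ) : 0 ≤ dotProduct x x :=
  Finset.sum_nonneg fun _ _ => mul_self_nonneg _

lemma dot_self_eq_zero' {n : ℕ} {x : Fin n → ℝ} (h : dotProduct x x = 0) : x = 0 := by
  funext k
  have h2 := (Finset.sum_eq_zero_iff_of_nonneg (fun i _ => mul_self_nonneg (x i))).1 h k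
    (Finset.mem_univ k)
  simpa using mul_self_eq_zero.1 h2

/-- generic lower bound for circumradius-type inclusions -/
lemma circ_lower {n : ℕ} {C K : Set (Fin n → ℝ)} {ι : Type} [Fintype ι]
    (a x : ι → Fin n → ℝ) (h : ι → ℝ)
    (ha : ∑ i, a i = 0) (hb : ∀ i, ∀ c ∈ C, dotProduct (a i) c ≤ h i)
    (hx : ∀ i, x i ∈ K)
    {ρ : ℝ} (hρ : 0 ≤ ρ) {t : Fin n → ℝ} (hsub : K ⊆ t +ᵥ ρ • C) :
    ∑ i, dotProduct (a i) (x i) ≤ ρ * ∑ i, h i := by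
  have key : ∀ i, dotProduct (a i) (x i) ≤ dotProduct (a i) t + ρ * h i := by
    intro i
    obtain ⟨y, hy, hxy⟩ := Set.mem_vadd_set.1 (hsub (hx i))
    obtain ⟨c, hc, rfl⟩ := Set.mem_smul_set.1 hy
    have hxe : x i = t + ρ • c := by rw [← hxy]; rfl
    rw [hxe, dotProduct_add, dot_smul_right']
    have := hb i c hc
    nlinarith [mul_le_mul_of_nonneg_left this hρ]
  calc ∑ i, dotProduct (a i) (x i)
      ≤ ∑ i, (dotProduct (a i) t + ρ * h i) := Finset.sum_le_sum fun i _ => key i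
    _ = (∑ i, dotProduct (a i) t) + ρ * ∑ i, h i := by
        rw [Finset.sum_add_distrib, Finset.mul_sum]
    _ = ρ * ∑ i, h i := by rw [← dotLeft_sum, ha, zero_dotProduct, zero_add]

/-- generic upper bound for inradius-type inclusions -/
lemma in_upper {n : ℕ} {C K : Set (Fin n → ℝ)} {ι : Type} [Fintype ι]
    (a c : ι → Fin n → ℝ) (g : ι → ℝ)
    (ha : ∑ i, a i = 0) (hc : ∀ i, c i ∈ C)
    (hK : ∀ i, ∀ y ∈ K, dotProduct (a i) y ≤ g i)
    {ρ : ℝ} {t : Fin n → ℝ} (hsub : t +ᵥ ρ • C ⊆ K) :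
    ρ * ∑ i, dotProduct (a i) (c i) ≤ ∑ i, g i := by
  have key : ∀ i, dotProduct (a i) t + ρ * dotProduct (a i) (c i) ≤ g i := by
    intro i
    have hmem : t + ρ • c i ∈ K := by
      apply hsub
      exact Set.mem_vadd_set.2 ⟨ρ • c i, Set.smul_mem_smul_set (hc i), rfl⟩
    have := hK i _ hmem
    rwa [dotProduct_add, dot_smul_right'] at this
  calc ρ * ∑ i, dotProduct (a i) (c i)
      = ∑ i, (dotProduct (a i) t + ρ * dotProduct (a i) (c i))
        - ∑ i, dotProduct (a i) t := by
        rw [Finset.sum_add_distrib, ← Finset.mul_sum]; ring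
    _ = ∑ i, (dotProduct (a i) t + ρ * dotProduct (a i) (c i)) := by
        rw [← dotLeft_sum, ha, zero_dotProduct, sub_zero]
    _ ≤ ∑ i, g i := Finset.sum_le_sum fun i _ => key i

lemma neg_set_add {α : Type*} [AddCommGroup α] (s t : Set α) : -(s + t) = -s + -t := by
  ext x
  simp only [Set.mem_neg, Set.mem_add]
  constructor
  · rintro ⟨a, ha, b, hb, hab⟩
    exact ⟨-a, by simpa [Set.mem_neg] using ha, -b, by simpa [Set.mem_neg] using hb, by
      rw [← neg_add, hab, neg_neg]⟩
  · rintro ⟨a, ha, b, hb, rfl⟩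
    exact ⟨-a, by simpa [Set.mem_neg] using ha, -b, by simpa [Set.mem_neg] using hb,
      (neg_add a b).symm⟩

lemma simplex_dots {n : ℕ} (hn : 0 < n) (p : Fin (n+1) → Fin n → ℝ)
    (hind : AffineIndependent ℝ p) (hsum : ∑ i, p i = 0)
    (hreg : ∃ c : ℝ, ∀ i j : Fin (n + 1), i ≠ j →
      dotProduct (p i - p j) (p i - p j) = c) :
    ∃ Rsq : ℝ, 0 < Rsq ∧ (∀ i, dotProduct (p i) (p i) = Rsq) ∧
      ∀ i j, i ≠ j → dotProduct (p i) (p j) = -Rsq / n := by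
  obtain ⟨c, hc⟩ := hreg
  set q : Fin (n+1) → ℝ := fun i => dotProduct (p i) (p i) with hqdef
  set T : ℝ := ∑ j, q j with hT
  have hN : (0:ℝ) < n := by exact_mod_cast hn
  have hzero : ∀ i, ∑ j, dotProduct (p i) (p j) = 0 := fun i => by
    rw [← dotRight_sum, hsum, dotProduct_zero]
  have hpair : ∀ i j, i ≠ j → dotProduct (p i) (p j) = (q i + q j - c)/2 := by
    intro i j hij
    have h1 := hc i j hij
    have expand : dotProduct (p i - p j) (p i - p j) =
        q i - 2 * dotProduct (p i) (p j) + q j := by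
      rw [sub_dotProduct, dotProduct_sub, dotProduct_sub,
        dotProduct_comm (p j) (p i)]
      ring
    rw [expand] at h1
    linarith
  have hq : ∀ i, ((n:ℝ)+1) * q i = n*c - T := by
    intro i
    have h1 : ∑ j ∈ Finset.univ.erase i, dotProduct (p i) (p j)
        = ∑ j ∈ Finset.univ.erase i, (q i + q j - c)/2 :=
      Finset.sum_congr rfl fun j hj => hpair i j (Finset.ne_of_mem_erase hj).symm
    have h2 : ∑ j ∈ Finset.univ.erase i, (q i + q j - c)/2
        = ((n:ℝ)*(q i - c) + (T - q i))/2 := by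
      rw [← Finset.sum_div]
      congr 1
      have hcongr : ∀ j ∈ Finset.univ.erase i, q i + q j - c = q j + (q i - c) := fun j _ => by ring
      rw [Finset.sum_congr rfl hcongr, Finset.sum_add_distrib, Finset.sum_const,
        Finset.sum_erase_eq_sub (Finset.mem_univ i), Finset.card_erase_of_mem (Finset.mem_univ i)]
      simp [Finset.card_univ, hT]
      ring
    have h3 := Finset.add_sum_erase Finset.univ (fun j => dotProduct (p i) (p j))
      (Finset.mem_univ i)
    rw [hzero i, h1, h2] at h3
    have h4 : q i + ((n:ℝ)*(q i - c) + (T - q i))/2 = 0 := by simpa using h3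
    linarith
  set Rsq : ℝ := ((n:ℝ)*c - T)/((n:ℝ)+1) with hRsq
  have hn1 : (0:ℝ) < (n:ℝ)+1 := by linarith
  have hqR : ∀ i, q i = Rsq := by
    intro i
    rw [hRsq, eq_div_iff hn1.ne']
    linarith [hq i]
  have hTR : T = ((n:ℝ)+1) * Rsq := by
    rw [hT]
    rw [Finset.sum_congr rfl fun j _ => hqR j, Finset.sum_const, Finset.card_univ]
    simp
  have hcR : (n:ℝ) * c = 2*((n:ℝ)+1)*Rsq := by
    have h5 := hq 0
    rw [hqR 0, hTR] at h5
    linarith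
  have hoff : ∀ i j, i ≠ j → dotProduct (p i) (p j) = -Rsq / n := by
    intro i j hij
    rw [hpair i j hij, hqR i, hqR j]
    field_simp
    nlinarith [hcR]
  have hR0 : 0 ≤ Rsq := (hqR 0) ▸ dot_self_nonneg' (p 0)
  rcases eq_or_lt_of_le hR0 with heq | hlt
  · exfalso
    set i0 : Fin (n+1) := ⟨0, by omega⟩
    set i1 : Fin (n+1) := ⟨1, by omega⟩
    have hne : i0 ≠ i1 := by simp [i0, i1, Fin.ext_iff]
    have hzero2 : dotProduct (p i0 - p i1) (p i0 - p i1) = 0 := by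
      rw [sub_dotProduct, dotProduct_sub, dotProduct_sub,
        dotProduct_comm (p i1) (p i0)]
      have e1 : dotProduct (p i0) (p i0) = q i0 := rfl
      have e2 : dotProduct (p i1) (p i1) = q i1 := rfl
      rw [e1, e2, hqR i0, hqR i1, hoff i0 i1 hne, ← heq]
      ring
    have := sub_eq_zero.1 (dot_self_eq_zero' hzero2)
    exact hne (hind.injective this)
  · exact ⟨Rsq, hlt, hqR, hoff⟩

end Aux

set_option maxHeartbeats 4000000

theorem stmt15 {n : ℕ} (hn : 0 < n) (lam mu : ℝ) (hmu : 0 ≤ mu) (hlammu : mu ≤ lam)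
    (hpos : 0 < lam + mu)
    (p : Fin (n + 1) → (Fin n → ℝ)) (hind : AffineIndependent ℝ p)
    (hsum : ∑ i, p i = 0)
    (hreg : ∃ c : ℝ, ∀ i j : Fin (n + 1), i ≠ j →
      dotProduct (p i - p j) (p i - p j) = c)
    (S C : Set (Fin n → ℝ)) (hS : S = convexHull ℝ (Set.range p))
    (hC : C = lam • S + mu • (-S)) :
    circR S C = (lam + mu / n)⁻¹ ∧
    inrad S C = (lam + n * mu)⁻¹ ∧
    circR (-S) C = (lam / n + mu)⁻¹ ∧
    inrad (-S) C = (n * lam + mu)⁻¹ ∧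
    diamC S C = 2 / (lam + mu) ∧
    asym C = (n * lam + mu) / (lam + n * mu) := by
  obtain ⟨Rsq, hRpos, hR, hoff⟩ := simplex_dots hn p hind hsum hreg
  have hN : (0:ℝ) < (n:ℝ) := by exact_mod_cast hn
  have hNne : ((n:ℝ)) ≠ 0 := ne_of_gt hN
  have hlam : 0 < lam := by linarith
  have hlam0 : 0 ≤ lam := hlam.le
  set i0 : Fin (n+1) := ⟨0, by omega⟩ with hi0
  set i1 : Fin (n+1) := ⟨1, by omega⟩ with hi1
  have hne01 : i0 ≠ i1 := by simp [i0, i1, Fin.ext_iff]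
  set σ : Fin (n+1) → Fin (n+1) := fun i => if i = i0 then i1 else i0 with hσdef
  have hσ : ∀ i, σ i ≠ i := by
    intro i
    by_cases h : i = i0
    · simp [hσdef, h]; exact fun hh => hne01 hh.symm
    · simp [hσdef, h]; exact fun hh => h hh.symm
  have hSconv : Convex ℝ S := hS ▸ convex_convexHull ℝ _
  have hmemS : ∀ i, p i ∈ S := fun i => hS ▸ subset_convexHull ℝ _ ⟨i, rfl⟩
  have hCconv : Convex ℝ C := hC ▸ ((hSconv.smul lam).add (hSconv.neg.smul mu))
  -- halfspace lemma
  have hhalf : ∀ (a : Fin n → ℝ) (r : ℝ), (∀ i, dotProduct a (p i) ≤ r) →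
      ∀ x ∈ S, dotProduct a x ≤ r := by
    intro a r h x hx
    rw [hS] at hx
    have hlin : IsLinearMap ℝ (fun y : Fin n → ℝ => dotProduct a y) :=
      ⟨fun u v => dotProduct_add a u v, fun c u => dotProduct_smul c a u⟩
    exact convexHull_min (by rintro y ⟨i, rfl⟩; exact h i) (convex_halfSpace_le hlin r) hx
  -- dot product bounds
  have dSS : ∀ i, ∀ x ∈ S, dotProduct (p i) x ≤ Rsq := by
    intro i
    apply hhalf
    intro j
    rcases eq_or_ne i j with rfl | hij
    · rw [hR i]
    · rw [hoff i j hij, neg_div]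
      have := div_pos hRpos hN
      linarith
  have dSn : ∀ i, ∀ x ∈ S, dotProduct (-(p i)) x ≤ Rsq / n := by
    intro i
    apply hhalf
    intro j
    rw [neg_dotProduct]
    rcases eq_or_ne i j with rfl | hij
    · rw [hR i]
      have := div_pos hRpos hN
      linarith
    · rw [hoff i j hij, neg_div, neg_neg]
  have dTS : ∀ i, ∀ x ∈ -S, dotProduct (p i) x ≤ Rsq / n := by
    intro i x hx
    have hx' : -x ∈ S := Set.mem_neg.1 hx
    have := dSn i (-x) hx'
    rwa [neg_dotProduct, dotProduct_neg, neg_neg] at this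
  have dTn : ∀ i, ∀ x ∈ -S, dotProduct (-(p i)) x ≤ Rsq := by
    intro i x hx
    have hx' : -x ∈ S := Set.mem_neg.1 hx
    have := dSS i (-x) hx'
    rw [dotProduct_neg] at this
    rw [neg_dotProduct]
    linarith
  have dDiffS : ∀ i j, i ≠ j → ∀ x ∈ S, dotProduct (p i - p j) x ≤ Rsq + Rsq / n := by
    intro i j hij
    apply hhalf
    intro k
    rw [sub_dotProduct]
    have hdiv := div_pos hRpos hN
    rcases eq_or_ne i k with rfl | hik
    · rw [hR i, hoff j i (Ne.symm hij), neg_div]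
      linarith
    · rcases eq_or_ne j k with rfl | hjk
      · rw [hR j, hoff i j hij, neg_div]
        linarith
      · rw [hoff i k hik, hoff j k hjk]
        linarith
  have dDiffT : ∀ i j, i ≠ j → ∀ x ∈ -S, dotProduct (p i - p j) x ≤ Rsq + Rsq / n := by
    intro i j hij x hx
    have hx' : -x ∈ S := Set.mem_neg.1 hx
    have := dDiffS j i (Ne.symm hij) (-x) hx'
    rw [sub_dotProduct, dotProduct_neg, dotProduct_neg] at this
    rw [sub_dotProduct]
    linarith
  -- bound over C
  have hCb : ∀ (a : Fin n → ℝ) (rS rT : ℝ), (∀ x ∈ S, dotProduct a x ≤ rS) →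
      (∀ w ∈ -S, dotProduct a w ≤ rT) →
      ∀ c ∈ C, dotProduct a c ≤ lam * rS + mu * rT := by
    intro a rS rT h1 h2 c hc
    rw [hC] at hc
    obtain ⟨u', hu', w', hw', rfl⟩ := Set.mem_add.1 hc
    obtain ⟨u, hu, rfl⟩ := Set.mem_smul_set.1 hu'
    obtain ⟨w, hw, rfl⟩ := Set.mem_smul_set.1 hw'
    rw [dotProduct_add, dot_smul_right', dot_smul_right']
    have e1 := mul_le_mul_of_nonneg_left (h1 u hu) hlam0
    have e2 := mul_le_mul_of_nonneg_left (h2 w hw) hmu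
    linarith
  -- key containment
  have hGS : ((n:ℝ))⁻¹ • S ⊆ -S := by
    rw [hS, ← convexHull_smul]
    apply convexHull_min _ ((convex_convexHull ℝ _).neg)
    rintro y ⟨z, ⟨i, rfl⟩, rfl⟩
    rw [Set.mem_neg]
    have hcm : (Finset.univ.erase i).centerMass (fun _ => (1:ℝ)) p ∈
        convexHull ℝ (Set.range p) := by
      apply Finset.centerMass_mem_convexHull _ (fun _ _ => zero_le_one)
      · rw [Finset.sum_const, Finset.card_erase_of_mem (Finset.mem_univ i)]
        simp only [Finset.card_univ, Fintype.card_fin, Nat.add_sub_cancel, nsmul_eq_mul, mul_one]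
        exact hN
      · exact fun j _ => ⟨j, rfl⟩
    have hcmeq : (Finset.univ.erase i).centerMass (fun _ => (1:ℝ)) p = -((n:ℝ)⁻¹ • p i) := by
      rw [Finset.centerMass]
      simp only [one_smul, Finset.sum_const, Finset.card_erase_of_mem (Finset.mem_univ i),
        Finset.card_univ, Fintype.card_fin, Nat.add_sub_cancel, nsmul_eq_mul, mul_one]
      rw [Finset.sum_erase_eq_sub (Finset.mem_univ i), hsum, zero_sub, smul_neg]
    rwa [hcmeq] at hcm
  have hGT : ((n:ℝ))⁻¹ • (-S) ⊆ S := by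
    intro x hx
    rw [Set.smul_set_neg] at hx
    have hx' : -x ∈ (n:ℝ)⁻¹ • S := by
      rw [Set.mem_neg] at hx
      simpa using hx
    have := hGS hx'
    rw [Set.mem_neg, neg_neg] at this
    exact this
  have hCsmul : ∀ ρ : ℝ, ρ • C = (ρ*lam) • S + (ρ*mu) • (-S) := by
    intro ρ
    rw [hC, smul_add, smul_smul, smul_smul]
  have hnegC : -C = lam • (-S) + mu • S := by
    rw [hC, neg_set_add, ← Set.smul_set_neg, ← Set.smul_set_neg, neg_neg]
  have hconst : ∀ r : ℝ, (∑ _i : Fin (n+1), r) = ((n:ℝ)+1) * r := by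
    intro r
    rw [Finset.sum_const, Finset.card_univ, Fintype.card_fin, nsmul_eq_mul]
    push_cast
    ring
  -- denominators
  have hd1 : 0 < lam + mu / n := by
    have : 0 ≤ mu / n := div_nonneg hmu hN.le
    linarith
  have hd2 : 0 < lam + n * mu := by nlinarith
  have hd3 : 0 < lam / n + mu := by
    have : 0 < lam / n := div_pos hlam hN
    linarith
  have hd4 : 0 < n * lam + mu := by nlinarith
  -- M1 : S ⊆ (lam + mu/n)⁻¹ • C
  have M1 : S ⊆ (lam + mu / n)⁻¹ • C := by
    set ρ : ℝ := (lam + mu / n)⁻¹ with hρdef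
    have hρ0 : 0 < ρ := inv_pos.2 hd1
    have h2 : (ρ*mu*(n:ℝ)⁻¹) • S ⊆ (ρ*mu) • (-S) := by
      rw [← smul_smul]
      exact Set.smul_set_mono hGS
    have h4 : ρ*lam + ρ*mu*(n:ℝ)⁻¹ = 1 := by
      rw [hρdef]
      field_simp
    calc S = ((ρ*lam) + ρ*mu*(n:ℝ)⁻¹) • S := by rw [h4, one_smul]
      _ = (ρ*lam) • S + (ρ*mu*(n:ℝ)⁻¹) • S := hSconv.add_smul (by positivity) (by positivity)
      _ ⊆ (ρ*lam) • S + (ρ*mu) • (-S) := Set.add_subset_add_left h2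
      _ = ρ • C := (hCsmul ρ).symm
  -- M2 : (lam + n*mu)⁻¹ • C ⊆ S
  have M2 : (lam + (n:ℝ) * mu)⁻¹ • C ⊆ S := by
    set ρ : ℝ := (lam + (n:ℝ)*mu)⁻¹ with hρdef
    have hρ0 : 0 < ρ := inv_pos.2 hd2
    have h2 : (ρ*mu) • (-S) ⊆ (ρ*mu*(n:ℝ)) • S := by
      have he : (ρ*mu) • (-S) = (ρ*mu*(n:ℝ)) • ((n:ℝ)⁻¹ • (-S)) := by
        rw [smul_smul, mul_assoc, mul_inv_cancel₀ hNne, mul_one]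
      rw [he]
      exact Set.smul_set_mono hGT
    have h4 : ρ*lam + ρ*mu*(n:ℝ) = 1 := by
      rw [hρdef]
      field_simp
    calc ρ • C = (ρ*lam) • S + (ρ*mu) • (-S) := hCsmul ρ
      _ ⊆ (ρ*lam) • S + (ρ*mu*(n:ℝ)) • S := Set.add_subset_add_left h2
      _ = ((ρ*lam) + ρ*mu*(n:ℝ)) • S := (hSconv.add_smul (by positivity) (by positivity)).symm
      _ = S := by rw [h4, one_smul]
  -- M3 : -S ⊆ (lam/n + mu)⁻¹ • C
  have M3 : -S ⊆ (lam / n + mu)⁻¹ • C := by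
    set ρ : ℝ := (lam / n + mu)⁻¹ with hρdef
    have hρ0 : 0 < ρ := inv_pos.2 hd3
    have h2 : (ρ*lam*(n:ℝ)⁻¹) • (-S) ⊆ (ρ*lam) • S := by
      rw [← smul_smul]
      exact Set.smul_set_mono hGT
    have h4 : ρ*lam*(n:ℝ)⁻¹ + ρ*mu = 1 := by
      rw [hρdef]
      field_simp
    calc -S = ((ρ*lam*(n:ℝ)⁻¹) + ρ*mu) • (-S) := by rw [h4, one_smul]
      _ = (ρ*lam*(n:ℝ)⁻¹) • (-S) + (ρ*mu) • (-S) :=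
          hSconv.neg.add_smul (by positivity) (by positivity)
      _ ⊆ (ρ*lam) • S + (ρ*mu) • (-S) := Set.add_subset_add_right h2
      _ = ρ • C := (hCsmul ρ).symm
  -- M4 : (n*lam + mu)⁻¹ • C ⊆ -S
  have M4 : ((n:ℝ) * lam + mu)⁻¹ • C ⊆ -S := by
    set ρ : ℝ := ((n:ℝ)*lam + mu)⁻¹ with hρdef
    have hρ0 : 0 < ρ := inv_pos.2 hd4
    have h2 : (ρ*lam) • S ⊆ (ρ*lam*(n:ℝ)) • (-S) := by
      have he : (ρ*lam) • S = (ρ*lam*(n:ℝ)) • ((n:ℝ)⁻¹ • S) := by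
        rw [smul_smul, mul_assoc, mul_inv_cancel₀ hNne, mul_one]
      rw [he]
      exact Set.smul_set_mono hGS
    have h4 : ρ*lam*(n:ℝ) + ρ*mu = 1 := by
      rw [hρdef]
      field_simp
    calc ρ • C = (ρ*lam) • S + (ρ*mu) • (-S) := hCsmul ρ
      _ ⊆ (ρ*lam*(n:ℝ)) • (-S) + (ρ*mu) • (-S) := Set.add_subset_add_right h2
      _ = ((ρ*lam*(n:ℝ)) + ρ*mu) • (-S) := (hSconv.neg.add_smul (by positivity) (by positivity)).symm
      _ = -S := by rw [h4, one_smul]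
  -- M5 : segments
  have M5 : ∀ x ∈ S, ∀ y ∈ S,
      segment ℝ x y ⊆ (((lam+mu)⁻¹*mu) • (x+y)) +ᵥ (lam+mu)⁻¹ • C := by
    intro x hx y hy
    set ρ : ℝ := (lam+mu)⁻¹ with hρdef
    set t : Fin n → ℝ := (ρ*mu) • (x+y) with htdef
    have hρsum : ρ*mu + ρ*lam = 1 := by
      rw [hρdef]
      field_simp
      ring
    have hconvT : Convex ℝ (t +ᵥ ρ • C) := (hCconv.smul ρ).vadd t
    have hxmem : x ∈ t +ᵥ ρ • C := by
      refine Set.mem_vadd_set.2 ⟨(ρ*lam) • x + (ρ*mu) • (-y), ?_, ?_⟩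
      · rw [hCsmul ρ]
        exact Set.add_mem_add (Set.smul_mem_smul_set hx)
          (Set.smul_mem_smul_set (Set.neg_mem_neg.2 hy))
      · show t + ((ρ*lam) • x + (ρ*mu) • (-y)) = x
        have : (ρ*mu) • (x+y) + ((ρ*lam) • x + (ρ*mu) • (-y)) = (ρ*mu + ρ*lam) • x := by
          module
        rw [htdef, this, hρsum, one_smul]
    have hymem : y ∈ t +ᵥ ρ • C := by
      refine Set.mem_vadd_set.2 ⟨(ρ*lam) • y + (ρ*mu) • (-x), ?_, ?_⟩
      · rw [hCsmul ρ]
        exact Set.add_mem_add (Set.smul_mem_smul_set hy)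
          (Set.smul_mem_smul_set (Set.neg_mem_neg.2 hx))
      · show t + ((ρ*lam) • y + (ρ*mu) • (-x)) = y
        have : (ρ*mu) • (x+y) + ((ρ*lam) • y + (ρ*mu) • (-x)) = (ρ*mu + ρ*lam) • y := by
          module
        rw [htdef, this, hρsum, one_smul]
    exact hconvT.segment_subset hxmem hymem
  -- M6 : -C ⊆ ρ₅ • C
  have hd5 : 0 < ((n:ℝ)*lam + mu) / (lam + (n:ℝ)*mu) := div_pos hd4 hd2
  have M6 : -C ⊆ (((n:ℝ)*lam + mu) / (lam + (n:ℝ)*mu)) • C := by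
    set ρ : ℝ := ((n:ℝ)*lam + mu) / (lam + (n:ℝ)*mu) with hρdef
    have hkey : 0 ≤ lam - ρ*mu := by
      have h1 : ρ*mu ≤ lam := by
        rw [hρdef, div_mul_eq_mul_div, div_le_iff₀ hd2]
        nlinarith
      linarith
    have hdecomp : lam • (-S) = (ρ*mu) • (-S) + (lam - ρ*mu) • (-S) := by
      have h := hSconv.neg.add_smul (mul_nonneg hd5.le hmu) hkey
      rw [show ρ*mu + (lam - ρ*mu) = lam by ring] at h
      exact h
    have hss : (lam - ρ*mu) • (-S) ⊆ ((lam - ρ*mu)*(n:ℝ)) • S := by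
      have he : (lam - ρ*mu) • (-S) = ((lam - ρ*mu)*(n:ℝ)) • ((n:ℝ)⁻¹ • (-S)) := by
        rw [smul_smul, mul_assoc, mul_inv_cancel₀ hNne, mul_one]
      rw [he]
      exact Set.smul_set_mono hGT
    have hcoef : (lam - ρ*mu)*(n:ℝ) + mu = ρ*lam := by
      rw [hρdef]
      field_simp
      ring
    calc -C = lam • (-S) + mu • S := hnegC
      _ = ((ρ*mu) • (-S) + (lam - ρ*mu) • (-S)) + mu • S := by rw [← hdecomp]
      _ = (ρ*mu) • (-S) + ((lam - ρ*mu) • (-S) + mu • S) := add_assoc _ _ _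
      _ ⊆ (ρ*mu) • (-S) + (((lam - ρ*mu)*(n:ℝ)) • S + mu • S) :=
          Set.add_subset_add_left (Set.add_subset_add_right hss)
      _ = (ρ*mu) • (-S) + ((lam - ρ*mu)*(n:ℝ) + mu) • S := by
          rw [hSconv.add_smul (by positivity) hmu]
      _ = (ρ*mu) • (-S) + (ρ*lam) • S := by rw [hcoef]
      _ = (ρ*lam) • S + (ρ*mu) • (-S) := add_comm _ _
      _ = ρ • C := (hCsmul ρ).symm
  refine ⟨?_, ?_, ?_, ?_, ?_, ?_⟩
  · -- circR S C
    show sInf {ρ : ℝ | 0 < ρ ∧ ∃ t : Fin n → ℝ, S ⊆ t +ᵥ ρ • C} = (lam + mu / n)⁻¹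
    have mem : (lam + mu/(n:ℝ))⁻¹ ∈ {ρ : ℝ | 0 < ρ ∧ ∃ t : Fin n → ℝ, S ⊆ t +ᵥ ρ • C} :=
      ⟨inv_pos.2 hd1, 0, by rw [zero_vadd]; exact M1⟩
    have lb : ∀ ρ ∈ {ρ : ℝ | 0 < ρ ∧ ∃ t : Fin n → ℝ, S ⊆ t +ᵥ ρ • C},
        (lam + mu/(n:ℝ))⁻¹ ≤ ρ := by
      rintro ρ ⟨hρ, t, hsub⟩
      have key := circ_lower p p (fun _ => lam * Rsq + mu * (Rsq / (n:ℝ))) hsum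
        (fun i => hCb (p i) Rsq (Rsq/(n:ℝ)) (dSS i) (dTS i)) hmemS hρ.le hsub
      rw [show (∑ i, dotProduct (p i) (p i)) = ((n:ℝ)+1) * Rsq from by
          rw [Finset.sum_congr rfl fun i _ => hR i, hconst], hconst] at key
      have hX : 0 < ((n:ℝ)+1) * Rsq := by positivity
      have e : ρ * (((n:ℝ)+1) * (lam*Rsq + mu*(Rsq/(n:ℝ))))
          = (ρ*(lam + mu/(n:ℝ))) * (((n:ℝ)+1)*Rsq) := by
        field_simp
      rw [e] at key
      have h1 : 1 ≤ ρ * (lam + mu/(n:ℝ)) := (le_mul_iff_one_le_left hX).1 key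
      rw [inv_eq_one_div, div_le_iff₀ hd1]
      linarith
    exact le_antisymm (csInf_le ⟨0, fun r hr => hr.1.le⟩ mem) (le_csInf ⟨_, mem⟩ lb)
  · -- inrad S C
    show sSup {ρ : ℝ | 0 ≤ ρ ∧ ∃ t : Fin n → ℝ, t +ᵥ ρ • C ⊆ S} = (lam + n * mu)⁻¹
    have mem : (lam + (n:ℝ)*mu)⁻¹ ∈ {ρ : ℝ | 0 ≤ ρ ∧ ∃ t : Fin n → ℝ, t +ᵥ ρ • C ⊆ S} :=
      ⟨(inv_pos.2 hd2).le, 0, by rw [zero_vadd]; exact M2⟩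
    have ub : ∀ ρ ∈ {ρ : ℝ | 0 ≤ ρ ∧ ∃ t : Fin n → ℝ, t +ᵥ ρ • C ⊆ S},
        ρ ≤ (lam + (n:ℝ)*mu)⁻¹ := by
      rintro ρ ⟨hρ0, t, hsub⟩
      have key := in_upper (fun i => -(p i)) (fun i => lam • p (σ i) + mu • (-(p i)))
        (fun _ => Rsq/(n:ℝ))
        (by rw [Finset.sum_neg_distrib, hsum, neg_zero])
        (fun i => by
          rw [hC]
          exact Set.add_mem_add (Set.smul_mem_smul_set (hmemS (σ i)))
            (Set.smul_mem_smul_set (Set.neg_mem_neg.2 (hmemS i))))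
        (fun i => dSn i) hsub
      have hterm : ∀ i, dotProduct (-(p i)) (lam • p (σ i) + mu • (-(p i)))
          = lam * (Rsq/(n:ℝ)) + mu * Rsq := by
        intro i
        rw [neg_dotProduct, dotProduct_add, dot_smul_right', dot_smul_right',
          dotProduct_neg, hoff i (σ i) (Ne.symm (hσ i)), hR i]
        ring
      rw [show (∑ i, dotProduct (-(p i)) (lam • p (σ i) + mu • (-(p i))))
            = ((n:ℝ)+1) * (lam*(Rsq/(n:ℝ)) + mu*Rsq) from by
          rw [Finset.sum_congr rfl fun i _ => hterm i, hconst], hconst] at key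
      have hX : 0 < ((n:ℝ)+1) * (Rsq/(n:ℝ)) := by positivity
      have e : ρ * (((n:ℝ)+1)*(lam*(Rsq/(n:ℝ)) + mu*Rsq))
          = (ρ*(lam + (n:ℝ)*mu)) * (((n:ℝ)+1)*(Rsq/(n:ℝ))) := by
        field_simp
      rw [e] at key
      have h1 : ρ * (lam + (n:ℝ)*mu) ≤ 1 := (mul_le_iff_le_one_left hX).1 key
      rw [inv_eq_one_div, le_div_iff₀ hd2]
      linarith
    exact le_antisymm (csSup_le ⟨_, mem⟩ ub) (le_csSup ⟨_, fun z hz => ub z hz⟩ mem)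
  · -- circR (-S) C
    show sInf {ρ : ℝ | 0 < ρ ∧ ∃ t : Fin n → ℝ, -S ⊆ t +ᵥ ρ • C} = (lam / n + mu)⁻¹
    have mem : (lam/(n:ℝ) + mu)⁻¹ ∈ {ρ : ℝ | 0 < ρ ∧ ∃ t : Fin n → ℝ, -S ⊆ t +ᵥ ρ • C} :=
      ⟨inv_pos.2 hd3, 0, by rw [zero_vadd]; exact M3⟩
    have lb : ∀ ρ ∈ {ρ : ℝ | 0 < ρ ∧ ∃ t : Fin n → ℝ, -S ⊆ t +ᵥ ρ • C},
        (lam/(n:ℝ) + mu)⁻¹ ≤ ρ := by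
      rintro ρ ⟨hρ, t, hsub⟩
      have key := circ_lower (fun i => -(p i)) (fun i => -(p i))
        (fun _ => lam * (Rsq/(n:ℝ)) + mu * Rsq)
        (by rw [Finset.sum_neg_distrib, hsum, neg_zero])
        (fun i => hCb (-(p i)) (Rsq/(n:ℝ)) Rsq (dSn i) (dTn i))
        (fun i => Set.neg_mem_neg.2 (hmemS i)) hρ.le hsub
      have hterm : ∀ i, dotProduct (-(p i)) (-(p i)) = Rsq := by
        intro i
        rw [neg_dotProduct, dotProduct_neg, neg_neg, hR i]
      rw [show (∑ i, dotProduct (-(p i)) (-(p i))) = ((n:ℝ)+1) * Rsq from by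
          rw [Finset.sum_congr rfl fun i _ => hterm i, hconst], hconst] at key
      have hX : 0 < ((n:ℝ)+1) * Rsq := by positivity
      have e : ρ * (((n:ℝ)+1) * (lam*(Rsq/(n:ℝ)) + mu*Rsq))
          = (ρ*(lam/(n:ℝ) + mu)) * (((n:ℝ)+1)*Rsq) := by
        field_simp
      rw [e] at key
      have h1 : 1 ≤ ρ * (lam/(n:ℝ) + mu) := (le_mul_iff_one_le_left hX).1 key
      rw [inv_eq_one_div, div_le_iff₀ hd3]
      linarith
    exact le_antisymm (csInf_le ⟨0, fun r hr => hr.1.le⟩ mem) (le_csInf ⟨_, mem⟩ lb)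
  · -- inrad (-S) C
    show sSup {ρ : ℝ | 0 ≤ ρ ∧ ∃ t : Fin n → ℝ, t +ᵥ ρ • C ⊆ -S} = (n * lam + mu)⁻¹
    have mem : ((n:ℝ)*lam + mu)⁻¹ ∈ {ρ : ℝ | 0 ≤ ρ ∧ ∃ t : Fin n → ℝ, t +ᵥ ρ • C ⊆ -S} :=
      ⟨(inv_pos.2 hd4).le, 0, by rw [zero_vadd]; exact M4⟩
    have ub : ∀ ρ ∈ {ρ : ℝ | 0 ≤ ρ ∧ ∃ t : Fin n → ℝ, t +ᵥ ρ • C ⊆ -S},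
        ρ ≤ ((n:ℝ)*lam + mu)⁻¹ := by
      rintro ρ ⟨hρ0, t, hsub⟩
      have key := in_upper (fun i => p i) (fun i => lam • p i + mu • (-(p (σ i))))
        (fun _ => Rsq/(n:ℝ)) hsum
        (fun i => by
          rw [hC]
          exact Set.add_mem_add (Set.smul_mem_smul_set (hmemS i))
            (Set.smul_mem_smul_set (Set.neg_mem_neg.2 (hmemS (σ i)))))
        (fun i => dTS i) hsub
      have hterm : ∀ i, dotProduct (p i) (lam • p i + mu • (-(p (σ i))))
          = lam * Rsq + mu * (Rsq/(n:ℝ)) := by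
        intro i
        rw [dotProduct_add, dot_smul_right', dot_smul_right', dotProduct_neg,
          hoff i (σ i) (Ne.symm (hσ i)), hR i]
        ring
      rw [show (∑ i, dotProduct (p i) (lam • p i + mu • (-(p (σ i)))))
            = ((n:ℝ)+1) * (lam*Rsq + mu*(Rsq/(n:ℝ))) from by
          rw [Finset.sum_congr rfl fun i _ => hterm i, hconst], hconst] at key
      have hX : 0 < ((n:ℝ)+1) * (Rsq/(n:ℝ)) := by positivity
      have e : ρ * (((n:ℝ)+1)*(lam*Rsq + mu*(Rsq/(n:ℝ))))
          = (ρ*((n:ℝ)*lam + mu)) * (((n:ℝ)+1)*(Rsq/(n:ℝ))) := by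
        field_simp
      rw [e] at key
      have h1 : ρ * ((n:ℝ)*lam + mu) ≤ 1 := (mul_le_iff_le_one_left hX).1 key
      rw [inv_eq_one_div, le_div_iff₀ hd4]
      linarith
    exact le_antisymm (csSup_le ⟨_, mem⟩ ub) (le_csSup ⟨_, fun z hz => ub z hz⟩ mem)
  · -- diamC S C
    have hsegup : ∀ x ∈ S, ∀ y ∈ S, circR (segment ℝ x y) C ≤ (lam+mu)⁻¹ := by
      intro x hx y hy
      exact csInf_le ⟨0, fun r hr => hr.1.le⟩ ⟨inv_pos.2 hpos, _, M5 x hx y hy⟩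
    have memseg : (lam+mu)⁻¹ ∈ {ρ : ℝ | 0 < ρ ∧ ∃ t : Fin n → ℝ,
        segment ℝ (p i0) (p i1) ⊆ t +ᵥ ρ • C} :=
      ⟨inv_pos.2 hpos, _, M5 _ (hmemS i0) _ (hmemS i1)⟩
    have hseglo : (lam+mu)⁻¹ ≤ circR (segment ℝ (p i0) (p i1)) C := by
      show (lam+mu)⁻¹ ≤ sInf {ρ : ℝ | 0 < ρ ∧ ∃ t : Fin n → ℝ,
        segment ℝ (p i0) (p i1) ⊆ t +ᵥ ρ • C}
      apply le_csInf ⟨_, memseg⟩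
      rintro ρ ⟨hρ, t, hsub⟩
      have key := circ_lower (ι := Fin 2) ![p i0 - p i1, p i1 - p i0] ![p i0, p i1]
        (fun _ => lam*(Rsq + Rsq/(n:ℝ)) + mu*(Rsq + Rsq/(n:ℝ)))
        (by rw [Fin.sum_univ_two]; simp)
        (by
          intro i
          fin_cases i
          · exact hCb _ _ _ (dDiffS i0 i1 hne01) (dDiffT i0 i1 hne01)
          · exact hCb _ _ _ (dDiffS i1 i0 (Ne.symm hne01)) (dDiffT i1 i0 (Ne.symm hne01)))
        (by
          intro i
          fin_cases i
          · exact left_mem_segment ℝ _ _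
          · exact right_mem_segment ℝ _ _)
        hρ.le hsub
      simp only [Fin.sum_univ_two, Matrix.cons_val_zero, Matrix.cons_val_one,
        Matrix.head_cons] at key
      have hterm0 : dotProduct (p i0 - p i1) (p i0) = Rsq + Rsq/(n:ℝ) := by
        rw [sub_dotProduct, hR i0, hoff i1 i0 (Ne.symm hne01)]
        ring
      have hterm1 : dotProduct (p i1 - p i0) (p i1) = Rsq + Rsq/(n:ℝ) := by
        rw [sub_dotProduct, hR i1, hoff i0 i1 hne01]
        ring
      rw [hterm0, hterm1] at key
      have hX : 0 < 2*(Rsq + Rsq/(n:ℝ)) := by positivity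
      have e : ρ * (lam*(Rsq + Rsq/(n:ℝ)) + mu*(Rsq + Rsq/(n:ℝ))
            + (lam*(Rsq + Rsq/(n:ℝ)) + mu*(Rsq + Rsq/(n:ℝ))))
          = (ρ*(lam+mu)) * (2*(Rsq + Rsq/(n:ℝ))) := by ring
      have e2 : Rsq + Rsq/(n:ℝ) + (Rsq + Rsq/(n:ℝ)) = 2*(Rsq + Rsq/(n:ℝ)) := by ring
      rw [e, e2] at key
      have h1 : 1 ≤ ρ * (lam + mu) := (le_mul_iff_one_le_left hX).1 key
      rw [inv_eq_one_div, div_le_iff₀ hpos]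
      linarith
    have hsegeq : circR (segment ℝ (p i0) (p i1)) C = (lam+mu)⁻¹ :=
      le_antisymm (hsegup _ (hmemS i0) _ (hmemS i1)) hseglo
    show sSup {d : ℝ | ∃ x ∈ S, ∃ y ∈ S, d = 2 * circR (segment ℝ x y) C} = 2 / (lam + mu)
    have memD : (2:ℝ)/(lam+mu) ∈ {d : ℝ | ∃ x ∈ S, ∃ y ∈ S, d = 2 * circR (segment ℝ x y) C} :=
      ⟨p i0, hmemS i0, p i1, hmemS i1, by rw [hsegeq, div_eq_mul_inv]⟩
    have ubD : ∀ d ∈ {d : ℝ | ∃ x ∈ S, ∃ y ∈ S, d = 2 * circR (segment ℝ x y) C},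
        d ≤ 2/(lam+mu) := by
      rintro d ⟨x, hx, y, hy, rfl⟩
      have := hsegup x hx y hy
      rw [div_eq_mul_inv]
      linarith
    exact le_antisymm (csSup_le ⟨_, memD⟩ ubD) (le_csSup ⟨_, fun z hz => ubD z hz⟩ memD)
  · -- asym C
    show sInf {ρ : ℝ | 0 < ρ ∧ ∃ t : Fin n → ℝ, -C ⊆ t +ᵥ ρ • C} = ((n:ℝ)*lam + mu)/(lam + (n:ℝ)*mu)
    have mem : ((n:ℝ)*lam + mu)/(lam + (n:ℝ)*mu)
        ∈ {ρ : ℝ | 0 < ρ ∧ ∃ t : Fin n → ℝ, -C ⊆ t +ᵥ ρ • C} :=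
      ⟨hd5, 0, by rw [zero_vadd]; exact M6⟩
    have lb : ∀ ρ ∈ {ρ : ℝ | 0 < ρ ∧ ∃ t : Fin n → ℝ, -C ⊆ t +ᵥ ρ • C},
        ((n:ℝ)*lam + mu)/(lam + (n:ℝ)*mu) ≤ ρ := by
      rintro ρ ⟨hρ, t, hsub⟩
      have key := circ_lower (fun i => -(p i)) (fun i => lam • (-(p i)) + mu • p (σ i))
        (fun _ => lam * (Rsq/(n:ℝ)) + mu * Rsq)
        (by rw [Finset.sum_neg_distrib, hsum, neg_zero])
        (fun i => hCb (-(p i)) (Rsq/(n:ℝ)) Rsq (dSn i) (dTn i))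
        (fun i => by
          rw [hnegC]
          exact Set.add_mem_add (Set.smul_mem_smul_set (Set.neg_mem_neg.2 (hmemS i)))
            (Set.smul_mem_smul_set (hmemS (σ i))))
        hρ.le hsub
      have hterm : ∀ i, dotProduct (-(p i)) (lam • (-(p i)) + mu • p (σ i))
          = lam * Rsq + mu * (Rsq/(n:ℝ)) := by
        intro i
        rw [neg_dotProduct, dotProduct_add, dot_smul_right', dot_smul_right',
          dotProduct_neg, hoff i (σ i) (Ne.symm (hσ i)), hR i]
        ring
      rw [show (∑ i, dotProduct (-(p i)) (lam • (-(p i)) + mu • p (σ i)))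
            = ((n:ℝ)+1) * (lam*Rsq + mu*(Rsq/(n:ℝ))) from by
          rw [Finset.sum_congr rfl fun i _ => hterm i, hconst], hconst] at key
      have hX : 0 < ((n:ℝ)+1) * (Rsq/(n:ℝ)) := by positivity
      have e1 : ((n:ℝ)+1) * (lam*Rsq + mu*(Rsq/(n:ℝ)))
          = ((n:ℝ)*lam + mu) * (((n:ℝ)+1)*(Rsq/(n:ℝ))) := by
        field_simp
      have e2 : ρ * (((n:ℝ)+1) * (lam*(Rsq/(n:ℝ)) + mu*Rsq))
          = (ρ*(lam + (n:ℝ)*mu)) * (((n:ℝ)+1)*(Rsq/(n:ℝ))) := by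
        field_simp
      rw [e1, e2] at key
      have h1 : (n:ℝ)*lam + mu ≤ ρ * (lam + (n:ℝ)*mu) := (mul_le_mul_iff_of_pos_right hX).1 key
      rw [div_le_iff₀ hd2]
      linarith
    exact le_antisymm (csInf_le ⟨0, fun r hr => hr.1.le⟩ mem) (le_csInf ⟨_, mem⟩ lb)
end

section
/- Let S be a Minkowski centered n-simplex in R^n, p ∈ (n+1)(S ∩ (−S)) \ (S−S), and C := conv({p} ∪ (S−S)). Then both S and −S are diametrically complete with respect to C. -/
open Pointwise

set_option maxHeartbeats 1000000 in
theorem stmt16 {n : ℕ} (S : Set (Fin n → ℝ)) (hS : IsSimplexBody S) (hSbody : IsBody S)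
    (hcent : -S ⊆ (n : ℝ) • S) (p : Fin n → ℝ)
    (hp : p ∈ ((n : ℝ) + 1) • (S ∩ -S) \ (S - S))
    (C : Set (Fin n → ℝ)) (hC : C = convexHull ℝ (insert p (S - S))) :
    IsDiamComplete S C ∧ IsDiamComplete (-S) C := by
  classical
  rcases Nat.eq_zero_or_pos n with hn0 | hn
  · exfalso
    subst hn0
    obtain ⟨x0, hx0⟩ := hSbody.2.2
    have hx0S : x0 ∈ S := interior_subset hx0
    have hpe : p = x0 - x0 := funext fun i => i.elim0
    exact hp.2 (hpe ▸ Set.sub_mem_sub hx0S hx0S)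
  obtain ⟨v, hvind, hSeq⟩ := hS
  have htop : affineSpan ℝ (Set.range v) = ⊤ := by
    rw [hvind.affineSpan_eq_top_iff_card_eq_finrank_add_one]
    simp [Module.finrank_fin_fun]
  let b : AffineBasis (Fin (n + 1)) ℝ (Fin n → ℝ) := ⟨v, hvind, htop⟩
  have hbv : ⇑b = v := rfl
  have hSmem : ∀ x, x ∈ S ↔ ∀ i, 0 ≤ b.coord i x := by
    intro x
    rw [hSeq, ← hbv, b.convexHull_eq_nonneg_coord]
    simp only [Set.mem_setOf_eq]
  set L : Fin (n + 1) → (Fin n → ℝ) →ₗ[ℝ] ℝ := fun i => (b.coord i).linear with hL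
  set c : Fin (n + 1) → ℝ := fun i => b.coord i 0 with hcdef
  have hlc : ∀ i x, b.coord i x = L i x + c i := by
    intro i x
    have h := (b.coord i).map_vadd 0 x
    simpa only [vadd_eq_add, add_zero] using h
  have hvS : ∀ i, v i ∈ S := fun i => hSeq ▸ subset_convexHull ℝ _ ⟨i, rfl⟩
  have hco_vertex : ∀ i j, b.coord i (v j) = if i = j then 1 else 0 := by
    intro i j
    rw [show v j = b j from rfl]
    exact b.coord_apply i j
  have hsumc : ∑ i, c i = 1 := b.sum_coord_apply_eq_one 0
  have hcoord_le_one : ∀ x ∈ S, ∀ i, b.coord i x ≤ 1 := by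
    intro x hx i
    have hs := b.sum_coord_apply_eq_one x
    have h1 : 0 ≤ ∑ j ∈ Finset.univ.erase i, b.coord j x :=
      Finset.sum_nonneg fun j _ => (hSmem x).1 hx j
    have hsplit : b.coord i x + ∑ j ∈ Finset.univ.erase i, b.coord j x = 1 := by
      rw [← hs]
      exact Finset.add_sum_erase Finset.univ (fun j => b.coord j x) (Finset.mem_univ i)
    linarith
  have hnR : (1 : ℝ) ≤ (n : ℝ) := by exact_mod_cast hn
  have hn1pos : (0 : ℝ) < (n : ℝ) + 1 := by linarith
  have hc_ge : ∀ i, 1 / ((n : ℝ) + 1) ≤ c i := by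
    intro i
    have hmem : -(v i) ∈ (n : ℝ) • S := hcent (by rw [Set.mem_neg, neg_neg]; exact hvS i)
    obtain ⟨s0, hs0S, hs0⟩ := Set.mem_smul_set.mp hmem
    have hne : (n : ℝ) ≠ 0 := by linarith
    have hs0' : s0 = (-(n : ℝ)⁻¹) • v i := by
      have h := congrArg (fun z => (n : ℝ)⁻¹ • z) hs0
      simp only [smul_smul, inv_mul_cancel₀ hne, one_smul] at h
      rw [h, neg_smul, smul_neg]
    have h0 : 0 ≤ b.coord i s0 := (hSmem s0).1 hs0S i
    rw [hs0', hlc, map_smul, smul_eq_mul] at h0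
    have hLvi : L i (v i) = 1 - c i := by
      have h2 := hlc i (v i)
      rw [hco_vertex i i, if_pos rfl] at h2
      linarith
    rw [hLvi] at h0
    rw [div_le_iff₀ hn1pos]
    have hexp : (n : ℝ) * (-(n : ℝ)⁻¹ * (1 - c i) + c i) = -(1 - c i) + (n : ℝ) * c i := by
      field_simp
    have h0n : 0 ≤ -(1 - c i) + (n : ℝ) * c i := by
      rw [← hexp]
      exact mul_nonneg (by linarith) h0
    linarith
  have hc : ∀ i, c i = 1 / ((n : ℝ) + 1) := by
    intro i
    have h1 : ∀ j ∈ Finset.univ.erase i, 1 / ((n : ℝ) + 1) ≤ c j := fun j _ => hc_ge j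
    have h2 := Finset.card_nsmul_le_sum (Finset.univ.erase i) c (1 / ((n : ℝ) + 1)) h1
    have hcard : (Finset.univ.erase i).card = n := by
      simp [Finset.card_erase_of_mem]
    rw [hcard, nsmul_eq_mul] at h2
    have hsplit : c i + ∑ j ∈ Finset.univ.erase i, c j = 1 := by
      rw [← hsumc]
      exact Finset.add_sum_erase Finset.univ c (Finset.mem_univ i)
    have heq : (n : ℝ) * (1 / ((n : ℝ) + 1)) = (n : ℝ) / ((n : ℝ) + 1) := by ring
    have heq2 : (1 : ℝ) - (n : ℝ) / ((n : ℝ) + 1) = 1 / ((n : ℝ) + 1) := by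
      field_simp
      ring
    have hle : c i ≤ 1 / ((n : ℝ) + 1) := by
      rw [← heq2]
      rw [heq] at h2
      linarith
    linarith [hc_ge i]
  have hCconv : Convex ℝ C := hC ▸ convex_convexHull ℝ _
  have hSSC : S - S ⊆ C := hC ▸ (Set.subset_insert _ _).trans (subset_convexHull ℝ _)
  obtain ⟨x0, hx0⟩ := hSbody.2.2
  have hx0S : x0 ∈ S := interior_subset hx0
  obtain ⟨δ, hδpos, hball⟩ : ∃ δ > 0, Metric.ball x0 δ ⊆ S := by
    rcases Metric.mem_nhds_iff.mp (mem_interior_iff_mem_nhds.mp hx0) with ⟨δ, hδ, hb⟩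
    exact ⟨δ, hδ, hb⟩
  have hballC : ∀ z : Fin n → ℝ, ‖z‖ < δ → z ∈ C := by
    intro z hz
    have h1 : z + x0 ∈ S := hball (by simpa [dist_eq_norm] using hz)
    have h2 : z = (z + x0) - x0 := by abel
    exact hSSC (h2 ▸ Set.sub_mem_sub h1 hx0S)
  have h0C : (0 : Fin n → ℝ) ∈ C := hballC 0 (by simpa using hδpos)
  have hLC : ∀ i, ∀ u ∈ C, |L i u| ≤ 1 := by
    intro i
    have hset : {u : Fin n → ℝ | |L i u| ≤ 1} = (L i) ⁻¹' (Set.Icc (-1) 1) := by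
      ext u; simp [abs_le]
    have hconvH : Convex ℝ {u : Fin n → ℝ | |L i u| ≤ 1} := by
      rw [hset]; exact (convex_Icc _ _).linear_preimage _
    have hgen : insert p (S - S) ⊆ {u : Fin n → ℝ | |L i u| ≤ 1} := by
      intro u hu
      rcases Set.mem_insert_iff.mp hu with rfl | hu
      · obtain ⟨w, hw, hwp⟩ := Set.mem_smul_set.mp hp.1
        have hw1 : w ∈ S := hw.1
        have hw2 : -w ∈ S := Set.mem_neg.mp hw.2
        have ha : 0 ≤ L i w + c i := by rw [← hlc]; exact (hSmem w).1 hw1 i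
        have hb2 : 0 ≤ -(L i w) + c i := by
          have h := (hSmem _).1 hw2 i
          rw [hlc, map_neg] at h
          linarith
        have hci := hc i
        have hLp : L i u = ((n : ℝ) + 1) * L i w := by
          rw [← hwp, map_smul, smul_eq_mul]
        simp only [Set.mem_setOf_eq, hLp, abs_mul, abs_of_pos hn1pos]
        have habs : |L i w| ≤ 1 / ((n : ℝ) + 1) := abs_le.mpr ⟨by linarith, by linarith⟩
        calc ((n : ℝ) + 1) * |L i w| ≤ ((n : ℝ) + 1) * (1 / ((n : ℝ) + 1)) := by
              exact mul_le_mul_of_nonneg_left habs (by linarith)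
          _ = 1 := by field_simp
      · obtain ⟨x, hx, y, hy, rfl⟩ := Set.mem_sub.mp hu
        have hLx : L i (x - y) = b.coord i x - b.coord i y := by
          rw [map_sub]
          have h1 := hlc i x; have h2 := hlc i y
          linarith
        simp only [Set.mem_setOf_eq, hLx]
        have h0x := (hSmem x).1 hx i; have h1x := hcoord_le_one x hx i
        have h0y := (hSmem y).1 hy i; have h1y := hcoord_le_one y hy i
        rw [abs_le]; constructor <;> linarith
    intro u hu
    exact convexHull_min hgen hconvH (hC ▸ hu)
  have hcirc : ∀ x y : Fin n → ℝ,
      circR (segment ℝ x y) C = sInf {ρ : ℝ | 0 < ρ ∧ x - y ∈ ρ • C - ρ • C} := by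
    intro x y
    unfold circR
    congr 1
    ext ρ
    constructor
    · rintro ⟨hρ, t, ht⟩
      refine ⟨hρ, ?_⟩
      obtain ⟨a, ha, hax⟩ := Set.mem_vadd_set.mp (ht (left_mem_segment ℝ x y))
      obtain ⟨a2, ha2, hay⟩ := Set.mem_vadd_set.mp (ht (right_mem_segment ℝ x y))
      have hxy : x - y = a - a2 := by
        rw [← hax, ← hay, vadd_eq_add, vadd_eq_add]; abel
      rw [hxy]
      exact Set.sub_mem_sub ha ha2
    · rintro ⟨hρ, hz⟩
      obtain ⟨a, ha, a2, ha2, hab⟩ := Set.mem_sub.mp hz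
      refine ⟨hρ, x - a, ?_⟩
      have hconv : Convex ℝ ((x - a) +ᵥ ρ • C) := (hCconv.smul ρ).vadd _
      have hxm : x ∈ (x - a) +ᵥ ρ • C := ⟨a, ha, by show (x - a) + a = x; abel⟩
      have hym : y ∈ (x - a) +ᵥ ρ • C := by
        refine ⟨a2, ha2, ?_⟩
        show (x - a) + a2 = y
        have h5 : a2 = a - (x - y) := by rw [← hab]; abel
        rw [h5]; abel
      exact hconv.segment_subset hxm hym
  have hfit : ∀ z : Fin n → ℝ, z ∈ (2 * (‖z‖ + 1) / δ) • C - (2 * (‖z‖ + 1) / δ) • C := by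
    intro z
    set ρ := 2 * (‖z‖ + 1) / δ with hρdef
    have hnz : (0 : ℝ) ≤ ‖z‖ := norm_nonneg z
    have hρpos : 0 < ρ := by positivity
    have h1 : ρ⁻¹ • z ∈ C := by
      apply hballC
      rw [norm_smul, Real.norm_eq_abs, abs_of_pos (by positivity)]
      have hcalc : ρ⁻¹ * ‖z‖ = δ * ‖z‖ / (2 * (‖z‖ + 1)) := by
        rw [hρdef]; field_simp
      rw [hcalc, div_lt_iff₀ (by positivity)]
      nlinarith
    refine ⟨ρ • (ρ⁻¹ • z), Set.smul_mem_smul_set h1, ρ • (0 : Fin n → ℝ),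
      Set.smul_mem_smul_set h0C, ?_⟩
    show ρ • ρ⁻¹ • z - ρ • 0 = z
    rw [smul_inv_smul₀ hρpos.ne', smul_zero, sub_zero]
  have hTne : ∀ x y : Fin n → ℝ, {ρ : ℝ | 0 < ρ ∧ x - y ∈ ρ • C - ρ • C}.Nonempty := by
    intro x y
    exact ⟨_, by positivity, hfit (x - y)⟩
  have hTbdd : ∀ x y : Fin n → ℝ, BddBelow {ρ : ℝ | 0 < ρ ∧ x - y ∈ ρ • C - ρ • C} :=
    fun x y => ⟨0, fun ρ hρ => hρ.1.le⟩
  have hLbound : ∀ (ρ : ℝ) (z : Fin n → ℝ), 0 < ρ → z ∈ ρ • C - ρ • C →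
      ∀ i, |L i z| ≤ 2 * ρ := by
    intro ρ z hρ hz i
    obtain ⟨a, ha, a2, ha2, hab⟩ := Set.mem_sub.mp hz
    obtain ⟨a', ha', rfl⟩ := Set.mem_smul_set.mp ha
    obtain ⟨b', hb', rfl⟩ := Set.mem_smul_set.mp ha2
    rw [← hab, map_sub, map_smul, map_smul, smul_eq_mul, smul_eq_mul, ← mul_sub, abs_mul,
      abs_of_pos hρ]
    have h1 := hLC i a' ha'
    have h2 := hLC i b' hb'
    have h3 : |L i a' - L i b'| ≤ |L i a'| + |L i b'| := abs_sub _ _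
    nlinarith
  have hcirc_le : ∀ x ∈ S, ∀ y ∈ S, circR (segment ℝ x y) C ≤ 1 / 2 := by
    intro x hx y hy
    rw [hcirc]
    apply csInf_le (hTbdd x y)
    refine ⟨by norm_num, (1 / 2 : ℝ) • (x - y),
      Set.smul_mem_smul_set (hSSC (Set.sub_mem_sub hx hy)), (1 / 2 : ℝ) • (y - x),
      Set.smul_mem_smul_set (hSSC (Set.sub_mem_sub hy hx)), ?_⟩
    funext k
    simp only [Pi.sub_apply, Pi.smul_apply, smul_eq_mul]
    ring
  have hcirc_ge : ∀ (x y : Fin n → ℝ) (i : Fin (n + 1)) (r : ℝ),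
      r ≤ |L i (x - y)| → r / 2 ≤ circR (segment ℝ x y) C := by
    intro x y i r hr
    rw [hcirc]
    apply le_csInf (hTne x y)
    rintro ρ ⟨hρ, hz⟩
    have := hLbound ρ (x - y) hρ hz i
    linarith
  have h01 : (0 : Fin (n + 1)) ≠ 1 := by
    intro h
    have h2 := congrArg Fin.val h
    rw [Fin.val_zero, Fin.val_one', Nat.mod_eq_of_lt (by omega : 1 < n + 1)] at h2
    exact one_ne_zero h2.symm
  have hbddS : BddAbove {d : ℝ | ∃ x ∈ S, ∃ y ∈ S, d = 2 * circR (segment ℝ x y) C} := by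
    refine ⟨1, ?_⟩
    rintro d ⟨x, hx, y, hy, rfl⟩
    have := hcirc_le x hx y hy
    linarith
  have hdiamS : diamC S C = 1 := by
    unfold diamC
    have hneS : {d : ℝ | ∃ x ∈ S, ∃ y ∈ S, d = 2 * circR (segment ℝ x y) C}.Nonempty :=
      ⟨2 * circR (segment ℝ (v 0) (v 0)) C, ⟨v 0, hvS 0, v 0, hvS 0, rfl⟩⟩
    apply le_antisymm
    · apply csSup_le hneS
      rintro d ⟨x, hx, y, hy, rfl⟩
      have := hcirc_le x hx y hy
      linarith
    · have hLval : L 0 (v 0 - v 1) = 1 := by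
        rw [map_sub]
        have h1 := hlc 0 (v 0); have h2 := hlc 0 (v 1)
        rw [hco_vertex 0 0, if_pos rfl] at h1
        rw [hco_vertex 0 1, if_neg h01] at h2
        linarith
      have hL1 : (1 : ℝ) ≤ |L 0 (v 0 - v 1)| := by rw [hLval]; simp
      have hge := hcirc_ge (v 0) (v 1) 0 1 hL1
      have hmem : 2 * circR (segment ℝ (v 0) (v 1)) C ∈
          {d : ℝ | ∃ x ∈ S, ∃ y ∈ S, d = 2 * circR (segment ℝ x y) C} :=
        ⟨v 0, hvS 0, v 1, hvS 1, rfl⟩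
      calc (1 : ℝ) ≤ 2 * circR (segment ℝ (v 0) (v 1)) C := by linarith
        _ ≤ _ := le_csSup hbddS hmem
  have hKey : ∀ K' : Set (Fin n → ℝ), IsBody K' → S ⊂ K' → 1 < diamC K' C := by
    intro K' hK' hsub
    obtain ⟨q, hqK', hqS⟩ := Set.exists_of_ssubset hsub
    obtain ⟨j, hj⟩ : ∃ j, b.coord j q < 0 := by
      by_contra h
      push_neg at h
      exact hqS ((hSmem q).2 fun i => h i)
    have hLqj : L j (q - v j) = b.coord j q - 1 := by
      rw [map_sub]
      have h1 := hlc j q; have h2 := hlc j (v j)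
      rw [hco_vertex j j, if_pos rfl] at h2
      linarith
    have habs : 1 - b.coord j q ≤ |L j (q - v j)| := by
      rw [hLqj, abs_of_neg (by linarith)]
      linarith
    have hge := hcirc_ge q (v j) j (1 - b.coord j q) habs
    obtain ⟨Rb, hRb⟩ : ∃ R : ℝ, ∀ x ∈ K', ‖x‖ ≤ R := by
      obtain ⟨R, hR⟩ := hK'.2.1.isBounded.subset_closedBall 0
      exact ⟨R, fun x hx => by simpa using hR hx⟩
    have hRb0 : 0 ≤ Rb := le_trans (norm_nonneg _) (hRb _ (hsub.subset (hvS 0)))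
    have hballfit : ∀ x y : Fin n → ℝ, circR (segment ℝ x y) C ≤ 2 * (‖x - y‖ + 1) / δ := by
      intro x y
      rw [hcirc]
      exact csInf_le (hTbdd x y) ⟨by positivity, hfit (x - y)⟩
    have hbddA : BddAbove {d : ℝ | ∃ x ∈ K', ∃ y ∈ K', d = 2 * circR (segment ℝ x y) C} := by
      refine ⟨2 * (2 * (2 * Rb + 1) / δ), ?_⟩
      rintro d ⟨x, hx, y, hy, rfl⟩
      have h1 := hballfit x y
      have h2 : ‖x - y‖ ≤ 2 * Rb := le_trans (norm_sub_le x y)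
        (by linarith [hRb x hx, hRb y hy])
      have h3 : 2 * (‖x - y‖ + 1) / δ ≤ 2 * (2 * Rb + 1) / δ := by
        gcongr
      linarith
    have hmem : 2 * circR (segment ℝ q (v j)) C ∈
        {d : ℝ | ∃ x ∈ K', ∃ y ∈ K', d = 2 * circR (segment ℝ x y) C} :=
      ⟨q, hqK', v j, hsub.subset (hvS j), rfl⟩
    have hfin : 2 * circR (segment ℝ q (v j)) C ≤ diamC K' C := by
      unfold diamC
      exact le_csSup hbddA hmem
    calc (1 : ℝ) < 1 - b.coord j q := by linarith
      _ ≤ 2 * circR (segment ℝ q (v j)) C := by linarith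
      _ ≤ diamC K' C := hfin
  have hneg_circ : ∀ x y : Fin n → ℝ,
      circR (segment ℝ (-x) (-y)) C = circR (segment ℝ x y) C := by
    intro x y
    rw [hcirc, hcirc]
    congr 1
    ext ρ
    have hswap : ∀ z : Fin n → ℝ, z ∈ ρ • C - ρ • C → -z ∈ ρ • C - ρ • C := by
      intro z hz
      obtain ⟨a, ha, a2, ha2, hab⟩ := Set.mem_sub.mp hz
      exact ⟨a2, ha2, a, ha, by rw [← hab]; abel⟩
    have hd : -x - -y = -(x - y) := by abel
    rw [hd]
    constructor
    · rintro ⟨h1, h2⟩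
      refine ⟨h1, ?_⟩
      have := hswap _ h2
      simpa using this
    · rintro ⟨h1, h2⟩
      exact ⟨h1, hswap _ h2⟩
  have hdiam_neg : ∀ K : Set (Fin n → ℝ), diamC (-K) C = diamC K C := by
    intro K
    unfold diamC
    congr 1
    ext d
    constructor
    · rintro ⟨x, hx, y, hy, rfl⟩
      refine ⟨-x, Set.mem_neg.mp hx, -y, Set.mem_neg.mp hy, ?_⟩
      rw [hneg_circ]
    · rintro ⟨x, hx, y, hy, rfl⟩
      refine ⟨-x, ?_, -y, ?_, ?_⟩
      · rw [Set.mem_neg, neg_neg]; exact hx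
      · rw [Set.mem_neg, neg_neg]; exact hy
      · rw [hneg_circ]
  constructor
  · intro K' hK' hsub
    rw [hdiamS]
    exact hKey K' hK' hsub
  · intro K'' hK'' hsub
    have hK'body : IsBody (-K'') := by
      refine ⟨hK''.1.neg, hK''.2.1.neg, ?_⟩
      obtain ⟨x, hx⟩ := hK''.2.2
      have h2 := (Homeomorph.neg (Fin n → ℝ)).image_interior K''
      have h3 : (Homeomorph.neg (Fin n → ℝ)) '' K'' = -K'' := by ext y; simp [Set.mem_neg]
      rw [h3] at h2
      exact ⟨-x, by rw [← h2]; exact ⟨x, hx, rfl⟩⟩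
    have hsub' : S ⊂ -K'' := by
      rw [ssubset_iff_subset_ne]
      constructor
      · intro x hx
        rw [Set.mem_neg]
        exact hsub.subset (Set.neg_mem_neg.mpr hx)
      · intro heq
        apply hsub.ne
        rw [heq]
        ext y
        simp [Set.mem_neg]
    have h1 := hKey (-K'') hK'body hsub'
    rw [hdiam_neg K''] at h1
    rw [hdiam_neg S, hdiamS]
    exact h1
end

section
/- Let S, C be convex bodies in R^n with S an n-simplex. If S is complete with respect to C and R(S,C) = n·s(C)·r(S,C), then R(S,C)/D(S,C) = n(s(C)+1)/(2(n+1)), i.e., S attains equality in the generalized Bohnenblust inequality. -/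
open Pointwise

namespace Stmt18Aux

/-- generic epsilon limit lemma -/
lemma eps_le {a b c : ℝ} (h : ∀ ε : ℝ, 0 < ε → ε ≤ 1 → a ≤ b + c * ε) : a ≤ b := by
  by_contra hlt
  push_neg at hlt
  rcases le_or_gt c 0 with hc | hc
  · have h1 := h 1 one_pos le_rfl
    nlinarith
  · have hε : 0 < min 1 ((a - b) / (2 * c)) := lt_min one_pos (div_pos (by linarith) (by linarith))
    have h1 := h _ hε (min_le_left _ _)
    have h2 : min 1 ((a - b) / (2 * c)) ≤ (a - b) / (2 * c) := min_le_right _ _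
    have h3 : c * min 1 ((a - b) / (2 * c)) ≤ c * ((a - b) / (2 * c)) :=
      mul_le_mul_of_nonneg_left h2 hc.le
    have h4 : c * ((a - b) / (2 * c)) = (a - b) / 2 := by field_simp
    nlinarith

variable {n : ℕ}

lemma mem_vadd_smul {t x : Fin n → ℝ} {ρ : ℝ} {C : Set (Fin n → ℝ)} :
    x ∈ t +ᵥ ρ • C ↔ ∃ c ∈ C, x = t + ρ • c := by
  constructor
  · rintro ⟨y, hy, rfl⟩
    rcases hy with ⟨c, hc, rfl⟩
    exact ⟨c, hc, rfl⟩
  · rintro ⟨c, hc, rfl⟩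
    exact ⟨ρ • c, ⟨c, hc, rfl⟩, rfl⟩

/-- upward closure of coverage -/
lemma covers_mono {K C : Set (Fin n → ℝ)} (hC : Convex ℝ C) {c₀ : Fin n → ℝ} (hc₀ : c₀ ∈ C)
    {ρ ρ' : ℝ} (hρ : 0 < ρ) (hle : ρ ≤ ρ') {t : Fin n → ℝ} (h : K ⊆ t +ᵥ ρ • C) :
    ∃ t' : Fin n → ℝ, K ⊆ t' +ᵥ ρ' • C := by
  have hρ' : 0 < ρ' := lt_of_lt_of_le hρ hle
  refine ⟨t - (ρ' - ρ) • c₀, fun x hx => ?_⟩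
  rcases mem_vadd_smul.mp (h hx) with ⟨c, hc, rfl⟩
  refine mem_vadd_smul.mpr ⟨(ρ / ρ') • c + (1 - ρ / ρ') • c₀, ?_, ?_⟩
  · exact hC hc hc₀ (by positivity) (by rw [sub_nonneg, div_le_one hρ']; exact hle)
      (by ring)
  · rw [smul_add, smul_smul, smul_smul]
    have h1 : ρ' * (ρ / ρ') = ρ := by field_simp
    have h2 : ρ' * (1 - ρ / ρ') = ρ' - ρ := by field_simp
    rw [h1, h2]
    module

/-- feasibility: a bounded set is covered by some positive multiple of a set with interior -/
lemma covers_exists {K C : Set (Fin n → ℝ)} {M : ℝ} (hK : K ⊆ Metric.closedBall 0 M)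
    {c₀ : Fin n → ℝ} {δ : ℝ} (hδ : 0 < δ) (hball : Metric.ball c₀ δ ⊆ C) :
    ∃ ρ : ℝ, 0 < ρ ∧ ∃ t : Fin n → ℝ, K ⊆ t +ᵥ ρ • C := by
  have hM : 0 ≤ max M 0 := le_max_right _ _
  set ρ := (max M 0 + 1) / δ with hρdef
  have hρ : 0 < ρ := by positivity
  refine ⟨ρ, hρ, (-(ρ • c₀)), fun x hx => ?_⟩
  refine mem_vadd_smul.mpr ⟨c₀ + ρ⁻¹ • x, hball ?_, by
    rw [smul_add, smul_smul, mul_inv_cancel₀ hρ.ne', one_smul]; abel⟩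
  rw [Metric.mem_ball, dist_eq_norm]
  have hxn : ‖x‖ ≤ max M 0 := by
    have := hK hx
    rw [Metric.mem_closedBall, dist_zero_right] at this
    exact le_trans this (le_max_left _ _)
  have : ‖c₀ + ρ⁻¹ • x - c₀‖ = ρ⁻¹ * ‖x‖ := by
    rw [add_sub_cancel_left, norm_smul, Real.norm_eq_abs, abs_of_pos (by positivity)]
  rw [this]
  have h1 : ρ⁻¹ * ‖x‖ ≤ ρ⁻¹ * (max M 0) := by
    apply mul_le_mul_of_nonneg_left hxn (by positivity)
  have h2 : ρ⁻¹ * (max M 0) < δ := by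
    rw [hρdef]
    rw [inv_div]
    rw [div_mul_eq_mul_div, div_lt_iff₀ (by positivity)]
    nlinarith
  linarith

/-- any feasible ρ is at least ‖x-y‖/(2N) for x y in K -/
lemma feas_lower {K C : Set (Fin n → ℝ)} {N : ℝ} (hN : 0 < N)
    (hC : C ⊆ Metric.closedBall 0 N) {x y : Fin n → ℝ} (hx : x ∈ K) (hy : y ∈ K)
    {ρ : ℝ} (hρ : 0 < ρ) {t : Fin n → ℝ} (h : K ⊆ t +ᵥ ρ • C) :
    ‖x - y‖ / (2 * N) ≤ ρ := by
  rcases mem_vadd_smul.mp (h hx) with ⟨c₁, hc₁, rfl⟩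
  rcases mem_vadd_smul.mp (h hy) with ⟨c₂, hc₂, hx2⟩
  have hb1 : ‖c₁‖ ≤ N := by simpa [dist_zero_right] using hC hc₁
  have hb2 : ‖c₂‖ ≤ N := by simpa [dist_zero_right] using hC hc₂
  have : t + ρ • c₁ - y = ρ • (c₁ - c₂) := by rw [hx2]; module
  have hnorm : ‖t + ρ • c₁ - y‖ ≤ ρ * (2 * N) := by
    rw [this, norm_smul, Real.norm_eq_abs, abs_of_pos hρ]
    have := norm_sub_le c₁ c₂
    nlinarith
  rw [div_le_iff₀ (by positivity)]
  linarith


/-! ### circR / inrad / diamC API (definitions copied from target file) -/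

lemma circR_le_aux {K C : Set (Fin n → ℝ)} {ρ : ℝ} (hρ : 0 < ρ)
    (h : ∃ t : Fin n → ℝ, K ⊆ t +ᵥ ρ • C) : circR K C ≤ ρ :=
  csInf_le ⟨0, fun x hx => hx.1.le⟩ ⟨hρ, h⟩

lemma circR_nonneg_aux (K C : Set (Fin n → ℝ)) : 0 ≤ circR K C :=
  Real.sInf_nonneg fun _ hx => hx.1.le

lemma circR_exists_lt_aux {K C : Set (Fin n → ℝ)}
    (hne : ∃ ρ : ℝ, 0 < ρ ∧ ∃ t : Fin n → ℝ, K ⊆ t +ᵥ ρ • C) {ε : ℝ} (hε : 0 < ε) :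
    ∃ ρ : ℝ, (0 < ρ ∧ ∃ t : Fin n → ℝ, K ⊆ t +ᵥ ρ • C) ∧ ρ < circR K C + ε := by
  obtain ⟨ρ₀, h₀⟩ := hne
  have := exists_lt_of_csInf_lt (s := {ρ : ℝ | 0 < ρ ∧ ∃ t : Fin n → ℝ, K ⊆ t +ᵥ ρ • C})
    ⟨ρ₀, h₀⟩ (lt_add_of_pos_right _ hε)
  obtain ⟨ρ, hmem, hlt⟩ := this
  exact ⟨ρ, hmem, hlt⟩

lemma circR_ge_aux {K C : Set (Fin n → ℝ)} {a : ℝ}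
    (h : ∀ ρ : ℝ, 0 < ρ → (∃ t : Fin n → ℝ, K ⊆ t +ᵥ ρ • C) → a ≤ ρ)
    (hne : ∃ ρ : ℝ, 0 < ρ ∧ ∃ t : Fin n → ℝ, K ⊆ t +ᵥ ρ • C) :
    a ≤ circR K C :=
  le_csInf ⟨hne.choose, hne.choose_spec⟩ (fun ρ hρ => h ρ hρ.1 hρ.2)

lemma inrad_nonneg_aux (K C : Set (Fin n → ℝ)) : 0 ≤ inrad K C :=
  Real.sSup_nonneg fun _ hx => hx.1

lemma inrad_bddAbove_aux {K C : Set (Fin n → ℝ)} {M : ℝ} (hM : 0 ≤ M)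
    (hK : K ⊆ Metric.closedBall 0 M) {c₁ c₂ : Fin n → ℝ} (h1 : c₁ ∈ C) (h2 : c₂ ∈ C)
    (hne : c₁ ≠ c₂) :
    BddAbove {ρ : ℝ | 0 ≤ ρ ∧ ∃ t : Fin n → ℝ, t +ᵥ ρ • C ⊆ K} := by
  have hd : 0 < ‖c₁ - c₂‖ := by
    rw [norm_pos_iff]; exact sub_ne_zero_of_ne hne
  refine ⟨2 * M / ‖c₁ - c₂‖, ?_⟩
  rintro ρ ⟨hρ0, t, ht⟩
  have m1 : t + ρ • c₁ ∈ K := ht (mem_vadd_smul.mpr ⟨c₁, h1, rfl⟩)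
  have m2 : t + ρ • c₂ ∈ K := ht (mem_vadd_smul.mpr ⟨c₂, h2, rfl⟩)
  have hn1 : ‖t + ρ • c₁‖ ≤ M := by simpa [dist_zero_right] using hK m1
  have hn2 : ‖t + ρ • c₂‖ ≤ M := by simpa [dist_zero_right] using hK m2
  have key : ρ * ‖c₁ - c₂‖ ≤ 2 * M := by
    have : (t + ρ • c₁) - (t + ρ • c₂) = ρ • (c₁ - c₂) := by module
    have hh := norm_sub_le (t + ρ • c₁) (t + ρ • c₂)
    rw [this, norm_smul, Real.norm_eq_abs, abs_of_nonneg hρ0] at hh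
    linarith
  rw [le_div_iff₀ hd]
  linarith

lemma inrad_ge_aux {K C : Set (Fin n → ℝ)}
    (bdd : BddAbove {ρ : ℝ | 0 ≤ ρ ∧ ∃ t : Fin n → ℝ, t +ᵥ ρ • C ⊆ K}) {ρ : ℝ}
    (hρ : 0 ≤ ρ) (h : ∃ t : Fin n → ℝ, t +ᵥ ρ • C ⊆ K) : ρ ≤ inrad K C :=
  le_csSup bdd ⟨hρ, h⟩

lemma inrad_le_aux {K C : Set (Fin n → ℝ)} (hK : K.Nonempty) (hC : C.Nonempty) {a : ℝ}
    (h : ∀ ρ : ℝ, 0 ≤ ρ → (∃ t : Fin n → ℝ, t +ᵥ ρ • C ⊆ K) → ρ ≤ a) :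
    inrad K C ≤ a := by
  obtain ⟨k₀, hk₀⟩ := hK
  refine csSup_le ⟨0, le_rfl, k₀, ?_⟩ (fun ρ hρ => h ρ hρ.1 hρ.2)
  intro x hx
  rcases mem_vadd_smul.mp hx with ⟨c, _, rfl⟩
  simpa using hk₀

/-- characterization of coverage of a segment -/
lemma segment_covers_iff {x y : Fin n → ℝ} {C : Set (Fin n → ℝ)} (hC : Convex ℝ C) {ρ : ℝ}
    (hρ : 0 < ρ) :
    (∃ t : Fin n → ℝ, segment ℝ x y ⊆ t +ᵥ ρ • C) ↔
      ∃ c₁ ∈ C, ∃ c₂ ∈ C, x - y = ρ • (c₁ - c₂) := by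
  constructor
  · rintro ⟨t, ht⟩
    obtain ⟨c₁, hc₁, hx⟩ := mem_vadd_smul.mp (ht (left_mem_segment ℝ x y))
    obtain ⟨c₂, hc₂, hy⟩ := mem_vadd_smul.mp (ht (right_mem_segment ℝ x y))
    exact ⟨c₁, hc₁, c₂, hc₂, by rw [hx, hy]; module⟩
  · rintro ⟨c₁, hc₁, c₂, hc₂, hxy⟩
    refine ⟨x - ρ • c₁, ?_⟩
    have hconv : Convex ℝ ((x - ρ • c₁) +ᵥ ρ • C) := (hC.smul ρ).vadd _
    have hxm : x ∈ (x - ρ • c₁) +ᵥ ρ • C := mem_vadd_smul.mpr ⟨c₁, hc₁, by module⟩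
    have hym : y ∈ (x - ρ • c₁) +ᵥ ρ • C := by
      refine mem_vadd_smul.mpr ⟨c₂, hc₂, ?_⟩
      have hy : y = x - ρ • (c₁ - c₂) := by rw [← hxy]; abel
      rw [hy, smul_sub]; abel
    exact hconv.segment_subset hxm hym

/-- rescale a difference representation to a larger radius -/
lemma rescale_pair {C : Set (Fin n → ℝ)} (hC : Convex ℝ C) {c₁ c₂ : Fin n → ℝ}
    (hc₁ : c₁ ∈ C) (hc₂ : c₂ ∈ C) {a b : ℝ} (ha : 0 ≤ a) (hab : a ≤ b) (hb : 0 < b) :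
    ∃ d₁ ∈ C, ∃ d₂ ∈ C, a • (c₁ - c₂) = b • (d₁ - d₂) := by
  refine ⟨c₁, hc₁, (a / b) • c₂ + (1 - a / b) • c₁,
    hC hc₂ hc₁ (by positivity) (by rw [sub_nonneg, div_le_one hb]; exact hab) (by ring), ?_⟩
  have h1 : c₁ - ((a / b) • c₂ + (1 - a / b) • c₁) = (a / b) • (c₁ - c₂) := by
    rw [smul_sub]; module
  rw [h1, smul_smul]
  rw [mul_div_cancel₀ _ hb.ne']


/-- barycentric reflection: for `x` in a hull of `n+1` points, `x - centroid = n/(n+1) (x - b)`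
with `b` in the hull. -/
lemma bary {n : ℕ} (hn : 0 < n) (p : Fin (n + 1) → (Fin n → ℝ)) {x : Fin n → ℝ}
    (hx : x ∈ convexHull ℝ (Set.range p)) :
    ∃ b ∈ convexHull ℝ (Set.range p),
      x - (((n : ℝ) + 1)⁻¹) • (∑ i, p i) = ((n : ℝ) / ((n : ℝ) + 1)) • (x - b) := by
  have hnR : (0:ℝ) < (n : ℝ) := by exact_mod_cast hn
  rw [convexHull_range_eq_exists_affineCombination] at hx
  obtain ⟨s, w, hw0, hw1, hcomb⟩ := hx
  rw [Finset.affineCombination_eq_linear_combination s p w hw1] at hcomb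
  set w' : Fin (n + 1) → ℝ := fun i => if i ∈ s then w i else 0 with hw'def
  have hw'0 : ∀ i, 0 ≤ w' i := by
    intro i; by_cases h : i ∈ s <;> simp [hw'def, h]
    exact hw0 i h
  have hxw : x = ∑ i, w' i • p i := by
    rw [← hcomb]
    rw [show (∑ i ∈ s, w i • p i) = ∑ i ∈ s, w' i • p i from
      Finset.sum_congr rfl (fun i hi => by simp [hw'def, hi])]
    exact Finset.sum_subset (Finset.subset_univ s)
      (fun i _ hi => by simp [hw'def, hi])
  have hsum : ∑ i, w' i = 1 := by
    have h1 : ∑ i ∈ s, w' i = ∑ i ∈ s, w i :=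
      Finset.sum_congr rfl (fun i hi => by simp [hw'def, hi])
    have h2 : ∑ i ∈ s, w' i = ∑ i, w' i :=
      Finset.sum_subset (Finset.subset_univ s) (fun i _ hi => by simp [hw'def, hi])
    rw [← h2, h1, hw1]
  have hw'le : ∀ i, w' i ≤ 1 := by
    intro i
    have := Finset.single_le_sum (f := w') (fun j _ => hw'0 j) (Finset.mem_univ i)
    rw [hsum] at this; exact this
  have hsum2 : ∑ i, (1 - w' i) / (n : ℝ) = 1 := by
    rw [← Finset.sum_div]
    rw [Finset.sum_sub_distrib, hsum, Finset.sum_const, Finset.card_univ, Fintype.card_fin]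
    field_simp
    rw [nsmul_eq_mul]; push_cast; ring
  refine ⟨∑ i, ((1 - w' i) / (n : ℝ)) • p i, ?_, ?_⟩
  · have hmm := Finset.centerMass_mem_convexHull (R := ℝ) Finset.univ
      (w := fun i => (1 - w' i) / (n : ℝ))
      (fun i _ => div_nonneg (by linarith [hw'le i]) hnR.le)
      (by rw [hsum2]; norm_num)
      (z := p) (fun i _ => Set.mem_range_self i)
    rwa [Finset.centerMass_eq_of_sum_1 _ p hsum2] at hmm
  · have hL : x - (((n : ℝ) + 1)⁻¹) • (∑ i, p i) = ∑ i, (w' i - ((n : ℝ) + 1)⁻¹) • p i := by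
      rw [hxw, Finset.smul_sum, ← Finset.sum_sub_distrib]
      exact Finset.sum_congr rfl (fun i _ => by rw [sub_smul])
    have hR : x - (∑ i, ((1 - w' i) / (n : ℝ)) • p i)
        = ∑ i, (w' i - (1 - w' i) / (n : ℝ)) • p i := by
      rw [hxw, ← Finset.sum_sub_distrib]
      exact Finset.sum_congr rfl (fun i _ => by rw [sub_smul])
    rw [hL, hR, Finset.smul_sum]
    refine Finset.sum_congr rfl (fun i _ => ?_)
    rw [smul_smul]
    congr 1
    field_simp
    ring


lemma mem_scaled_sub {C : Set (Fin n → ℝ)} {ρ : ℝ} {v : Fin n → ℝ} :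
    v ∈ ρ • (C - C) ↔ ∃ c₁ ∈ C, ∃ c₂ ∈ C, v = ρ • (c₁ - c₂) := by
  constructor
  · rintro ⟨w, hw, rfl⟩
    rcases Set.mem_sub.mp hw with ⟨c₁, hc₁, c₂, hc₂, rfl⟩
    exact ⟨c₁, hc₁, c₂, hc₂, rfl⟩
  · rintro ⟨c₁, hc₁, c₂, hc₂, rfl⟩
    exact ⟨c₁ - c₂, Set.mem_sub.mpr ⟨c₁, hc₁, c₂, hc₂, rfl⟩, rfl⟩

lemma join_subset {S U : Set (Fin n → ℝ)} {p : Fin n → ℝ} (hU : Convex ℝ U)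
    (hp : p ∈ U) (hS : S ⊆ U) : convexJoin ℝ {p} S ⊆ U := by
  rintro z hz
  rcases mem_convexJoin.mp hz with ⟨a, ha, y, hy, hseg⟩
  rcases Set.mem_singleton_iff.mp ha with rfl
  exact hU.segment_subset hp (hS hy) hseg

lemma diam_nonneg_aux (K C : Set (Fin n → ℝ)) : 0 ≤ diamC K C := by
  refine Real.sSup_nonneg fun d hd => ?_
  rcases hd with ⟨x, hx, y, hy, rfl⟩
  have := circR_nonneg_aux (segment ℝ x y) C
  linarith

/-- Key completeness step: points whose distance to all of `S` is at most the "radius"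
`D₀ = diamC S C / 2` belong to `S`. -/
lemma complete_mem {S C : Set (Fin n → ℝ)}
    (hSconv : Convex ℝ S) (hScomp : IsCompact S) (hSint : (interior S).Nonempty)
    (hCconv : Convex ℝ C) (hCne : C.Nonempty)
    (hcomp : IsDiamComplete S C)
    (hseg : ∀ a ∈ S, ∀ b ∈ S, ∀ ε : ℝ, 0 < ε →
        ∃ c₁ ∈ C, ∃ c₂ ∈ C, a - b = (diamC S C / 2 + ε) • (c₁ - c₂))
    {p : Fin n → ℝ}
    (hp : ∀ y ∈ S, ∃ c₁ ∈ C, ∃ c₂ ∈ C, y - p = (diamC S C / 2) • (c₁ - c₂)) :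
    p ∈ S := by
  set D₀ := diamC S C / 2 with hD₀def
  have hD₀0 : 0 ≤ D₀ := by
    have := diam_nonneg_aux S C
    rw [hD₀def]; linarith
  by_contra hpS
  set K' := convexJoin ℝ {p} S with hK'def
  have hSne : S.Nonempty := hSint.mono interior_subset
  have hSK' : S ⊆ K' := fun y hy =>
    mem_convexJoin.mpr ⟨p, rfl, y, hy, right_mem_segment ℝ p y⟩
  have hpK' : p ∈ K' :=
    mem_convexJoin.mpr ⟨p, rfl, hSne.choose, hSne.choose_spec, left_mem_segment ℝ p _⟩
  have hK'conv : Convex ℝ K' := (convex_singleton p).convexJoin hSconv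
  have hK'comp : IsCompact K' := by
    have himg : K' = (fun q : ℝ × (Fin n → ℝ) => q.1 • p + (1 - q.1) • q.2) ''
        (Set.Icc (0:ℝ) 1 ×ˢ S) := by
      ext z
      constructor
      · intro hz
        rcases mem_convexJoin.mp hz with ⟨a, ha, y, hy, hseg'⟩
        rcases Set.mem_singleton_iff.mp ha with rfl
        rcases hseg' with ⟨u, v, hu, hv, huv, rfl⟩
        exact ⟨(u, y), ⟨Set.mem_Icc.mpr ⟨hu, by linarith⟩, hy⟩, by
          simp only []
          rw [show (1 : ℝ) - u = v from by linarith]⟩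
      · rintro ⟨⟨θ, y⟩, ⟨hθ, hy⟩, rfl⟩
        rcases Set.mem_Icc.mp hθ with ⟨h0, h1⟩
        exact mem_convexJoin.mpr ⟨p, rfl, y, hy,
          ⟨θ, 1 - θ, h0, by linarith, by ring, rfl⟩⟩
    rw [himg]
    exact (isCompact_Icc.prod hScomp).image
      ((continuous_fst.smul continuous_const).add
        ((continuous_const.sub continuous_fst).smul continuous_snd))
  have hK'int : (interior K').Nonempty := hSint.mono (interior_mono hSK')
  have hssub : S ⊂ K' := (Set.ssubset_iff_of_subset hSK').mpr ⟨p, hpK', hpS⟩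
  have hlt := hcomp K' ⟨hK'conv, hK'comp, hK'int⟩ hssub
  refine absurd hlt (not_lt.mpr ?_)
  have hDelta : diamC S C = 2 * D₀ := by rw [hD₀def]; ring
  refine Real.sSup_le ?_ (by linarith)
  rintro d ⟨x, hx, y, hy, rfl⟩
  have hcirc : circR (segment ℝ x y) C ≤ D₀ := by
    refine eps_le (c := 1) fun ε hε _ => ?_
    -- show x - y ∈ (D₀ + ε) • (C - C)
    have hTconv : Convex ℝ ((D₀ + ε) • (C - C)) := (hCconv.sub hCconv).smul _
    -- step 1 : for z ∈ K', b ∈ S : z - b ∈ T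
    have step1 : ∀ z ∈ K', ∀ b ∈ S, z - b ∈ (D₀ + ε) • (C - C) := by
      intro z hz b hb
      have hUconv : Convex ℝ {v | v - b ∈ (D₀ + ε) • (C - C)} := by
        intro v₁ h₁ v₂ h₂ a₁ a₂ ha₁ ha₂ hsum
        have hbb : a₁ • b + a₂ • b = b := by rw [← add_smul, hsum, one_smul]
        have : a₁ • v₁ + a₂ • v₂ - b = a₁ • (v₁ - b) + a₂ • (v₂ - b) := by
          have h2 : a₁ • (v₁ - b) + a₂ • (v₂ - b)
              = a₁ • v₁ + a₂ • v₂ - (a₁ • b + a₂ • b) := by module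
          rw [h2, hbb]
        simpa [Set.mem_setOf_eq, this] using hTconv h₁ h₂ ha₁ ha₂ hsum
      refine join_subset hUconv ?_ (fun y' hy' => ?_) hz
      · -- p - b ∈ T
        rcases hp b hb with ⟨c₁, hc₁, c₂, hc₂, hbp⟩
        have : p - b = D₀ • (c₂ - c₁) := by
          have : p - b = -(b - p) := by abel
          rw [this, hbp, ← smul_neg]; congr 1; abel
        rcases rescale_pair (a := D₀) (b := D₀ + ε) hCconv hc₂ hc₁ hD₀0 (by linarith) (by linarith) with
          ⟨d₁, hd₁, d₂, hd₂, heq⟩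
        exact Set.mem_setOf_eq ▸ mem_scaled_sub.mpr ⟨d₁, hd₁, d₂, hd₂, by rw [this, heq]⟩
      · rcases hseg y' hy' b hb ε hε with ⟨c₁, hc₁, c₂, hc₂, heq⟩
        exact Set.mem_setOf_eq ▸ mem_scaled_sub.mpr ⟨c₁, hc₁, c₂, hc₂, heq⟩
    -- p-version : for z ∈ K' : z - p ∈ T
    have stepp : ∀ z ∈ K', z - p ∈ (D₀ + ε) • (C - C) := by
      intro z hz
      have hUconv : Convex ℝ {v | v - p ∈ (D₀ + ε) • (C - C)} := by
        intro v₁ h₁ v₂ h₂ a₁ a₂ ha₁ ha₂ hsum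
        have hbb : a₁ • p + a₂ • p = p := by rw [← add_smul, hsum, one_smul]
        have : a₁ • v₁ + a₂ • v₂ - p = a₁ • (v₁ - p) + a₂ • (v₂ - p) := by
          have h2 : a₁ • (v₁ - p) + a₂ • (v₂ - p)
              = a₁ • v₁ + a₂ • v₂ - (a₁ • p + a₂ • p) := by module
          rw [h2, hbb]
        simpa [Set.mem_setOf_eq, this] using hTconv h₁ h₂ ha₁ ha₂ hsum
      refine join_subset hUconv ?_ (fun y' hy' => ?_) hz
      · refine Set.mem_setOf_eq ▸ mem_scaled_sub.mpr
          ⟨hCne.choose, hCne.choose_spec, hCne.choose, hCne.choose_spec, by simp⟩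
      · rcases hp y' hy' with ⟨c₁, hc₁, c₂, hc₂, heq⟩
        rcases rescale_pair (a := D₀) (b := D₀ + ε) hCconv hc₁ hc₂ hD₀0 (by linarith) (by linarith) with
          ⟨d₁, hd₁, d₂, hd₂, heq2⟩
        exact Set.mem_setOf_eq ▸ mem_scaled_sub.mpr ⟨d₁, hd₁, d₂, hd₂, by rw [heq, heq2]⟩
    -- step 2 : x - y ∈ T
    have step2 : x - y ∈ (D₀ + ε) • (C - C) := by
      have hVconv : Convex ℝ {w | x - w ∈ (D₀ + ε) • (C - C)} := by
        intro v₁ h₁ v₂ h₂ a₁ a₂ ha₁ ha₂ hsum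
        have hbb : a₁ • x + a₂ • x = x := by rw [← add_smul, hsum, one_smul]
        have : x - (a₁ • v₁ + a₂ • v₂) = a₁ • (x - v₁) + a₂ • (x - v₂) := by
          have h2 : a₁ • (x - v₁) + a₂ • (x - v₂)
              = (a₁ • x + a₂ • x) - (a₁ • v₁ + a₂ • v₂) := by module
          rw [h2, hbb]
        simpa [Set.mem_setOf_eq, this] using hTconv h₁ h₂ ha₁ ha₂ hsum
      refine join_subset hVconv ?_ (fun y' hy' => ?_) hy
      · exact Set.mem_setOf_eq ▸ stepp x hx
      · exact Set.mem_setOf_eq ▸ step1 x hx y' hy'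
    rcases mem_scaled_sub.mp step2 with ⟨c₁, hc₁, c₂, hc₂, heq⟩
    have hfeas := (segment_covers_iff hCconv (by linarith : (0:ℝ) < D₀ + ε)).mpr
      ⟨c₁, hc₁, c₂, hc₂, heq⟩
    have := circR_le_aux (by linarith : (0:ℝ) < D₀ + ε) hfeas
    linarith
  rw [hDelta]
  linarith

end Stmt18Aux

open Stmt18Aux in
set_option maxHeartbeats 1000000 in
theorem stmt18 {n : ℕ} (S C : Set (Fin n → ℝ)) (hS : IsSimplexBody S) (hSbody : IsBody S)
    (hC : IsBody C) (hcomp : IsDiamComplete S C)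
    (hRr : circR S C = n * asym C * inrad S C) :
    circR S C / diamC S C = n * (asym C + 1) / (2 * (n + 1)) := by
  have hCne : C.Nonempty := ⟨hC.2.2.choose, interior_subset hC.2.2.choose_spec⟩
  rcases Nat.eq_zero_or_pos n with hn0 | hn
  · -- degenerate one-point space
    subst hn0
    have hsub : ∀ a b : Fin 0 → ℝ, a = b := fun a b => funext fun i => Fin.elim0 i
    have hset : {ρ : ℝ | 0 < ρ ∧ ∃ t : Fin 0 → ℝ, S ⊆ t +ᵥ ρ • C} = Set.Ioi 0 := by
      ext ρ
      simp only [Set.mem_setOf_eq, Set.mem_Ioi]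
      refine ⟨fun h => h.1, fun hρ => ⟨hρ, 0, fun x _ => ?_⟩⟩
      exact mem_vadd_smul.mpr ⟨hCne.choose, hCne.choose_spec, hsub _ _⟩
    have hzero : circR S C = 0 := by
      show sInf _ = 0
      rw [hset]
      exact csInf_Ioi
    rw [hzero]
    simp
  -- main case n ≥ 1
  have hSconv := hSbody.1
  have hScomp := hSbody.2.1
  have hSint := hSbody.2.2
  have hCconv := hC.1
  have hCcomp := hC.2.1
  have hSne : S.Nonempty := ⟨hSint.choose, interior_subset hSint.choose_spec⟩
  -- ball inside C
  obtain ⟨c₀, hc₀int⟩ := hC.2.2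
  obtain ⟨δ, hδ, hball⟩ : ∃ δ > 0, Metric.ball c₀ δ ⊆ C := by
    rcases Metric.mem_nhds_iff.mp (mem_interior_iff_mem_nhds.mp hc₀int) with ⟨δ, hδ, h⟩
    exact ⟨δ, hδ, h⟩
  have hc₀ : c₀ ∈ C := hball (Metric.mem_ball_self hδ)
  -- bounds
  obtain ⟨N₀, hN₀⟩ := hCcomp.isBounded.subset_closedBall 0
  set N := max N₀ 1 with hNdef
  have hN : 0 < N := lt_of_lt_of_le one_pos (le_max_right _ _)
  have hCN : C ⊆ Metric.closedBall 0 N :=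
    hN₀.trans (Metric.closedBall_subset_closedBall (le_max_left _ _))
  obtain ⟨M₀, hM₀⟩ := hScomp.isBounded.subset_closedBall 0
  set M := max M₀ 0 with hMdef
  have hM : 0 ≤ M := le_max_right _ _
  have hSM : S ⊆ Metric.closedBall 0 M :=
    hM₀.trans (Metric.closedBall_subset_closedBall (le_max_left _ _))
  -- two distinct points in C and S
  haveI : Nonempty (Fin n) := ⟨⟨0, hn⟩⟩
  set u : Fin n → ℝ := fun _ => (1:ℝ) with hudef
  have hu1 : ‖u‖ = 1 := by rw [hudef]; simp
  have hptC : c₀ + (δ/2) • u ∈ C := by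
    apply hball
    rw [Metric.mem_ball, dist_eq_norm, add_sub_cancel_left, norm_smul, hu1,
      Real.norm_eq_abs, abs_of_pos (by linarith)]
    linarith
  have hptCne : c₀ + (δ/2) • u ≠ c₀ := by
    intro h
    have h2 := congrFun h ⟨0, hn⟩
    simp [hudef] at h2
    linarith
  obtain ⟨s₀, hs₀int⟩ := hSint
  obtain ⟨δS, hδS, hballS⟩ : ∃ δS > 0, Metric.ball s₀ δS ⊆ S := by
    rcases Metric.mem_nhds_iff.mp (mem_interior_iff_mem_nhds.mp hs₀int) with ⟨δS, hδS, h⟩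
    exact ⟨δS, hδS, h⟩
  have hs₀ : s₀ ∈ S := hballS (Metric.mem_ball_self hδS)
  have hptS : s₀ + (δS/2) • u ∈ S := by
    apply hballS
    rw [Metric.mem_ball, dist_eq_norm, add_sub_cancel_left, norm_smul, hu1,
      Real.norm_eq_abs, abs_of_pos (by linarith)]
    linarith
  have hptSne : s₀ + (δS/2) • u ≠ s₀ := by
    intro h
    have h2 := congrFun h ⟨0, hn⟩
    simp [hudef] at h2
    linarith
  -- the symmetrized body B
  set B := C - C with hBdef
  have hBconv : Convex ℝ B := hCconv.sub hCconv
  have hB0 : (0 : Fin n → ℝ) ∈ B := Set.mem_sub.mpr ⟨c₀, hc₀, c₀, hc₀, sub_self c₀⟩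
  have hBball : Metric.ball (0 : Fin n → ℝ) δ ⊆ B := by
    intro v hv
    refine Set.mem_sub.mpr ⟨c₀ + v, hball ?_, c₀, hc₀, by abel⟩
    rw [Metric.mem_ball, dist_eq_norm, add_sub_cancel_left]
    simpa [dist_eq_norm] using hv
  have hBptne : c₀ + (δ/2) • u - c₀ ≠ 0 := by
    intro h
    exact hptCne (by rwa [sub_eq_zero] at h)
  have hBpt : c₀ + (δ/2) • u - c₀ ∈ B := Set.mem_sub.mpr ⟨_, hptC, c₀, hc₀, rfl⟩
  -- feasibility
  have hfeasC : ∃ ρ : ℝ, 0 < ρ ∧ ∃ t : Fin n → ℝ, S ⊆ t +ᵥ ρ • C :=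
    covers_exists hSM hδ hball
  have hfeasB : ∃ ρ : ℝ, 0 < ρ ∧ ∃ t : Fin n → ℝ, S ⊆ t +ᵥ ρ • B :=
    covers_exists hSM hδ hBball
  have hnegC : -C ⊆ Metric.closedBall 0 N := by
    intro x hx
    rcases Set.mem_neg.mp hx with hxx
    have := hCN hxx
    simpa [dist_eq_norm] using this
  have hfeasA : ∃ ρ : ℝ, 0 < ρ ∧ ∃ t : Fin n → ℝ, -C ⊆ t +ᵥ ρ • C :=
    covers_exists hnegC hδ hball
  -- abbreviations
  set s := asym C with hsdef
  set R := circR S C with hRdef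
  set r := inrad S C with hrdef
  set R₂ := circR S B with hR₂def
  set r₂ := inrad S B with hr₂def
  set Δ := diamC S C with hΔdef
  set D₀ := Δ / 2 with hD₀def
  -- positivity of s
  have hs_pos : 0 < s := by
    have hlow : ∀ ρ : ℝ, 0 < ρ → (∃ t : Fin n → ℝ, -C ⊆ t +ᵥ ρ • C) →
        ‖(-(c₀ + (δ/2) • u)) - (-c₀)‖ / (2 * N) ≤ ρ := by
      rintro ρ hρ ⟨t, ht⟩
      exact feas_lower hN hCN (Set.neg_mem_neg.mpr hptC) (Set.neg_mem_neg.mpr hc₀) hρ ht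
    have hge := circR_ge_aux hlow hfeasA
    have hpos : 0 < ‖(-(c₀ + (δ/2) • u)) - (-c₀)‖ / (2 * N) := by
      apply div_pos _ (by linarith)
      rw [norm_pos_iff]
      intro h
      apply hBptne
      have : -(c₀ + (δ/2) • u) - -c₀ = -(c₀ + (δ/2) • u - c₀) := by abel
      rw [this, neg_eq_zero] at h
      exact h
    exact lt_of_lt_of_le hpos hge
  -- diameter facts
  obtain ⟨ρst, hρst, tst, htst⟩ := hfeasC
  have hbddD : BddAbove {d : ℝ | ∃ x ∈ S, ∃ y ∈ S, d = 2 * circR (segment ℝ x y) C} := by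
    refine ⟨2 * ρst, ?_⟩
    rintro d ⟨x, hx, y, hy, rfl⟩
    have : circR (segment ℝ x y) C ≤ ρst :=
      circR_le_aux hρst ⟨tst, (hSconv.segment_subset hx hy).trans htst⟩
    linarith
  have hΔ_ge : ∀ x ∈ S, ∀ y ∈ S, 2 * circR (segment ℝ x y) C ≤ Δ := fun x hx y hy =>
    le_csSup hbddD ⟨x, hx, y, hy, rfl⟩
  have hΔpos : 0 < Δ := by
    have hfeas_seg : ∃ ρ : ℝ, 0 < ρ ∧ ∃ t : Fin n → ℝ,
        segment ℝ (s₀ + (δS/2) • u) s₀ ⊆ t +ᵥ ρ • C :=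
      covers_exists ((hSconv.segment_subset hptS hs₀).trans hSM) hδ hball
    have h1 : ‖(s₀ + (δS/2) • u) - s₀‖ / (2 * N) ≤ circR (segment ℝ (s₀ + (δS/2) • u) s₀) C := by
      refine circR_ge_aux ?_ hfeas_seg
      rintro ρ hρ ⟨t, ht⟩
      exact feas_lower hN hCN (left_mem_segment ℝ _ _) (right_mem_segment ℝ _ _) hρ ht
    have h2 := hΔ_ge _ hptS _ hs₀
    have hpos : 0 < ‖(s₀ + (δS/2) • u) - s₀‖ / (2 * N) := by
      apply div_pos _ (by linarith)
      rw [norm_pos_iff, sub_ne_zero]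
      exact hptSne
    linarith
  have hD₀pos : 0 < D₀ := by rw [hD₀def]; linarith
  -- the epsilon-segment lemma
  have hseg : ∀ a ∈ S, ∀ b ∈ S, ∀ ε : ℝ, 0 < ε →
      ∃ c₁ ∈ C, ∃ c₂ ∈ C, a - b = (D₀ + ε) • (c₁ - c₂) := by
    intro a ha b hb ε hε
    have hcle : circR (segment ℝ a b) C ≤ D₀ := by
      have := hΔ_ge a ha b hb
      rw [hD₀def]; linarith
    have hfeas_seg : ∃ ρ : ℝ, 0 < ρ ∧ ∃ t : Fin n → ℝ, segment ℝ a b ⊆ t +ᵥ ρ • C :=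
      covers_exists ((hSconv.segment_subset ha hb).trans hSM) hδ hball
    obtain ⟨ρ, ⟨hρpos, ht⟩, hρlt⟩ := circR_exists_lt_aux hfeas_seg
      (show (0:ℝ) < D₀ + ε - circR (segment ℝ a b) C by linarith)
    have hρle : ρ ≤ D₀ + ε := by linarith
    obtain ⟨t0, ht0⟩ := ht
    obtain ⟨t', ht'⟩ := covers_mono hCconv hc₀ hρpos hρle ht0
    exact (segment_covers_iff hCconv (by linarith)).mp ⟨t', ht'⟩
  -- (A) : R ≤ (s+1) R₂
  have hR₂0 : 0 ≤ R₂ := circR_nonneg_aux S B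
  have hA : R ≤ (s + 1) * R₂ := by
    refine eps_le (c := R₂ + s + 2) fun ε hε hε1 => ?_
    obtain ⟨ρ, ⟨hρpos, xh, hxh⟩, hρlt⟩ := circR_exists_lt_aux hfeasB hε
    rw [← hR₂def] at hρlt
    obtain ⟨σ, ⟨hσpos, t₀, ht₀⟩, hσlt⟩ := circR_exists_lt_aux hfeasA hε
    have hσlt' : σ < s + ε := by rw [hsdef]; exact hσlt
    have hcov : ∃ t : Fin n → ℝ, S ⊆ t +ᵥ (ρ * (1 + σ)) • C := by
      refine ⟨xh + ρ • t₀, fun y hy => ?_⟩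
      rcases mem_vadd_smul.mp (hxh hy) with ⟨bb, hbb, hy2⟩
      rcases Set.mem_sub.mp hbb with ⟨c₁, hc₁, c₂, hc₂, hbbeq⟩
      rcases mem_vadd_smul.mp (ht₀ (Set.neg_mem_neg.mpr hc₂)) with ⟨a, haC, ha2⟩
      have hc₂eq : c₂ = -(t₀ + σ • a) := by rw [← ha2, neg_neg]
      have h1σ : (0:ℝ) < 1 + σ := by linarith
      refine mem_vadd_smul.mpr ⟨(1 + σ)⁻¹ • c₁ + (σ / (1 + σ)) • a,
        hCconv hc₁ haC (inv_nonneg.mpr h1σ.le) (div_nonneg hσpos.le h1σ.le)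
          (by field_simp), ?_⟩
      have e1 : (ρ * (1 + σ)) * (1 + σ)⁻¹ = ρ := by field_simp [h1σ.ne']
      have e2 : (ρ * (1 + σ)) * (σ / (1 + σ)) = ρ * σ := by
        field_simp [h1σ.ne']
      rw [smul_add, smul_smul, smul_smul, e1, e2, hy2, ← hbbeq, hc₂eq]
      module
    have hRle : R ≤ ρ * (1 + σ) := circR_le_aux
      (mul_pos hρpos (by linarith)) hcov
    have hmul : ρ * (1 + σ) ≤ (R₂ + ε) * (1 + s + ε) := by
      apply mul_le_mul hρlt.le (by linarith) (by linarith) (by linarith)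
    nlinarith [hmul, hRle, hR₂0, hs_pos]
  -- (B) : (s+1) r₂ ≤ s r
  have hr0 : 0 ≤ r := inrad_nonneg_aux S C
  have hB2 : (s + 1) * r₂ ≤ s * r := by
    have key : ∀ ρ : ℝ, 0 ≤ ρ → (∃ t : Fin n → ℝ, t +ᵥ ρ • B ⊆ S) →
        ρ * (s + 1) ≤ r * s := by
      rintro ρ hρ0 ⟨t', ht'⟩
      refine eps_le (c := r) fun ε hε hε1 => ?_
      obtain ⟨σ, ⟨hσpos, t₀, ht₀⟩, hσlt⟩ := circR_exists_lt_aux hfeasA hε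
      have hσlt' : σ < s + ε := by rw [hsdef]; exact hσlt
      have hσges : s ≤ σ := circR_le_aux hσpos ⟨t₀, ht₀⟩
      have hfit : ∃ t'' : Fin n → ℝ, t'' +ᵥ (ρ * (1 + σ⁻¹)) • C ⊆ S := by
        refine ⟨t' + (ρ * σ⁻¹) • t₀, fun z hz => ?_⟩
        rcases mem_vadd_smul.mp hz with ⟨c, hcC, hzeq⟩
        rcases mem_vadd_smul.mp (ht₀ (Set.neg_mem_neg.mpr hcC)) with ⟨a, haC, ha2⟩
        apply ht'
        refine mem_vadd_smul.mpr ⟨c - a, Set.mem_sub.mpr ⟨c, hcC, a, haC, rfl⟩, ?_⟩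
        have h3 : σ • a = -c - t₀ := by rw [ha2]; abel
        have haeq : a = σ⁻¹ • (-c - t₀) := by
          rw [← h3, smul_smul, inv_mul_cancel₀ hσpos.ne', one_smul]
        rw [hzeq, haeq]
        module
      have hmem : ρ * (1 + σ⁻¹) ≤ r :=
        inrad_ge_aux (inrad_bddAbove_aux hM hSM hptC hc₀ hptCne)
          (mul_nonneg hρ0 (by have := inv_pos.mpr hσpos; linarith)) hfit
      have hσinv : σ * σ⁻¹ = 1 := mul_inv_cancel₀ hσpos.ne'
      have hmul := mul_le_mul_of_nonneg_left hmem hσpos.le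
      -- σ(ρ(1+σ⁻¹)) = ρσ + ρ
      have he : σ * (ρ * (1 + σ⁻¹)) = ρ * σ + ρ := by
        field_simp [hσpos.ne']
      rw [he] at hmul
      -- ρσ + ρ ≤ σ r ≤ (s+ε) r ; and ρ(s+1) ≤ ρσ + ρ
      nlinarith [mul_nonneg hρ0 (sub_nonneg.mpr hσges),
        mul_le_mul_of_nonneg_left hσlt'.le hr0]
    have h1 : r₂ ≤ r * s / (s + 1) := by
      refine inrad_le_aux hSne ⟨0, hB0⟩ fun ρ h0 hfit => ?_
      have := key ρ h0 hfit
      rw [le_div_iff₀ (by linarith : (0:ℝ) < s + 1)]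
      linarith
    have h2 := mul_le_mul_of_nonneg_left h1 (by linarith : (0:ℝ) ≤ s + 1)
    have e : (s + 1) * (r * s / (s + 1)) = r * s := by field_simp
    rw [e] at h2
    linarith
  -- (C) : R₂ ≤ n D₀ / (n+1)
  obtain ⟨vtx, _, hSeq⟩ := hS
  have hncast : (1:ℝ) ≤ (n:ℝ) := by exact_mod_cast hn
  have hC2 : R₂ ≤ (n:ℝ) * D₀ / ((n:ℝ) + 1) := by
    refine eps_le (c := (n:ℝ)) fun ε hε hε1 => ?_
    have hcov : ∃ t : Fin n → ℝ, S ⊆ t +ᵥ ((n:ℝ) * (D₀ + ε) / ((n:ℝ) + 1)) • B := by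
      refine ⟨((n:ℝ) + 1)⁻¹ • (∑ i, vtx i), fun x hx => ?_⟩
      have hx' : x ∈ convexHull ℝ (Set.range vtx) := by rw [← hSeq]; exact hx
      obtain ⟨b, hbmem, hident⟩ := bary hn vtx hx'
      have hbS : b ∈ S := by rw [hSeq]; exact hbmem
      rcases hseg x hx b hbS ε hε with ⟨c₁, hc₁, c₂, hc₂, hxb⟩
      refine mem_vadd_smul.mpr ⟨c₁ - c₂, Set.mem_sub.mpr ⟨c₁, hc₁, c₂, hc₂, rfl⟩, ?_⟩
      have hkey : x - ((n:ℝ) + 1)⁻¹ • (∑ i, vtx i)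
          = ((n:ℝ) * (D₀ + ε) / ((n:ℝ) + 1)) • (c₁ - c₂) := by
        rw [hident, hxb, smul_smul]
        congr 1
        ring
      exact sub_eq_iff_eq_add'.mp hkey
    have hle : R₂ ≤ (n:ℝ) * (D₀ + ε) / ((n:ℝ) + 1) :=
      circR_le_aux (div_pos (mul_pos (by linarith) (by linarith)) (by linarith)) hcov
    have e : (n:ℝ) * (D₀ + ε) / ((n:ℝ) + 1)
        = (n:ℝ) * D₀ / ((n:ℝ) + 1) + (n:ℝ) * ε / ((n:ℝ) + 1) := by ring
    have h3 : (n:ℝ) * ε / ((n:ℝ) + 1) ≤ (n:ℝ) * ε := by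
      apply div_le_self (mul_nonneg (by linarith) hε.le) (by linarith)
    rw [e] at hle
    linarith
  -- (D) : D₀ - R₂ ≤ r₂
  have hr₂0 : 0 ≤ r₂ := inrad_nonneg_aux S B
  have hD2 : D₀ - R₂ ≤ r₂ := by
    refine eps_le (c := 1) fun ε hε hε1 => ?_
    obtain ⟨ρ, ⟨hρpos, q, hq⟩, hρlt⟩ := circR_exists_lt_aux hfeasB hε
    rw [← hR₂def] at hρlt
    rcases le_or_gt D₀ ρ with hcase | hcase
    · linarith
    · have hfit : ∃ t : Fin n → ℝ, t +ᵥ (D₀ - ρ) • B ⊆ S := by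
        refine ⟨q, fun pt hpt => ?_⟩
        rcases mem_vadd_smul.mp hpt with ⟨bb, hbbB, hpteq⟩
        rcases Set.mem_sub.mp hbbB with ⟨b₁, hb₁, b₂, hb₂, hbbeq⟩
        apply complete_mem hSconv hScomp hSbody.2.2 hCconv hCne hcomp hseg
        intro y hy
        rcases mem_vadd_smul.mp (hq hy) with ⟨bb', hbb'B, hyeq⟩
        rcases Set.mem_sub.mp hbb'B with ⟨a₁, ha₁, a₂, ha₂, hbb'eq⟩
        have hmemB : (ρ / D₀) • (a₁ - a₂) + ((D₀ - ρ) / D₀) • (b₂ - b₁) ∈ B := by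
          have h1 : a₁ - a₂ ∈ B := Set.mem_sub.mpr ⟨a₁, ha₁, a₂, ha₂, rfl⟩
          have h2 : b₂ - b₁ ∈ B := Set.mem_sub.mpr ⟨b₂, hb₂, b₁, hb₁, rfl⟩
          refine hBconv h1 h2 (div_nonneg hρpos.le hD₀pos.le)
            (div_nonneg (by linarith) hD₀pos.le) ?_
          rw [← add_div, show ρ + (D₀ - ρ) = D₀ from by ring]
          exact div_self hD₀pos.ne'
        rcases Set.mem_sub.mp hmemB with ⟨c₁, hc₁, c₂, hc₂, hcc⟩
        refine ⟨c₁, hc₁, c₂, hc₂, ?_⟩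
        have e1 : D₀ * (ρ / D₀) = ρ := by field_simp [hD₀pos.ne']
        have e2 : D₀ * ((D₀ - ρ) / D₀) = D₀ - ρ := by
          field_simp [hD₀pos.ne']
        calc y - pt = ρ • (a₁ - a₂) + (D₀ - ρ) • (b₂ - b₁) := by
              rw [hyeq, hpteq, ← hbbeq, ← hbb'eq]; module
          _ = D₀ • ((ρ / D₀) • (a₁ - a₂) + ((D₀ - ρ) / D₀) • (b₂ - b₁)) := by
              rw [smul_add, smul_smul, smul_smul, e1, e2]
          _ = D₀ • (c₁ - c₂) := by rw [hcc]
      have hμ : D₀ - ρ ≤ r₂ :=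
        inrad_ge_aux (inrad_bddAbove_aux hM hSM hBpt hB0 hBptne) (by linarith) hfit
      linarith
  -- final assembly
  have hnn : (0:ℝ) < (n:ℝ) + 1 := by linarith
  have hr₂D : D₀ / ((n:ℝ) + 1) ≤ r₂ := by
    have e : D₀ - (n:ℝ) * D₀ / ((n:ℝ) + 1) = D₀ / ((n:ℝ) + 1) := by
      field_simp
      ring
    linarith
  have hlow : (n:ℝ) * (s + 1) * D₀ / ((n:ℝ) + 1) ≤ R := by
    rw [hRr]
    have h1 := mul_le_mul_of_nonneg_left hB2 (by linarith : (0:ℝ) ≤ (n:ℝ))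
    have h2 := mul_le_mul_of_nonneg_left hr₂D
      (mul_nonneg (by linarith) (by linarith) : (0:ℝ) ≤ (n:ℝ) * (s + 1))
    have e : (n:ℝ) * (s + 1) * (D₀ / ((n:ℝ) + 1)) = (n:ℝ) * (s + 1) * D₀ / ((n:ℝ) + 1) := by
      ring
    nlinarith
  have hup : R ≤ (n:ℝ) * (s + 1) * D₀ / ((n:ℝ) + 1) := by
    have h2 : (s + 1) * R₂ ≤ (s + 1) * ((n:ℝ) * D₀ / ((n:ℝ) + 1)) :=
      mul_le_mul_of_nonneg_left hC2 (by linarith)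
    have e : (s + 1) * ((n:ℝ) * D₀ / ((n:ℝ) + 1)) = (n:ℝ) * (s + 1) * D₀ / ((n:ℝ) + 1) := by
      ring
    linarith
  have hReq : R = (n:ℝ) * (s + 1) * D₀ / ((n:ℝ) + 1) := le_antisymm hup hlow
  have hΔeq : Δ = 2 * D₀ := by rw [hD₀def]; ring
  rw [hReq, hΔeq]
  rw [div_eq_div_iff (by nlinarith : (2:ℝ) * D₀ ≠ 0) (by nlinarith : (2:ℝ) * ((n:ℝ) + 1) ≠ 0)]
  field_simp
end
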